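/- arXiv:1505.06710 — 3 statements merged into one kernel-verified Lean document; each statement's English description precedes it below -/
import Mathlib

section
/- For every lattice path family L = L[S_A, S_B] on ground set {1,…,m} and every pair of distinct elements e, f ∈ {1,…,m}, one has |L_e| · |L_f| ≥ |L| · |L_{ef}| (i.e., the lattice path matroid L[A,B] is negatively correlated: for a uniformly random basis B, Pr[e ∈ B] ≥ Pr[e ∈ B | f ∈ B]). -/
open scoped Classical

/-- The lattice path family `L[A,B]`: all `r`-element subsets `S` of `{1,…,m}` whose
partial counts lie between those of `A` and `B`. -/
noncomputable def latticeFamily (m r : ℕ) (A B : Finset ℕ) : Finset (Finset ℕ) :=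
  (Finset.Icc 1 m).powerset.filter fun S =>
    S.card = r ∧ ∀ k ∈ Finset.Icc 1 m,
      (A ∩ Finset.Icc 1 k).card ≤ (S ∩ Finset.Icc 1 k).card ∧
      (S ∩ Finset.Icc 1 k).card ≤ (B ∩ Finset.Icc 1 k).card

namespace LPMaux

open Finset


def sh (g : ℕ → ℕ) : ℕ → ℕ
  | 0 => 0
  | x + 1 => g x

@[simp] lemma sh_zero (g : ℕ → ℕ) : sh g 0 = 0 := rfl
@[simp] lemma sh_succ (g : ℕ → ℕ) (x : ℕ) : sh g (x+1) = g x := rfl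

def LC (g : ℕ → ℕ) : Prop := ∀ u v, u ≤ v → g u * g (v+1) ≤ g (u+1) * g v

def P2 (g0 g1 : ℕ → ℕ) : Prop := ∀ u v, u ≤ v → g1 u * g0 v ≤ g0 u * g1 v

lemma LC2 {g : ℕ → ℕ} (h : LC g) : ∀ u v, u ≤ v → g u * g (v+2) ≤ g (u+2) * g v := by
  intro u v huv
  rcases eq_or_lt_of_le huv with rfl | h'
  · rw [mul_comm]
  · calc g u * g (v+2) ≤ g (u+1) * g (v+1) := h u (v+1) (by omega)
      _ ≤ g (u+2) * g v := h (u+1) v (by omega)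

lemma LC_step {g : ℕ → ℕ} (h : LC g) (α β : ℕ) :
    LC (fun x => if α ≤ x ∧ x ≤ β then g x + sh g x else 0) := by
  intro u v huv
  simp only
  by_cases hu : α ≤ u ∧ u ≤ β
  swap
  · simp [hu]
  by_cases hv1 : α ≤ v + 1 ∧ v + 1 ≤ β
  swap
  · rw [if_neg hv1]; simp
  have hu1 : α ≤ u + 1 ∧ u + 1 ≤ β := ⟨by omega, by omega⟩
  have hv : α ≤ v ∧ v ≤ β := ⟨by omega, by omega⟩
  rw [if_pos hu, if_pos hv1, if_pos hu1, if_pos hv]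
  have e1 : g u * g (v+1) ≤ g (u+1) * g v := h u v huv
  have e2 : g u * sh g (v+1) = sh g (u+1) * g v := by
    simp [mul_comm]
  have e3 : sh g u * g (v+1) ≤ g (u+1) * sh g v := by
    match u, huv with
    | 0, _ => simp
    | (x+1), huv =>
      match v, huv with
      | (y+1), huv => simpa using LC2 h x y (by omega)
  have e4 : sh g u * sh g (v+1) ≤ sh g (u+1) * sh g v := by
    match u, huv with
    | 0, _ => simp
    | (x+1), huv =>
      match v, huv with
      | (y+1), huv => simpa using h x y (by omega)
  have expl : (g u + sh g u) * (g (v+1) + sh g (v+1)) =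
      g u * g (v+1) + g u * sh g (v+1) + sh g u * g (v+1) + sh g u * sh g (v+1) := by ring
  have expr : (g (u+1) + sh g (u+1)) * (g v + sh g v) =
      g (u+1) * g v + sh g (u+1) * g v + g (u+1) * sh g v + sh g (u+1) * sh g v := by ring
  rw [expl, expr]
  omega

lemma P2_step {g0 g1 : ℕ → ℕ} (h : P2 g0 g1) (α β : ℕ) :
    P2 (fun x => if α ≤ x ∧ x ≤ β then g0 x + sh g0 x else 0)
       (fun x => if α ≤ x ∧ x ≤ β then g1 x + sh g1 x else 0) := by
  intro u v huv
  rcases eq_or_lt_of_le huv with rfl | hlt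
  · exact le_of_eq (mul_comm _ _)
  simp only
  by_cases hu : α ≤ u ∧ u ≤ β
  swap
  · simp [hu]
  by_cases hv : α ≤ v ∧ v ≤ β
  swap
  · simp [hv]
  simp only [if_pos hu, if_pos hv]
  have e1 : g1 u * g0 v ≤ g0 u * g1 v := h u v huv
  have e2 : g1 u * sh g0 v ≤ g0 u * sh g1 v := by
    match v, hlt with
    | (y+1), hlt => simpa using h u y (by omega)
  have e3 : sh g1 u * g0 v ≤ sh g0 u * g1 v := by
    match u with
    | 0 => simp
    | (x+1) => simpa using h x v (by omega)
  have e4 : sh g1 u * sh g0 v ≤ sh g0 u * sh g1 v := by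
    match u with
    | 0 => simp
    | (x+1) =>
      match v, hlt with
      | (y+1), hlt => simpa using h x y (by omega)
  have expl : (g1 u + sh g1 u) * (g0 v + sh g0 v) =
      g1 u * g0 v + g1 u * sh g0 v + sh g1 u * g0 v + sh g1 u * sh g0 v := by ring
  have expr : (g0 u + sh g0 u) * (g1 v + sh g1 v) =
      g0 u * g1 v + g0 u * sh g1 v + sh g0 u * g1 v + sh g0 u * sh g1 v := by ring
  rw [expl, expr]
  omega

lemma LC_sufstep {g : ℕ → ℕ} (h : LC g) (α β : ℕ) :
    LC (fun x => (if α ≤ x ∧ x ≤ β then g x else 0) + (if α ≤ x+1 ∧ x+1 ≤ β then g (x+1) else 0)) := by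
  intro u v huv
  simp only
  set I : ℕ → ℕ := fun x => if α ≤ x ∧ x ≤ β then g x else 0 with hI
  have mem : ∀ x y x' y', x ≤ x' → x' ≤ y → x ≤ y' → y' ≤ y → g x * g y ≤ g x' * g y' →
      I x * I y ≤ I x' * I y' := by
    intro x y x' y' h1 h2 h3 h4 hg
    by_cases hx : α ≤ x ∧ x ≤ β
    swap
    · simp [hI, hx]
    by_cases hy : α ≤ y ∧ y ≤ β
    swap
    · simp [hI, hy]
    have hx' : α ≤ x' ∧ x' ≤ β := ⟨le_trans hx.1 h1, le_trans h2 hy.2⟩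
    have hy' : α ≤ y' ∧ y' ≤ β := ⟨le_trans hx.1 h3, le_trans h4 hy.2⟩
    simpa [hI, if_pos hx, if_pos hy, if_pos hx', if_pos hy'] using hg
  have L1 : I u * I (v+1) ≤ I (u+1) * I v :=
    mem u (v+1) (u+1) v (by omega) (by omega) (by omega) (by omega) (h u v huv)
  have L2 : I u * I (v+2) ≤ I (u+2) * I v :=
    mem u (v+2) (u+2) v (by omega) (by omega) (by omega) (by omega) (LC2 h u v huv)
  have L4 : I (u+1) * I (v+2) ≤ I (u+2) * I (v+1) :=
    mem (u+1) (v+2) (u+2) (v+1) (by omega) (by omega) (by omega) (by omega) (h (u+1) (v+1) (by omega))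
  have expl : (I u + I (u+1)) * (I (v+1) + I (v+1+1)) =
      I u * I (v+1) + I u * I (v+2) + I (u+1) * I (v+1) + I (u+1) * I (v+2) := by ring_nf
  have expr : (I (u+1) + I (u+1+1)) * (I v + I (v+1)) =
      I (u+1) * I v + I (u+2) * I v + I (u+1) * I (v+1) + I (u+2) * I (v+1) := by ring_nf
  rw [expl, expr]
  omega

lemma P2_base {g : ℕ → ℕ} (h : LC g) (α β : ℕ) :
    P2 (fun x => if α ≤ x ∧ x ≤ β then g x else 0) (fun x => if α ≤ x ∧ x ≤ β then sh g x else 0) := by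
  intro u v huv
  simp only
  by_cases hu : α ≤ u ∧ u ≤ β
  swap
  · simp [hu]
  by_cases hv : α ≤ v ∧ v ≤ β
  swap
  · simp [hv]
  rw [if_pos hu, if_pos hv, if_pos hu, if_pos hv]
  match u, huv with
  | 0, _ => simp
  | (x+1), huv =>
    match v, huv with
    | (y+1), huv => simpa using h x y (by omega)

lemma P2_suffix {g : ℕ → ℕ} (h : LC g) (α β : ℕ) :
    ∀ u v, u ≤ v →
      (if α ≤ u ∧ u ≤ β then g u else 0) * (if α ≤ v+1 ∧ v+1 ≤ β then g (v+1) else 0) ≤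
      (if α ≤ u+1 ∧ u+1 ≤ β then g (u+1) else 0) * (if α ≤ v ∧ v ≤ β then g v else 0) := by
  intro u v huv
  by_cases hu : α ≤ u ∧ u ≤ β
  swap
  · simp [hu]
  by_cases hv1 : α ≤ v+1 ∧ v+1 ≤ β
  swap
  · rw [if_neg hv1]; simp
  have hu1 : α ≤ u+1 ∧ u+1 ≤ β := ⟨by omega, by omega⟩
  have hv : α ≤ v ∧ v ≤ β := ⟨by omega, by omega⟩
  rw [if_pos hu, if_pos hv1, if_pos hu1, if_pos hv]
  exact h u v huv

lemma sums_ineq (n : ℕ) (p0 p1 E0 E1 : ℕ → ℕ)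
    (hP : P2 p0 p1)
    (hE : ∀ u v, u ≤ v → E0 u * E1 v ≤ E1 u * E0 v) :
    (∑ x ∈ range n, p0 x * E0 x) * (∑ x ∈ range n, p1 x * E1 x) ≤
    (∑ x ∈ range n, p1 x * E0 x) * (∑ x ∈ range n, p0 x * E1 x) := by
  have key : ∀ x y : ℕ,
      (0:ℤ) ≤ ((p1 x * E0 x : ℕ) * (p0 y * E1 y : ℕ) - (p0 x * E0 x : ℕ) * (p1 y * E1 y : ℕ))
            + ((p1 y * E0 y : ℕ) * (p0 x * E1 x : ℕ) - (p0 y * E0 y : ℕ) * (p1 x * E1 x : ℕ)) := by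
    intro x y
    have main : ∀ x y : ℕ, x ≤ y →
        (0:ℤ) ≤ ((p0 x * p1 y : ℕ) - (p1 x * p0 y : ℕ)) * ((E1 x * E0 y : ℕ) - (E0 x * E1 y : ℕ)) := by
      intro x y hxy
      have h1 : (0:ℤ) ≤ ((p0 x * p1 y : ℕ) - (p1 x * p0 y : ℕ)) := by
        have := hP x y hxy; push_cast; omega
      have h2 : (0:ℤ) ≤ ((E1 x * E0 y : ℕ) - (E0 x * E1 y : ℕ)) := by
        have := hE x y hxy; push_cast; omega
      exact mul_nonneg h1 h2
    rcases le_total x y with hxy | hxy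
    · have := main x y hxy
      push_cast at this ⊢
      nlinarith [this]
    · have := main y x hxy
      push_cast at this ⊢
      nlinarith [this]
  -- cast goal to ℤ
  rw [← Nat.cast_le (α := ℤ)]
  push_cast
  rw [Finset.sum_mul_sum, Finset.sum_mul_sum]
  rw [← sub_nonneg, ← Finset.sum_sub_distrib]
  simp only [← Finset.sum_sub_distrib]
  have hdouble :
      (2:ℤ) * (∑ x ∈ range n, ∑ y ∈ range n,
        ((p1 x : ℤ) * E0 x * ((p0 y : ℤ) * E1 y) - (p0 x : ℤ) * E0 x * ((p1 y : ℤ) * E1 y)))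
      = ∑ x ∈ range n, ∑ y ∈ range n,
        (((p1 x : ℤ) * E0 x * ((p0 y : ℤ) * E1 y) - (p0 x : ℤ) * E0 x * ((p1 y : ℤ) * E1 y))
        + ((p1 y : ℤ) * E0 y * ((p0 x : ℤ) * E1 x) - (p0 y : ℤ) * E0 y * ((p1 x : ℤ) * E1 x))) := by
    rw [two_mul]
    simp only [Finset.sum_add_distrib]
    congr 1
    exact Finset.sum_comm
  have hnn : (0:ℤ) ≤ ∑ x ∈ range n, ∑ y ∈ range n,
        (((p1 x : ℤ) * E0 x * ((p0 y : ℤ) * E1 y) - (p0 x : ℤ) * E0 x * ((p1 y : ℤ) * E1 y))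
        + ((p1 y : ℤ) * E0 y * ((p0 x : ℤ) * E1 x) - (p0 y : ℤ) * E0 y * ((p1 x : ℤ) * E1 x))) := by
    apply Finset.sum_nonneg
    intro x _
    apply Finset.sum_nonneg
    intro y _
    have := key x y
    push_cast at this
    linarith
  linarith [hdouble ▸ hnn]


noncomputable def pref (a b : ℕ → ℕ) (k : ℕ) (Q : Finset ℕ → Prop) (x : ℕ) : ℕ :=
  ((Finset.Icc 1 k).powerset.filter fun S =>
    (∀ j ∈ Finset.Icc 1 k, a j ≤ (S ∩ Finset.Icc 1 j).card ∧ (S ∩ Finset.Icc 1 j).card ≤ b j)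
    ∧ S.card = x ∧ Q S).card

noncomputable def suf (m r : ℕ) (a b : ℕ → ℕ) (k x : ℕ) : ℕ :=
  ((Finset.Icc (k+1) m).powerset.filter fun S =>
    (∀ j ∈ Finset.Icc (k+1) m, a j ≤ x + (S ∩ Finset.Icc 1 j).card ∧ x + (S ∩ Finset.Icc 1 j).card ≤ b j)
    ∧ x + S.card = r).card

lemma pref_zero (a b : ℕ → ℕ) (x : ℕ) :
    pref a b 0 (fun _ => True) x = if x = 0 then 1 else 0 := by
  unfold pref
  rw [show Finset.Icc 1 0 = ∅ from Finset.Icc_eq_empty (by omega), Finset.powerset_empty,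
    Finset.filter_singleton]
  by_cases hx : x = 0 <;> simp [hx, eq_comm]

lemma pref_false (a b : ℕ → ℕ) (k x : ℕ) : pref a b k (fun _ => False) x = 0 := by
  apply Finset.card_eq_zero.2
  apply Finset.eq_empty_iff_forall_notMem.2
  intro S hS
  simp only [Finset.mem_filter] at hS
  exact hS.2.2.2

lemma pref_eq_zero_of_lt (a b : ℕ → ℕ) {k x : ℕ} (Q : Finset ℕ → Prop) (h : k < x) :
    pref a b k Q x = 0 := by
  apply Finset.card_eq_zero.2
  apply Finset.eq_empty_iff_forall_notMem.2
  intro S hS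
  simp only [Finset.mem_filter, Finset.mem_powerset] at hS
  have := Finset.card_le_card hS.1
  rw [Nat.card_Icc] at this
  omega

lemma pref_succ (a b : ℕ → ℕ) (k : ℕ) (Q Q0 Q1 : Finset ℕ → Prop)
    (hQ0 : ∀ S : Finset ℕ, S ⊆ Finset.Icc 1 k → (Q S ↔ Q0 S))
    (hQ1 : ∀ S : Finset ℕ, S ⊆ Finset.Icc 1 k → (Q (insert (k+1) S) ↔ Q1 S)) (x : ℕ) :
    pref a b (k+1) Q x =
      if a (k+1) ≤ x ∧ x ≤ b (k+1) then pref a b k Q0 x + sh (pref a b k Q1) x else 0 := by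
  by_cases hbox : a (k+1) ≤ x ∧ x ≤ b (k+1)
  case neg =>
    rw [if_neg hbox]
    apply Finset.card_eq_zero.2
    apply Finset.eq_empty_iff_forall_notMem.2
    intro S hS
    simp only [Finset.mem_filter, Finset.mem_powerset] at hS
    obtain ⟨hsub, hcond, hcard, _⟩ := hS
    apply hbox
    have h1 : S ∩ Finset.Icc 1 (k+1) = S := Finset.inter_eq_left.2 hsub
    have := hcond (k+1) (by simp [Finset.mem_Icc])
    rw [h1, hcard] at this
    exact this
  case pos =>
    rw [if_pos hbox]
    unfold pref
    rw [← Finset.card_filter_add_card_filter_not (p := fun S => (k+1) ∈ S)]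
    have part2 : ((((Finset.Icc 1 (k+1)).powerset.filter fun S =>
        (∀ j ∈ Finset.Icc 1 (k+1), a j ≤ (S ∩ Finset.Icc 1 j).card ∧ (S ∩ Finset.Icc 1 j).card ≤ b j)
          ∧ S.card = x ∧ Q S)).filter fun S => (k+1) ∈ S).card = sh (pref a b k Q1) x := by
      match x with
      | 0 =>
        rw [show sh (pref a b k Q1) 0 = 0 from rfl]
        apply Finset.card_eq_zero.2
        apply Finset.eq_empty_iff_forall_notMem.2
        intro S hS
        simp only [Finset.mem_filter, Finset.mem_powerset] at hS
        obtain ⟨⟨_, _, hcard, _⟩, hmem⟩ := hS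
        have := Finset.card_pos.2 ⟨k+1, hmem⟩
        omega
      | (y+1) =>
        rw [show sh (pref a b k Q1) (y+1) = pref a b k Q1 y from rfl]
        unfold pref
        refine Finset.card_bij' (fun S _ => S.erase (k+1)) (fun T _ => insert (k+1) T)
          ?hi ?hj ?li ?ri
        case hi =>
          rintro S hS
          simp only [Finset.mem_filter, Finset.mem_powerset] at hS
          obtain ⟨⟨hsub, hcond, hcard, hQ⟩, hmem⟩ := hS
          simp only [Finset.mem_filter, Finset.mem_powerset]
          have hsub' : S.erase (k+1) ⊆ Finset.Icc 1 k := by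
            intro t ht
            rw [Finset.mem_erase] at ht
            have := hsub ht.2
            rw [Finset.mem_Icc] at this ⊢
            have := ht.1
            omega
          refine ⟨hsub', ?_, ?_, ?_⟩
          · intro j hj
            rw [Finset.mem_Icc] at hj
            have hint : S.erase (k+1) ∩ Finset.Icc 1 j = S ∩ Finset.Icc 1 j := by
              ext t
              simp only [Finset.mem_inter, Finset.mem_erase, Finset.mem_Icc]
              constructor
              · rintro ⟨⟨_, ht⟩, hj'⟩; exact ⟨ht, hj'⟩
              · rintro ⟨ht, hj'⟩; exact ⟨⟨by omega, ht⟩, hj'⟩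
            rw [hint]
            exact hcond j (by rw [Finset.mem_Icc]; omega)
          · rw [Finset.card_erase_of_mem hmem, hcard]
            omega
          · have heq : insert (k+1) (S.erase (k+1)) = S := Finset.insert_erase hmem
            exact (hQ1 _ hsub').mp (by rw [heq]; exact hQ)
        case hj =>
          rintro T hT
          simp only [Finset.mem_filter, Finset.mem_powerset] at hT
          obtain ⟨hsub, hcond, hcard, hQ⟩ := hT
          have hnm : (k+1) ∉ T := by
            intro hc
            have := hsub hc
            rw [Finset.mem_Icc] at this
            omega
          simp only [Finset.mem_filter, Finset.mem_powerset]
          refine ⟨⟨?_, ?_, ?_, ?_⟩, Finset.mem_insert_self _ _⟩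

          · intro t ht
            rw [Finset.mem_insert] at ht
            rcases ht with rfl | ht
            · rw [Finset.mem_Icc]; omega
            · have := hsub ht
              rw [Finset.mem_Icc] at this ⊢
              omega
          · intro j hj
            rw [Finset.mem_Icc] at hj
            rcases Nat.lt_or_ge j (k+1) with hjk | hjk
            · have hint : insert (k+1) T ∩ Finset.Icc 1 j = T ∩ Finset.Icc 1 j := by
                ext t
                simp only [Finset.mem_inter, Finset.mem_insert, Finset.mem_Icc]
                constructor
                · rintro ⟨rfl | ht, hj'⟩
                  · omega
                  · exact ⟨ht, hj'⟩
                · rintro ⟨ht, hj'⟩; exact ⟨Or.inr ht, hj'⟩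
              rw [hint]
              exact hcond j (by rw [Finset.mem_Icc]; omega)
            · have hj' : j = k+1 := by omega
              subst hj'
              have hint : insert (k+1) T ∩ Finset.Icc 1 (k+1) = insert (k+1) T := by
                rw [Finset.inter_eq_left]
                intro t ht
                rw [Finset.mem_insert] at ht
                rcases ht with rfl | ht
                · rw [Finset.mem_Icc]; omega
                · have := hsub ht
                  rw [Finset.mem_Icc] at this ⊢
                  omega
              rw [hint, Finset.card_insert_of_notMem hnm, hcard]
              exact hbox
          · rw [Finset.card_insert_of_notMem hnm, hcard]
          · exact (hQ1 _ hsub).mpr hQ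
        case li =>
          intro S hS
          simp only [Finset.mem_filter] at hS
          exact Finset.insert_erase hS.2
        case ri =>
          intro T hT
          simp only [Finset.mem_filter, Finset.mem_powerset] at hT
          apply Finset.erase_insert
          intro hc
          have := hT.1 hc
          rw [Finset.mem_Icc] at this
          omega
    have part1 : ((((Finset.Icc 1 (k+1)).powerset.filter fun S =>
        (∀ j ∈ Finset.Icc 1 (k+1), a j ≤ (S ∩ Finset.Icc 1 j).card ∧ (S ∩ Finset.Icc 1 j).card ≤ b j)
          ∧ S.card = x ∧ Q S)).filter fun S => ¬ (k+1) ∈ S).card = pref a b k Q0 x := by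
      unfold pref
      have hset : ((((Finset.Icc 1 (k+1)).powerset.filter fun S =>
          (∀ j ∈ Finset.Icc 1 (k+1), a j ≤ (S ∩ Finset.Icc 1 j).card ∧ (S ∩ Finset.Icc 1 j).card ≤ b j)
            ∧ S.card = x ∧ Q S)).filter fun S => ¬ (k+1) ∈ S)
          = ((Finset.Icc 1 k).powerset.filter fun S =>
          (∀ j ∈ Finset.Icc 1 k, a j ≤ (S ∩ Finset.Icc 1 j).card ∧ (S ∩ Finset.Icc 1 j).card ≤ b j)
            ∧ S.card = x ∧ Q0 S) := by
        ext S
        simp only [Finset.mem_filter, Finset.mem_powerset]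
        constructor
        · rintro ⟨⟨hsub, hcond, hcard, hQ⟩, hnm⟩
          have hsub' : S ⊆ Finset.Icc 1 k := by
            intro t ht
            have h1 := hsub ht
            rw [Finset.mem_Icc] at h1 ⊢
            have : t ≠ k+1 := fun hc => hnm (hc ▸ ht)
            omega
          exact ⟨hsub', ⟨fun j hj => hcond j (by rw [Finset.mem_Icc] at hj ⊢; omega), hcard,
            (hQ0 _ hsub').mp hQ⟩⟩
        · rintro ⟨hsub, hcond, hcard, hQ⟩
          have hnm : (k+1) ∉ S := by
            intro hc
            have := hsub hc
            rw [Finset.mem_Icc] at this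
            omega
          refine ⟨⟨fun t ht => ?_, ?_, hcard, (hQ0 _ hsub).mpr hQ⟩, hnm⟩
          · have := hsub ht
            rw [Finset.mem_Icc] at this ⊢
            omega
          · intro j hj
            rw [Finset.mem_Icc] at hj
            rcases Nat.lt_or_ge j (k+1) with hjk | hjk
            · exact hcond j (by rw [Finset.mem_Icc]; omega)
            · have hj' : j = k+1 := by omega
              subst hj'
              have hint : S ∩ Finset.Icc 1 (k+1) = S := by
                rw [Finset.inter_eq_left]
                intro t ht
                have := hsub ht
                rw [Finset.mem_Icc] at this ⊢
                omega
              rw [hint, hcard]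
              exact hbox
      rw [hset]
    rw [part1, part2, add_comm]
    rfl


lemma suf_last (m r : ℕ) (a b : ℕ → ℕ) (x : ℕ) :
    suf m r a b m x = if x = r then 1 else 0 := by
  unfold suf
  rw [show Finset.Icc (m+1) m = ∅ from Finset.Icc_eq_empty (by omega), Finset.powerset_empty,
    Finset.filter_singleton]
  by_cases hx : x = r <;> simp [hx]

lemma suf_succ (m r : ℕ) (a b : ℕ → ℕ) (k x : ℕ) (hkm : k < m) :
    suf m r a b k x = (if a (k+1) ≤ x ∧ x ≤ b (k+1) then suf m r a b (k+1) x else 0)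
                    + (if a (k+1) ≤ x+1 ∧ x+1 ≤ b (k+1) then suf m r a b (k+1) (x+1) else 0) := by
  unfold suf
  rw [← Finset.card_filter_add_card_filter_not (p := fun S => (k+1) ∈ S)]
  have hk1 : k+1 ∈ Finset.Icc (k+1) m := by rw [Finset.mem_Icc]; omega
  have part2 : ((((Finset.Icc (k+1) m).powerset.filter fun S =>
      (∀ j ∈ Finset.Icc (k+1) m, a j ≤ x + (S ∩ Finset.Icc 1 j).card ∧ x + (S ∩ Finset.Icc 1 j).card ≤ b j)
      ∧ x + S.card = r)).filter fun S => (k+1) ∈ S).card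
      = (if a (k+1) ≤ x+1 ∧ x+1 ≤ b (k+1) then suf m r a b (k+1) (x+1) else 0) := by
    by_cases hbox : a (k+1) ≤ x+1 ∧ x+1 ≤ b (k+1)
    case neg =>
      rw [if_neg hbox]
      apply Finset.card_eq_zero.2
      apply Finset.eq_empty_iff_forall_notMem.2
      intro S hS
      simp only [Finset.mem_filter, Finset.mem_powerset] at hS
      obtain ⟨⟨hsub, hcond, _⟩, hmem⟩ := hS
      apply hbox
      have hint : S ∩ Finset.Icc 1 (k+1) = {k+1} := by
        ext t
        simp only [Finset.mem_inter, Finset.mem_Icc, Finset.mem_singleton]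
        constructor
        · rintro ⟨ht, h1, h2⟩
          have := hsub ht
          rw [Finset.mem_Icc] at this
          omega
        · rintro rfl
          exact ⟨hmem, by omega, le_refl _⟩
      have := hcond (k+1) hk1
      rw [hint, Finset.card_singleton] at this
      exact this
    case pos =>
      rw [if_pos hbox]
      unfold suf
      refine Finset.card_bij' (fun S _ => S.erase (k+1)) (fun T _ => insert (k+1) T)
        ?hi ?hj ?li ?ri
      case hi =>
        intro S hS
        simp only [Finset.mem_filter, Finset.mem_powerset] at hS
        obtain ⟨⟨hsub, hcond, hend⟩, hmem⟩ := hS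
        simp only [Finset.mem_filter, Finset.mem_powerset]
        have hsub' : S.erase (k+1) ⊆ Finset.Icc (k+1+1) m := by
          intro t ht
          rw [Finset.mem_erase] at ht
          have := hsub ht.2
          rw [Finset.mem_Icc] at this ⊢
          have := ht.1
          omega
        refine ⟨hsub', ?_, ?_⟩
        · intro j hj
          rw [Finset.mem_Icc] at hj
          have hint : S ∩ Finset.Icc 1 j = insert (k+1) (S.erase (k+1) ∩ Finset.Icc 1 j) := by
            ext t
            simp only [Finset.mem_inter, Finset.mem_insert, Finset.mem_erase, Finset.mem_Icc]
            constructor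
            · rintro ⟨ht, h1, h2⟩
              by_cases hc : t = k+1
              · exact Or.inl hc
              · exact Or.inr ⟨⟨hc, ht⟩, h1, h2⟩
            · rintro (rfl | ⟨⟨_, ht⟩, h1, h2⟩)
              · exact ⟨hmem, by omega, by omega⟩
              · exact ⟨ht, h1, h2⟩
          have hnotin : (k+1) ∉ S.erase (k+1) ∩ Finset.Icc 1 j := by
            simp [Finset.mem_erase]
          have := hcond j (by rw [Finset.mem_Icc]; omega)
          rw [hint, Finset.card_insert_of_notMem hnotin] at this
          constructor <;> [have h1 := this.1; have h1 := this.2] <;> omega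
        · rw [Finset.card_erase_of_mem hmem]
          have : S.card ≠ 0 := by
            intro hc
            rw [Finset.card_eq_zero] at hc
            subst hc
            simp at hmem
          omega
      case hj =>
        intro T hT
        simp only [Finset.mem_filter, Finset.mem_powerset] at hT
        obtain ⟨hsub, hcond, hend⟩ := hT
        have hnm : (k+1) ∉ T := by
          intro hc
          have := hsub hc
          rw [Finset.mem_Icc] at this
          omega
        simp only [Finset.mem_filter, Finset.mem_powerset]
        refine ⟨⟨?_, ?_, ?_⟩, Finset.mem_insert_self _ _⟩
        · intro t ht
          rw [Finset.mem_insert] at ht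
          rcases ht with rfl | ht
          · rw [Finset.mem_Icc]; omega
          · have := hsub ht
            rw [Finset.mem_Icc] at this ⊢
            omega
        · intro j hj
          rw [Finset.mem_Icc] at hj
          have hint : insert (k+1) T ∩ Finset.Icc 1 j = insert (k+1) (T ∩ Finset.Icc 1 j) := by
            ext t
            simp only [Finset.mem_inter, Finset.mem_insert, Finset.mem_Icc]
            constructor
            · rintro ⟨rfl | ht, h1, h2⟩
              · exact Or.inl rfl
              · exact Or.inr ⟨ht, h1, h2⟩
            · rintro (rfl | ⟨ht, h1, h2⟩)
              · exact ⟨Or.inl rfl, by omega, by omega⟩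
              · exact ⟨Or.inr ht, h1, h2⟩
          have hnotin : (k+1) ∉ T ∩ Finset.Icc 1 j := fun hc => hnm (Finset.mem_inter.1 hc).1
          rw [hint, Finset.card_insert_of_notMem hnotin]
          rcases Nat.lt_or_ge j (k+1+1) with hjk | hjk
          · have hj' : j = k+1 := by omega
            subst hj'
            have : T ∩ Finset.Icc 1 (k+1) = ∅ := by
              apply Finset.eq_empty_iff_forall_notMem.2
              intro t ht
              rw [Finset.mem_inter, Finset.mem_Icc] at ht
              have := hsub ht.1
              rw [Finset.mem_Icc] at this
              omega
            rw [this]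
            simpa using hbox
          · have := hcond j (by rw [Finset.mem_Icc]; omega)
            constructor <;> [have h1 := this.1; have h1 := this.2] <;> omega
        · rw [Finset.card_insert_of_notMem hnm]
          omega
      case li =>
        intro S hS
        simp only [Finset.mem_filter] at hS
        exact Finset.insert_erase hS.2
      case ri =>
        intro T hT
        simp only [Finset.mem_filter, Finset.mem_powerset] at hT
        apply Finset.erase_insert
        intro hc
        have := hT.1 hc
        rw [Finset.mem_Icc] at this
        omega
  have part1 : ((((Finset.Icc (k+1) m).powerset.filter fun S =>
      (∀ j ∈ Finset.Icc (k+1) m, a j ≤ x + (S ∩ Finset.Icc 1 j).card ∧ x + (S ∩ Finset.Icc 1 j).card ≤ b j)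
      ∧ x + S.card = r)).filter fun S => ¬ (k+1) ∈ S).card
      = (if a (k+1) ≤ x ∧ x ≤ b (k+1) then suf m r a b (k+1) x else 0) := by
    by_cases hbox : a (k+1) ≤ x ∧ x ≤ b (k+1)
    case neg =>
      rw [if_neg hbox]
      apply Finset.card_eq_zero.2
      apply Finset.eq_empty_iff_forall_notMem.2
      intro S hS
      simp only [Finset.mem_filter, Finset.mem_powerset] at hS
      obtain ⟨⟨hsub, hcond, _⟩, hnm⟩ := hS
      apply hbox
      have hint : S ∩ Finset.Icc 1 (k+1) = ∅ := by
        apply Finset.eq_empty_iff_forall_notMem.2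
        intro t ht
        rw [Finset.mem_inter, Finset.mem_Icc] at ht
        have := hsub ht.1
        rw [Finset.mem_Icc] at this
        have : t = k+1 := by omega
        exact hnm (this ▸ ht.1)
      have := hcond (k+1) hk1
      rw [hint] at this
      simpa using this
    case pos =>
      rw [if_pos hbox]
      unfold suf
      have hset : ((((Finset.Icc (k+1) m).powerset.filter fun S =>
          (∀ j ∈ Finset.Icc (k+1) m, a j ≤ x + (S ∩ Finset.Icc 1 j).card ∧ x + (S ∩ Finset.Icc 1 j).card ≤ b j)
          ∧ x + S.card = r)).filter fun S => ¬ (k+1) ∈ S)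
          = ((Finset.Icc (k+1+1) m).powerset.filter fun S =>
          (∀ j ∈ Finset.Icc (k+1+1) m, a j ≤ x + (S ∩ Finset.Icc 1 j).card ∧ x + (S ∩ Finset.Icc 1 j).card ≤ b j)
          ∧ x + S.card = r) := by
        ext S
        simp only [Finset.mem_filter, Finset.mem_powerset]
        constructor
        · rintro ⟨⟨hsub, hcond, hend⟩, hnm⟩
          have hsub' : S ⊆ Finset.Icc (k+1+1) m := by
            intro t ht
            have h1 := hsub ht
            rw [Finset.mem_Icc] at h1 ⊢
            have : t ≠ k+1 := fun hc => hnm (hc ▸ ht)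
            omega
          exact ⟨hsub', fun j hj => hcond j (by rw [Finset.mem_Icc] at hj ⊢; omega), hend⟩
        · rintro ⟨hsub, hcond, hend⟩
          have hnm : (k+1) ∉ S := by
            intro hc
            have := hsub hc
            rw [Finset.mem_Icc] at this
            omega
          refine ⟨⟨fun t ht => ?_, ?_, hend⟩, hnm⟩
          · have := hsub ht
            rw [Finset.mem_Icc] at this ⊢
            omega
          · intro j hj
            rw [Finset.mem_Icc] at hj
            rcases Nat.lt_or_ge j (k+1+1) with hjk | hjk
            · have hj' : j = k+1 := by omega
              subst hj'
              have hint : S ∩ Finset.Icc 1 (k+1) = ∅ := by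
                apply Finset.eq_empty_iff_forall_notMem.2
                intro t ht
                rw [Finset.mem_inter, Finset.mem_Icc] at ht
                have := hsub ht.1
                rw [Finset.mem_Icc] at this
                omega
              rw [hint]
              simpa using hbox
            · exact hcond j (by rw [Finset.mem_Icc]; omega)
      rw [hset]
  rw [part1, part2, add_comm]
  rfl


lemma sum_sh (M : ℕ) (g h : ℕ → ℕ) (hg : g M = 0) :
    ∑ x ∈ range (M+1), sh g x * h x = ∑ x ∈ range (M+1), g x * h (x+1) := by
  rw [Finset.sum_range_succ' (fun x => sh g x * h x) M,
    Finset.sum_range_succ (fun x => g x * h (x+1)) M]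
  simp [hg]

lemma core (m r : ℕ) (a b : ℕ → ℕ) (e f : ℕ)
    (he : 1 ≤ e) (hef : e < f) (hfm : f ≤ m) (hrm : r ≤ m) :
    pref a b m (fun S => e ∉ S ∧ f ∉ S) r * pref a b m (fun S => e ∈ S ∧ f ∈ S) r ≤
    pref a b m (fun S => e ∈ S ∧ f ∉ S) r * pref a b m (fun S => e ∉ S ∧ f ∈ S) r := by
  obtain ⟨e', rfl⟩ : ∃ e', e = e' + 1 := ⟨e - 1, by omega⟩
  obtain ⟨f', rfl⟩ : ∃ f', f = f' + 1 := ⟨f - 1, by omega⟩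
  have hf'm : f' < m := by omega
  -- log-concavity of unconstrained prefix counts
  have hN : ∀ k, LC (pref a b k (fun _ => True)) := by
    intro k
    induction k with
    | zero =>
      intro u v huv
      rw [pref_zero, pref_zero]
      have h1 : ¬ (v + 1 = 0) := by omega
      rw [if_neg h1, mul_zero]
      exact Nat.zero_le _
    | succ k ih =>
      have heq := pref_succ a b k (fun _ => True) (fun _ => True) (fun _ => True)
        (fun S _ => Iff.rfl) (fun S _ => Iff.rfl)
      intro u v huv
      rw [heq u, heq (v+1), heq (u+1), heq v]
      exact LC_step ih (a (k+1)) (b (k+1)) u v huv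
  -- log-concavity of suffix counts
  have hsuf : ∀ k, k ≤ m → LC (suf m r a b k) := by
    have key : ∀ d k, k ≤ m → m - k = d → LC (suf m r a b k) := by
      intro d
      induction d with
      | zero =>
        intro k hk hd
        have hkm : k = m := by omega
        rw [hkm]
        intro u v huv
        rw [suf_last, suf_last]
        by_cases h1 : u = r
        · have h2 : ¬ (v + 1 = r) := by omega
          rw [if_neg h2, mul_zero]
          exact Nat.zero_le _
        · rw [if_neg h1, zero_mul]
          exact Nat.zero_le _
      | succ d ihd =>
        intro k hk hd
        have hkm : k < m := by omega
        have hnext := ihd (k+1) (by omega) (by omega)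
        intro u v huv
        rw [suf_succ m r a b k u hkm, suf_succ m r a b k (v+1) hkm,
          suf_succ m r a b k (u+1) hkm, suf_succ m r a b k v hkm]
        exact LC_sufstep hnext (a (k+1)) (b (k+1)) u v huv
    exact fun k hk => key (m - k) k hk rfl
  -- invariant: pref over full range equals weighted sum at position k
  have hQinv : ∀ (Q : Finset ℕ → Prop), (∀ t (S : Finset ℕ), f'+1 < t → (Q (insert t S) ↔ Q S)) →
      pref a b m Q r = ∑ x ∈ range (m+1), pref a b (f'+1) Q x * suf m r a b (f'+1) x := by
    intro Q hQ
    have key : ∀ d k, f'+1 ≤ k → k ≤ m → m - k = d →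
        pref a b m Q r = ∑ x ∈ range (m+1), pref a b k Q x * suf m r a b k x := by
      intro d
      induction d with
      | zero =>
        intro k h1 h2 hd
        have hkm : k = m := by omega
        rw [hkm]
        have hterm : ∀ x, pref a b m Q x * suf m r a b m x
            = if x = r then pref a b m Q x else 0 := by
          intro x
          rw [suf_last]
          split_ifs <;> simp
        rw [Finset.sum_congr rfl (fun x _ => hterm x), Finset.sum_ite_eq' (range (m+1)) r]
        rw [if_pos (by rw [Finset.mem_range]; omega)]
      | succ d ihd =>
        intro k h1 h2 hd
        have hkm : k < m := by omega
        rw [ihd (k+1) (by omega) (by omega) (by omega)]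
        have hps := pref_succ a b k Q Q Q (fun S _ => Iff.rfl)
          (fun S _ => hQ (k+1) S (by omega))
        calc ∑ x ∈ range (m+1), pref a b (k+1) Q x * suf m r a b (k+1) x
            = ∑ x ∈ range (m+1),
              (pref a b k Q x * (if a (k+1) ≤ x ∧ x ≤ b (k+1) then suf m r a b (k+1) x else 0)
              + sh (pref a b k Q) x * (if a (k+1) ≤ x ∧ x ≤ b (k+1) then suf m r a b (k+1) x else 0)) := by
              apply Finset.sum_congr rfl
              intro x _
              rw [hps x]
              split_ifs <;> ring
          _ = (∑ x ∈ range (m+1),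
                pref a b k Q x * (if a (k+1) ≤ x ∧ x ≤ b (k+1) then suf m r a b (k+1) x else 0))
              + ∑ x ∈ range (m+1),
                sh (pref a b k Q) x * (if a (k+1) ≤ x ∧ x ≤ b (k+1) then suf m r a b (k+1) x else 0) :=
              Finset.sum_add_distrib
          _ = (∑ x ∈ range (m+1),
                pref a b k Q x * (if a (k+1) ≤ x ∧ x ≤ b (k+1) then suf m r a b (k+1) x else 0))
              + ∑ x ∈ range (m+1),
                pref a b k Q x * (if a (k+1) ≤ x+1 ∧ x+1 ≤ b (k+1) then suf m r a b (k+1) (x+1) else 0) := by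
              congr 1
              exact sum_sh m (pref a b k Q) _ (pref_eq_zero_of_lt a b Q hkm)
          _ = ∑ x ∈ range (m+1), pref a b k Q x * suf m r a b k x := by
              rw [← Finset.sum_add_distrib]
              apply Finset.sum_congr rfl
              intro x _
              rw [← mul_add, ← suf_succ m r a b k x hkm]
    exact key (m - (f'+1)) (f'+1) (le_refl _) (by omega) rfl
  -- P2 for the e-split prefix counts, propagated to f'
  have hP2 : ∀ k, e'+1 ≤ k → k ≤ f' →
      P2 (pref a b k (fun S => e'+1 ∉ S)) (pref a b k (fun S => e'+1 ∈ S)) := by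
    intro k
    induction k with
    | zero => intro hk1 hk2; exact absurd hk1 (by omega)
    | succ k ih =>
      intro hk1 hk2
      rcases Nat.lt_or_ge k (e'+1) with hke | hke
      · have hke' : k = e' := by omega
        rw [hke']
        have h0 := pref_succ a b e' (fun S => e'+1 ∉ S) (fun _ => True) (fun _ => False)
          (fun S hS => ⟨fun _ => trivial, fun _ hmem => by
            have := hS hmem; rw [Finset.mem_Icc] at this; omega⟩)
          (fun S hS => ⟨fun h => absurd (Finset.mem_insert_self _ _) h, False.elim⟩)
        have h1 := pref_succ a b e' (fun S => e'+1 ∈ S) (fun _ => False) (fun _ => True)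
          (fun S hS => ⟨fun hmem => by
            have := hS hmem; rw [Finset.mem_Icc] at this; omega, False.elim⟩)
          (fun S hS => ⟨fun _ => trivial, fun _ => Finset.mem_insert_self _ _⟩)
        have hp0 : ∀ x, pref a b (e'+1) (fun S => e'+1 ∉ S) x
            = if a (e'+1) ≤ x ∧ x ≤ b (e'+1) then pref a b e' (fun _ => True) x else 0 := by
          intro x
          rw [h0 x]
          rcases x with _ | y <;> simp [pref_false]
        have hp1 : ∀ x, pref a b (e'+1) (fun S => e'+1 ∈ S) x
            = if a (e'+1) ≤ x ∧ x ≤ b (e'+1) then sh (pref a b e' (fun _ => True)) x else 0 := by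
          intro x
          rw [h1 x]
          rcases x with _ | y <;> simp [pref_false]
        intro u v huv
        rw [hp1 u, hp0 v, hp0 u, hp1 v]
        exact P2_base (hN e') (a (e'+1)) (b (e'+1)) u v huv
      · have hke2 : k = e' → False := by omega
        have ihh := ih hke (by omega)
        have hs0 := pref_succ a b k (fun S => e'+1 ∉ S) (fun S => e'+1 ∉ S) (fun S => e'+1 ∉ S)
          (fun S _ => Iff.rfl)
          (fun S _ => not_congr (by simp only [Finset.mem_insert]; exact or_iff_right (by omega)))
        have hs1 := pref_succ a b k (fun S => e'+1 ∈ S) (fun S => e'+1 ∈ S) (fun S => e'+1 ∈ S)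
          (fun S _ => Iff.rfl)
          (fun S _ => by simp only [Finset.mem_insert]; exact or_iff_right (by omega))
        intro u v huv
        rw [hs1 u, hs0 v, hs0 u, hs1 v]
        exact P2_step ihh (a (k+1)) (b (k+1)) u v huv
  -- representations of the four corner counts
  have repr0 : ∀ (Pe : Finset ℕ → Prop), (∀ t (S : Finset ℕ), e'+1 < t → (Pe (insert t S) ↔ Pe S)) →
      pref a b m (fun S => Pe S ∧ f'+1 ∉ S) r
        = ∑ x ∈ range (m+1), pref a b f' Pe x *
            (if a (f'+1) ≤ x ∧ x ≤ b (f'+1) then suf m r a b (f'+1) x else 0) := by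
    intro Pe hPe
    rw [hQinv (fun S => Pe S ∧ f'+1 ∉ S)
      (fun t S ht => by
        constructor
        · rintro ⟨h1, h2⟩
          exact ⟨(hPe t S (by omega)).mp h1, fun hc => h2 (Finset.mem_insert_of_mem hc)⟩
        · rintro ⟨h1, h2⟩
          refine ⟨(hPe t S (by omega)).mpr h1, ?_⟩
          rw [Finset.mem_insert]
          rintro (h | h)
          · omega
          · exact h2 h)]
    apply Finset.sum_congr rfl
    intro x _
    have hps := pref_succ a b f' (fun S => Pe S ∧ f'+1 ∉ S) Pe (fun _ => False)
      (fun S hS => ⟨fun h => h.1, fun h => ⟨h, fun hmem => by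
        have := hS hmem; rw [Finset.mem_Icc] at this; omega⟩⟩)
      (fun S hS => ⟨fun h => absurd (Finset.mem_insert_self _ _) h.2, False.elim⟩)
    rw [hps x]
    cases x with
    | zero =>
      simp only [sh_zero, pref_false, add_zero]
      split_ifs <;> ring
    | succ y =>
      simp only [sh_succ, pref_false, add_zero]
      split_ifs <;> ring
  have repr1 : ∀ (Pe : Finset ℕ → Prop), (∀ t (S : Finset ℕ), e'+1 < t → (Pe (insert t S) ↔ Pe S)) →
      pref a b m (fun S => Pe S ∧ f'+1 ∈ S) r
        = ∑ x ∈ range (m+1), pref a b f' Pe x *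
            (if a (f'+1) ≤ x+1 ∧ x+1 ≤ b (f'+1) then suf m r a b (f'+1) (x+1) else 0) := by
    intro Pe hPe
    rw [hQinv (fun S => Pe S ∧ f'+1 ∈ S)
      (fun t S ht => by
        constructor
        · rintro ⟨h1, h2⟩
          refine ⟨(hPe t S (by omega)).mp h1, ?_⟩
          rw [Finset.mem_insert] at h2
          rcases h2 with h | h
          · omega
          · exact h
        · rintro ⟨h1, h2⟩
          exact ⟨(hPe t S (by omega)).mpr h1, Finset.mem_insert_of_mem h2⟩)]
    have hps := pref_succ a b f' (fun S => Pe S ∧ f'+1 ∈ S) (fun _ => False) Pe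
      (fun S hS => ⟨fun h => by
        have := hS h.2; rw [Finset.mem_Icc] at this; omega, False.elim⟩)
      (fun S hS => ⟨fun h => (hPe (f'+1) S (by omega)).mp h.1,
        fun h => ⟨(hPe (f'+1) S (by omega)).mpr h, Finset.mem_insert_self _ _⟩⟩)
    calc ∑ x ∈ range (m+1), pref a b (f'+1) (fun S => Pe S ∧ f'+1 ∈ S) x * suf m r a b (f'+1) x
        = ∑ x ∈ range (m+1), sh (pref a b f' Pe) x *
            (if a (f'+1) ≤ x ∧ x ≤ b (f'+1) then suf m r a b (f'+1) x else 0) := by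
          apply Finset.sum_congr rfl
          intro x _
          rw [hps x]
          cases x with
          | zero =>
            simp only [sh_zero, pref_false, zero_add]
            split_ifs <;> ring
          | succ y =>
            simp only [sh_succ, pref_false, zero_add]
            split_ifs <;> ring
      _ = ∑ x ∈ range (m+1), pref a b f' Pe x *
            (if a (f'+1) ≤ x+1 ∧ x+1 ≤ b (f'+1) then suf m r a b (f'+1) (x+1) else 0) := by
          exact sum_sh m (pref a b f' Pe) _ (pref_eq_zero_of_lt a b Pe hf'm)
  -- instantiate
  have hPe0 : ∀ t (S : Finset ℕ), e'+1 < t → ((e'+1 ∉ insert t S) ↔ (e'+1 ∉ S)) :=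
    fun t S ht => not_congr (by rw [Finset.mem_insert]; exact or_iff_right (by omega))
  have hPe1 : ∀ t (S : Finset ℕ), e'+1 < t → ((e'+1 ∈ insert t S) ↔ (e'+1 ∈ S)) :=
    fun t S ht => by rw [Finset.mem_insert]; exact or_iff_right (by omega)
  rw [repr0 (fun S => e'+1 ∉ S) hPe0, repr0 (fun S => e'+1 ∈ S) hPe1,
    repr1 (fun S => e'+1 ∉ S) hPe0, repr1 (fun S => e'+1 ∈ S) hPe1]
  exact sums_ineq (m+1) (pref a b f' (fun S => e'+1 ∉ S)) (pref a b f' (fun S => e'+1 ∈ S))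
    (fun x => if a (f'+1) ≤ x ∧ x ≤ b (f'+1) then suf m r a b (f'+1) x else 0)
    (fun x => if a (f'+1) ≤ x+1 ∧ x+1 ≤ b (f'+1) then suf m r a b (f'+1) (x+1) else 0)
    (hP2 f' (by omega) (le_refl _))
    (P2_suffix (hsuf (f'+1) (by omega)) (a (f'+1)) (b (f'+1)))


lemma pref_congr (a b : ℕ → ℕ) (k x : ℕ) {P Q : Finset ℕ → Prop} (h : ∀ S, P S ↔ Q S) :
    pref a b k P x = pref a b k Q x := by
  unfold pref
  congr 1
  ext S
  simp only [Finset.mem_filter, Finset.mem_powerset]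
  constructor
  · rintro ⟨h1, h2, h3, h4⟩
    exact ⟨h1, h2, h3, (h S).mp h4⟩
  · rintro ⟨h1, h2, h3, h4⟩
    exact ⟨h1, h2, h3, (h S).mpr h4⟩

lemma pref_split (a b : ℕ → ℕ) (k x : ℕ) (P Q : Finset ℕ → Prop) :
    pref a b k (fun S => P S ∧ Q S) x + pref a b k (fun S => P S ∧ ¬ Q S) x
      = pref a b k P x := by
  unfold pref
  refine Eq.trans (congrArg₂ HAdd.hAdd ?_ ?_)
    (Eq.trans (Finset.card_filter_add_card_filter_not (p := Q)
      (s := ((Finset.Icc 1 k).powerset.filter fun S =>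
        (∀ j ∈ Finset.Icc 1 k, a j ≤ (S ∩ Finset.Icc 1 j).card ∧ (S ∩ Finset.Icc 1 j).card ≤ b j)
        ∧ S.card = x ∧ P S))) ?_)
  · congr 1
    ext S
    simp only [Finset.mem_filter, Finset.mem_powerset]
    tauto
  · congr 1
    ext S
    simp only [Finset.mem_filter, Finset.mem_powerset]
    tauto
  · congr 1

lemma lattice_card (m r : ℕ) (A B : Finset ℕ) (P : Finset ℕ → Prop) [DecidablePred P] :
    ((latticeFamily m r A B).filter P).card
      = pref (fun j => (A ∩ Finset.Icc 1 j).card) (fun j => (B ∩ Finset.Icc 1 j).card) m P r := by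
  have hset : (latticeFamily m r A B).filter P
      = ((Finset.Icc 1 m).powerset.filter fun S =>
        (∀ j ∈ Finset.Icc 1 m, (A ∩ Finset.Icc 1 j).card ≤ (S ∩ Finset.Icc 1 j).card
          ∧ (S ∩ Finset.Icc 1 j).card ≤ (B ∩ Finset.Icc 1 j).card)
        ∧ S.card = r ∧ P S) := by
    ext S
    simp only [latticeFamily, Finset.mem_filter, Finset.mem_powerset]
    tauto
  rw [hset]
  unfold pref
  congr 1
  ext S
  simp only [Finset.mem_filter, Finset.mem_powerset]

lemma lattice_card_total (m r : ℕ) (A B : Finset ℕ) :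
    (latticeFamily m r A B).card
      = pref (fun j => (A ∩ Finset.Icc 1 j).card) (fun j => (B ∩ Finset.Icc 1 j).card) m
          (fun _ => True) r := by
  have hset : latticeFamily m r A B
      = ((Finset.Icc 1 m).powerset.filter fun S =>
        (∀ j ∈ Finset.Icc 1 m, (A ∩ Finset.Icc 1 j).card ≤ (S ∩ Finset.Icc 1 j).card
          ∧ (S ∩ Finset.Icc 1 j).card ≤ (B ∩ Finset.Icc 1 j).card)
        ∧ S.card = r ∧ True) := by
    ext S
    simp only [latticeFamily, Finset.mem_filter, Finset.mem_powerset]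
    tauto
  rw [hset]
  unfold pref
  congr 1
  ext S
  simp only [Finset.mem_filter, Finset.mem_powerset]

lemma main (m r : ℕ) (A B : Finset ℕ) (hr : r ≤ m) (e f : ℕ)
    (he : 1 ≤ e) (hef : e < f) (hfm : f ≤ m) :
    ((latticeFamily m r A B).filter (fun S => e ∈ S)).card *
      ((latticeFamily m r A B).filter (fun S => f ∈ S)).card ≥
    (latticeFamily m r A B).card *
      ((latticeFamily m r A B).filter (fun S => e ∈ S ∧ f ∈ S)).card := by
  rw [lattice_card m r A B (fun S => e ∈ S), lattice_card m r A B (fun S => f ∈ S),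
    lattice_card m r A B (fun S => e ∈ S ∧ f ∈ S), lattice_card_total m r A B]
  set a : ℕ → ℕ := fun j => (A ∩ Finset.Icc 1 j).card with ha
  set b : ℕ → ℕ := fun j => (B ∩ Finset.Icc 1 j).card with hb
  have hcore := core m r a b e f he hef hfm hr
  have hsE : pref a b m (fun S => e ∈ S ∧ f ∈ S) r + pref a b m (fun S => e ∈ S ∧ f ∉ S) r
      = pref a b m (fun S => e ∈ S) r := pref_split a b m r _ _
  have hsNE : pref a b m (fun S => e ∉ S ∧ f ∈ S) r + pref a b m (fun S => e ∉ S ∧ f ∉ S) r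
      = pref a b m (fun S => e ∉ S) r := pref_split a b m r _ _
  have hsF : pref a b m (fun S => e ∈ S ∧ f ∈ S) r + pref a b m (fun S => e ∉ S ∧ f ∈ S) r
      = pref a b m (fun S => f ∈ S) r := by
    have h1 : pref a b m (fun S => e ∈ S ∧ f ∈ S) r
        = pref a b m (fun S => f ∈ S ∧ e ∈ S) r := pref_congr a b m r (fun S => and_comm)
    have h2 : pref a b m (fun S => e ∉ S ∧ f ∈ S) r
        = pref a b m (fun S => f ∈ S ∧ ¬ e ∈ S) r := pref_congr a b m r (fun S => and_comm)
    rw [h1, h2]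
    exact pref_split a b m r _ _
  have hsL : pref a b m (fun S => e ∈ S) r + pref a b m (fun S => e ∉ S) r
      = pref a b m (fun _ => True) r := by
    have h1 : pref a b m (fun S => e ∈ S) r
        = pref a b m (fun S => True ∧ e ∈ S) r := pref_congr a b m r (fun S => ⟨fun h => ⟨trivial, h⟩, fun h => h.2⟩)
    have h2 : pref a b m (fun S => e ∉ S) r
        = pref a b m (fun S => True ∧ ¬ e ∈ S) r := pref_congr a b m r (fun S => ⟨fun h => ⟨trivial, h⟩, fun h => h.2⟩)
    rw [h1, h2]
    exact pref_split a b m r _ _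
  nlinarith [hcore, hsE, hsNE, hsF, hsL]

end LPMaux

/-- Lattice path matroids are negatively correlated:
`|L_e| · |L_f| ≥ |L| · |L_{ef}|`. -/
theorem latticeFamily_negatively_correlated
    (m r : ℕ) (hm : 1 ≤ m) (hr : r ≤ m)
    (A B : Finset ℕ) (hA : A ⊆ Finset.Icc 1 m) (hB : B ⊆ Finset.Icc 1 m)
    (hAcard : A.card = r) (hBcard : B.card = r)
    (hAB : ∀ k ∈ Finset.Icc 1 m,
      (A ∩ Finset.Icc 1 k).card ≤ (B ∩ Finset.Icc 1 k).card)
    (e f : ℕ) (he : e ∈ Finset.Icc 1 m) (hf : f ∈ Finset.Icc 1 m) (hef : e ≠ f) :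
    ((latticeFamily m r A B).filter (fun S => e ∈ S)).card *
      ((latticeFamily m r A B).filter (fun S => f ∈ S)).card ≥
    (latticeFamily m r A B).card *
      ((latticeFamily m r A B).filter (fun S => e ∈ S ∧ f ∈ S)).card := by
  rw [Finset.mem_Icc] at he hf
  rcases lt_or_gt_of_ne hef with h | h
  · exact LPMaux.main m r A B hr e f (by omega) h (by omega)
  · have := LPMaux.main m r A B hr f e (by omega) h (by omega)
    have hswap : (latticeFamily m r A B).filter (fun S => f ∈ S ∧ e ∈ S)
        = (latticeFamily m r A B).filter (fun S => e ∈ S ∧ f ∈ S) := by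
      ext S; simp only [Finset.mem_filter]; tauto
    rw [hswap] at this
    calc (latticeFamily m r A B).card *
          ((latticeFamily m r A B).filter (fun S => e ∈ S ∧ f ∈ S)).card
        ≤ ((latticeFamily m r A B).filter (fun S => f ∈ S)).card *
          ((latticeFamily m r A B).filter (fun S => e ∈ S)).card := this
      _ = _ := mul_comm _ _
end

section
/- For every lattice path family L = L[S_A, S_B] on ground set {1,…,m} and every pair of distinct elements e, f ∈ {1,…,m}, one has |L_{ef}| · |L^{ef}| ≤ |L_e^f| · |L_f^e|; that is, there is an injection from L_{ef} × L^{ef} into L_e^f × L_f^e. -/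
open scoped Classical

namespace LPMtest
open Finset

noncomputable def suf (m r : ℕ) (na nb : ℕ → ℕ) (c γ : ℕ) : Finset (Finset ℕ) :=
  (Finset.Icc (c+1) m).powerset.filter fun T =>
    γ + T.card = r ∧ (na c ≤ γ ∧ γ ≤ nb c) ∧
      ∀ k ∈ Finset.Icc (c+1) m,
        na k ≤ γ + (T ∩ Finset.Icc (c+1) k).card ∧ γ + (T ∩ Finset.Icc (c+1) k).card ≤ nb k

variable {m r : ℕ} {na nb : ℕ → ℕ}

lemma mem_suf {c γ : ℕ} {T : Finset ℕ} :
    T ∈ suf m r na nb c γ ↔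
      T ⊆ Finset.Icc (c+1) m ∧ γ + T.card = r ∧ (na c ≤ γ ∧ γ ≤ nb c) ∧
      ∀ k ∈ Finset.Icc (c+1) m,
        na k ≤ γ + (T ∩ Finset.Icc (c+1) k).card ∧ γ + (T ∩ Finset.Icc (c+1) k).card ≤ nb k := by
  simp [suf]

lemma inter_Icc_shift {T : Finset ℕ} {c k : ℕ} (h : c+1 ∉ T) :
    T ∩ Finset.Icc (c+1) k = T ∩ Finset.Icc (c+2) k := by
  ext x
  simp only [Finset.mem_inter, Finset.mem_Icc]
  constructor
  · rintro ⟨hx, h1, h2⟩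
    have : x ≠ c+1 := fun hh => h (hh ▸ hx)
    exact ⟨hx, by omega, h2⟩
  · rintro ⟨hx, h1, h2⟩
    exact ⟨hx, by omega, h2⟩

/-- Members of `suf c γ` not containing `c+1` are exactly `suf (c+1) γ`. -/
lemma suf_filter_notmem {c γ : ℕ} (hcm : c + 1 ≤ m) (hχ : na c ≤ γ ∧ γ ≤ nb c) :
    (suf m r na nb c γ).filter (fun T => c+1 ∉ T) = suf m r na nb (c+1) γ := by
  ext T
  simp only [Finset.mem_filter, mem_suf]
  constructor
  · rintro ⟨⟨hsub, hcard, _, hcond⟩, hnm⟩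
    have hsub' : T ⊆ Finset.Icc (c+2) m := by
      intro x hx
      have := hsub hx
      simp only [Finset.mem_Icc] at this ⊢
      have : c+1 ≤ x ∧ x ≤ m := this
      have hne : x ≠ c+1 := fun hh => hnm (hh ▸ hx)
      omega
    refine ⟨hsub', hcard, ?_, ?_⟩
    · have h1 := hcond (c+1) (by simp [Finset.mem_Icc]; omega)
      have h2 : T ∩ Finset.Icc (c+1) (c+1) = ∅ := by
        rw [inter_Icc_shift hnm]
        apply Finset.eq_empty_of_forall_notMem
        intro x hx
        simp only [Finset.mem_inter, Finset.mem_Icc] at hx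
        omega
      rw [h2] at h1
      simpa using h1
    · intro k hk
      have hk' : k ∈ Finset.Icc (c+1) m := by
        simp only [Finset.mem_Icc] at hk ⊢; omega
      have := hcond k hk'
      rwa [inter_Icc_shift hnm] at this
  · rintro ⟨hsub, hcard, hχ', hcond⟩
    have hnm : c+1 ∉ T := by
      intro hx
      have := hsub hx
      simp only [Finset.mem_Icc] at this
      omega
    have hsub' : T ⊆ Finset.Icc (c+1) m := by
      intro x hx
      have := hsub hx
      simp only [Finset.mem_Icc] at this ⊢
      omega
    refine ⟨⟨hsub', hcard, hχ, ?_⟩, hnm⟩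
    intro k hk
    simp only [Finset.mem_Icc] at hk
    rcases Nat.lt_or_ge k (c+2) with hlt | hge
    · have hk1 : k = c+1 := by omega
      subst hk1
      have h2 : T ∩ Finset.Icc (c+1) (c+1) = ∅ := by
        rw [inter_Icc_shift hnm]
        apply Finset.eq_empty_of_forall_notMem
        intro x hx
        simp only [Finset.mem_inter, Finset.mem_Icc] at hx
        omega
      rw [h2]
      simpa using hχ'
    · rw [inter_Icc_shift hnm]
      exact hcond k (by simp [Finset.mem_Icc]; omega)

/-- Members of `suf c γ` containing `c+1`, also filtered by an insert-invariant predicate `p`,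
are in bijection with `suf (c+1) (γ+1)` filtered by `p`. -/
lemma suf_filter_mem_card (p : Finset ℕ → Prop) {c γ : ℕ} (hcm : c + 1 ≤ m)
    (hχ : na c ≤ γ ∧ γ ≤ nb c)
    (hp : ∀ T : Finset ℕ, c+1 ∉ T → (p (insert (c+1) T) ↔ p T)) :
    (((suf m r na nb c γ).filter p).filter (fun T => c+1 ∈ T)).card
      = ((suf m r na nb (c+1) (γ+1)).filter p).card := by
  apply Finset.card_bij (fun T _ => T.erase (c+1))
  · -- maps into target
    intro T hT
    simp only [Finset.mem_filter, mem_suf] at hT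
    obtain ⟨⟨⟨hsub, hcard, _, hcond⟩, hpT⟩, hmem⟩ := hT
    have hnm : c+1 ∉ T.erase (c+1) := Finset.notMem_erase _ _
    have hins : insert (c+1) (T.erase (c+1)) = T := Finset.insert_erase hmem
    have hkey : ∀ k, c+1 ≤ k → (T ∩ Finset.Icc (c+1) k).card
        = (T.erase (c+1) ∩ Finset.Icc (c+2) k).card + 1 := by
      intro k hk
      have h1 : T ∩ Finset.Icc (c+1) k = insert (c+1) (T.erase (c+1) ∩ Finset.Icc (c+2) k) := by
        rw [← inter_Icc_shift hnm]
        ext x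
        simp only [Finset.mem_inter, Finset.mem_insert, Finset.mem_erase, Finset.mem_Icc]
        constructor
        · rintro ⟨hx, h1, h2⟩
          by_cases hxc : x = c+1
          · exact Or.inl hxc
          · exact Or.inr ⟨⟨hxc, hx⟩, h1, h2⟩
        · rintro (rfl | ⟨⟨hne, hx⟩, h1, h2⟩)
          · exact ⟨hmem, le_refl _, hk⟩
          · exact ⟨hx, h1, h2⟩
      rw [h1, Finset.card_insert_of_notMem]
      intro hx
      simp only [Finset.mem_inter, Finset.mem_erase] at hx
      exact hx.1.1 rfl
    simp only [Finset.mem_filter, mem_suf, show c+1+1 = c+2 from rfl]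
    refine ⟨⟨?_, ?_, ?_, ?_⟩, ?_⟩
    · intro x hx
      simp only [Finset.mem_erase] at hx
      have := hsub hx.2
      simp only [Finset.mem_Icc] at this ⊢
      have hne := hx.1
      omega
    · have := Finset.card_erase_of_mem hmem
      have hpos : 1 ≤ T.card := Finset.card_pos.2 ⟨_, hmem⟩
      omega
    · have h1 := hcond (c+1) (by simp [Finset.mem_Icc]; omega)
      have h2 := hkey (c+1) (le_refl _)
      have h3 : T.erase (c+1) ∩ Finset.Icc (c+2) (c+1) = ∅ := by
        apply Finset.eq_empty_of_forall_notMem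
        intro x hx
        simp only [Finset.mem_inter, Finset.mem_Icc] at hx
        omega
      rw [h3] at h2
      simp only [Finset.card_empty] at h2
      rw [h2] at h1
      constructor <;> omega
    · intro k hk
      simp only [Finset.mem_Icc] at hk
      have h1 := hcond k (by simp [Finset.mem_Icc]; omega)
      have h2 := hkey k (by omega)
      rw [h2] at h1
      constructor <;> omega
    · rw [← hp _ hnm, hins]; exact hpT
  · -- injective
    intro T1 h1 T2 h2 heq
    simp only [Finset.mem_filter] at h1 h2
    have e1 : insert (c+1) (T1.erase (c+1)) = T1 := Finset.insert_erase h1.2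
    have e2 : insert (c+1) (T2.erase (c+1)) = T2 := Finset.insert_erase h2.2
    rw [← e1, ← e2, heq]
  · -- surjective
    intro T hT
    simp only [Finset.mem_filter, mem_suf, show c+1+1 = c+2 from rfl] at hT
    obtain ⟨⟨hsub, hcard, hχ', hcond⟩, hpT⟩ := hT
    have hnm : c+1 ∉ T := by
      intro hx
      have := hsub hx
      simp only [Finset.mem_Icc] at this
      omega
    refine ⟨insert (c+1) T, ?_, ?_⟩
    · simp only [Finset.mem_filter, mem_suf]
      have hkey : ∀ k, c+1 ≤ k → ((insert (c+1) T) ∩ Finset.Icc (c+1) k).card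
          = (T ∩ Finset.Icc (c+2) k).card + 1 := by
        intro k hk
        have h1 : (insert (c+1) T) ∩ Finset.Icc (c+1) k = insert (c+1) (T ∩ Finset.Icc (c+2) k) := by
          ext x
          simp only [Finset.mem_inter, Finset.mem_insert, Finset.mem_Icc]
          constructor
          · rintro ⟨rfl | hx, h1, h2⟩
            · exact Or.inl rfl
            · have : x ≠ c+1 := fun hh => hnm (hh ▸ hx)
              exact Or.inr ⟨hx, by omega, h2⟩
          · rintro (rfl | ⟨hx, h1, h2⟩)
            · exact ⟨Or.inl rfl, le_refl _, hk⟩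
            · exact ⟨Or.inr hx, by omega, h2⟩
        rw [h1, Finset.card_insert_of_notMem]
        intro hx
        simp only [Finset.mem_inter, Finset.mem_Icc] at hx
        omega
      refine ⟨⟨⟨?_, ?_, hχ, ?_⟩, ?_⟩, Finset.mem_insert_self _ _⟩
      · intro x hx
        simp only [Finset.mem_insert] at hx
        rcases hx with rfl | hx
        · simp only [Finset.mem_Icc]; omega
        · have := hsub hx
          simp only [Finset.mem_Icc] at this ⊢
          omega
      · rw [Finset.card_insert_of_notMem hnm]
        omega
      · intro k hk
        simp only [Finset.mem_Icc] at hk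
        rcases Nat.lt_or_ge k (c+2) with hlt | hge
        · have hk1 : k = c+1 := by omega
          subst hk1
          have h2 := hkey (c+1) (le_refl _)
          have h3 : T ∩ Finset.Icc (c+2) (c+1) = ∅ := by
            apply Finset.eq_empty_of_forall_notMem
            intro x hx
            simp only [Finset.mem_inter, Finset.mem_Icc] at hx
            omega
          rw [h3] at h2
          simp only [Finset.card_empty] at h2
          rw [h2]
          constructor <;> omega
        · have h2 := hkey k (by omega)
          rw [h2]
          have := hcond k (by simp [Finset.mem_Icc]; omega)
          constructor <;> omega
      · rw [hp _ hnm]; exact hpT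
    · rw [Finset.erase_insert hnm]


noncomputable def qcnt (m r : ℕ) (na nb : ℕ → ℕ) (c γ : ℕ) : ℕ := (suf m r na nb c γ).card

noncomputable def ucnt (m r : ℕ) (na nb : ℕ → ℕ) (fp : ℕ) (ε : Bool) (c γ : ℕ) : ℕ :=
  (@Finset.filter _ (fun T => fp ∈ T ↔ ε = true) (fun _ => Classical.propDecidable _)
    (suf m r na nb c γ)).card

lemma suf_empty_of_not {c γ : ℕ} (h : ¬ (na c ≤ γ ∧ γ ≤ nb c)) :
    suf m r na nb c γ = ∅ := by
  apply Finset.eq_empty_of_forall_notMem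
  intro T hT
  exact h (mem_suf.1 hT).2.2.1

lemma suf_card_rec (p : Finset ℕ → Prop) {c γ : ℕ} (hcm : c + 1 ≤ m)
    (hp : ∀ T : Finset ℕ, c+1 ∉ T → (p (insert (c+1) T) ↔ p T)) :
    ((suf m r na nb c γ).filter p).card =
      if na c ≤ γ ∧ γ ≤ nb c then
        ((suf m r na nb (c+1) γ).filter p).card + ((suf m r na nb (c+1) (γ+1)).filter p).card
      else 0 := by
  by_cases hχ : na c ≤ γ ∧ γ ≤ nb c
  · rw [if_pos hχ]
    have hsplit := Finset.card_filter_add_card_filter_not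
      (s := (suf m r na nb c γ).filter p) (p := fun T => c+1 ∈ T)
    have h1 := suf_filter_mem_card (m := m) (r := r) (na := na) (nb := nb) p hcm hχ hp
    have h2 : ((suf m r na nb c γ).filter p).filter (fun T => ¬ c+1 ∈ T)
        = (suf m r na nb (c+1) γ).filter p := by
      rw [Finset.filter_comm]
      rw [show ((suf m r na nb c γ).filter (fun T => ¬ c+1 ∈ T))
            = (suf m r na nb c γ).filter (fun T => c+1 ∉ T) from rfl]
      rw [suf_filter_notmem hcm hχ]
    have h2c := congrArg Finset.card h2
    omega
  · rw [if_neg hχ, suf_empty_of_not hχ]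
    simp

lemma qcnt_rec {c γ : ℕ} (hcm : c + 1 ≤ m) :
    qcnt m r na nb c γ =
      if na c ≤ γ ∧ γ ≤ nb c then qcnt m r na nb (c+1) γ + qcnt m r na nb (c+1) (γ+1)
      else 0 := by
  have h := suf_card_rec (m := m) (r := r) (na := na) (nb := nb) (fun _ => True) (c := c) (γ := γ)
    hcm (fun T _ => Iff.rfl)
  simpa [qcnt, Finset.filter_true] using h

lemma ucnt_rec {fp c γ : ℕ} {ε : Bool} (hcm : c + 1 ≤ m) (hne : fp ≠ c+1) :
    ucnt m r na nb fp ε c γ =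
      if na c ≤ γ ∧ γ ≤ nb c then
        ucnt m r na nb fp ε (c+1) γ + ucnt m r na nb fp ε (c+1) (γ+1)
      else 0 := by
  have h := suf_card_rec (m := m) (r := r) (na := na) (nb := nb)
    (fun T => fp ∈ T ↔ ε = true) (c := c) (γ := γ) hcm ?_
  · simpa only [ucnt] using h
  · intro T hT
    simp only [Finset.mem_insert]
    constructor
    · intro h'
      constructor
      · intro hfp
        exact h'.1 (Or.inr hfp)
      · intro hε
        rcases h'.2 hε with h'' | h''
        · exact absurd h'' hne
        · exact h''
    · intro h'
      constructor
      · rintro (h'' | h'')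
        · exact absurd h'' hne
        · exact h'.1 h''
      · intro hε
        exact Or.inr (h'.2 hε)

lemma ucnt_base_true {fp c γ : ℕ} (hcm : c + 1 ≤ m) (hfc : fp = c+1) :
    ucnt m r na nb fp true c γ =
      if na c ≤ γ ∧ γ ≤ nb c then qcnt m r na nb (c+1) (γ+1) else 0 := by
  subst hfc
  by_cases hχ : na c ≤ γ ∧ γ ≤ nb c
  · rw [if_pos hχ]
    have h1 := suf_filter_mem_card (m := m) (r := r) (na := na) (nb := nb)
      (fun _ => True) hcm hχ (fun T _ => Iff.rfl)
    simp only [Finset.filter_true] at h1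
    rw [ucnt, qcnt, ← h1]
    congr 1
    ext T
    simp [Finset.mem_filter]
  · rw [if_neg hχ, ucnt, suf_empty_of_not hχ]
    simp

lemma ucnt_base_false {fp c γ : ℕ} (hcm : c + 1 ≤ m) (hfc : fp = c+1) :
    ucnt m r na nb fp false c γ =
      if na c ≤ γ ∧ γ ≤ nb c then qcnt m r na nb (c+1) γ else 0 := by
  subst hfc
  by_cases hχ : na c ≤ γ ∧ γ ≤ nb c
  · rw [if_pos hχ]
    rw [ucnt, qcnt, ← suf_filter_notmem hcm hχ]
    congr 1
    ext T
    simp [Finset.mem_filter]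
  · rw [if_neg hχ, ucnt, suf_empty_of_not hχ]
    simp

lemma qcnt_base {γ : ℕ} :
    qcnt m r na nb m γ = if γ = r ∧ na m ≤ γ ∧ γ ≤ nb m then 1 else 0 := by
  rw [qcnt, suf]
  rw [show Finset.Icc (m+1) m = ∅ from Finset.Icc_eq_empty (by omega)]
  rw [Finset.powerset_empty, Finset.filter_singleton]
  split_ifs with h1 h2 h2
  · simp
  · exfalso; apply h2
    obtain ⟨ha, hb, _⟩ := h1
    simp only [Finset.card_empty, Nat.add_zero] at ha
    exact ⟨ha, hb.1, hb.2⟩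
  · exfalso; apply h1
    refine ⟨by simpa using h2.1, ⟨h2.2.1, h2.2.2⟩, ?_⟩
    intro k hk
    simp at hk
  · simp


lemma qcnt_slc_aux : ∀ d c, c + d = m → ∀ i j, i ≤ j →
    qcnt m r na nb c i * qcnt m r na nb c (j+1) ≤ qcnt m r na nb c (i+1) * qcnt m r na nb c j := by
  intro d
  induction d with
  | zero =>
    intro c hc i j hij
    have hcm : c = m := by omega
    subst hcm
    rw [qcnt_base, qcnt_base, qcnt_base, qcnt_base]
    split_ifs with h1 h2 h3 h4 <;> simp_all <;> omega
  | succ d ih =>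
    intro c hc i j hij
    have hcm : c + 1 ≤ m := by omega
    have hc' : (c+1) + d = m := by omega
    rw [qcnt_rec hcm, qcnt_rec hcm, qcnt_rec hcm, qcnt_rec hcm]
    rcases Nat.eq_or_lt_of_le hij with rfl | hlt
    · exact (mul_comm _ _).le
    by_cases hi : na c ≤ i ∧ i ≤ nb c
    · by_cases hj1 : na c ≤ j+1 ∧ j+1 ≤ nb c
      · have hi1 : na c ≤ i+1 ∧ i+1 ≤ nb c := by omega
        have hj : na c ≤ j ∧ j ≤ nb c := by omega
        rw [if_pos hi, if_pos hj1, if_pos hi1, if_pos hj]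
        have h1 := ih (c+1) hc' i j hij
        have h2 := ih (c+1) hc' i (j+1) (by omega)
        have h3 := ih (c+1) hc' (i+1) (j+1) (by omega)
        have h4 := ih (c+1) hc' (i+1) j (by omega)
        nlinarith [h1, h2, h3, h4]
      · rw [if_neg hj1]
        simp
    · rw [if_neg hi]
      simp

lemma qcnt_slc {c : ℕ} (hc : c ≤ m) {i j : ℕ} (hij : i ≤ j) :
    qcnt m r na nb c i * qcnt m r na nb c (j+1) ≤ qcnt m r na nb c (i+1) * qcnt m r na nb c j :=
  qcnt_slc_aux (m - c) c (by omega) i j hij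

lemma ucnt_R_aux {fp : ℕ} (hfm : fp ≤ m) : ∀ d c, c + 1 + d = fp → ∀ i j, i ≤ j →
    ucnt m r na nb fp true c j * ucnt m r na nb fp false c i ≤
      ucnt m r na nb fp true c i * ucnt m r na nb fp false c j := by
  intro d
  induction d with
  | zero =>
    intro c hc i j hij
    have hfc : fp = c + 1 := by omega
    have hcm : c + 1 ≤ m := by omega
    rw [ucnt_base_true hcm hfc, ucnt_base_false hcm hfc,
        ucnt_base_true hcm hfc, ucnt_base_false hcm hfc]
    by_cases hi : na c ≤ i ∧ i ≤ nb c
    · by_cases hj : na c ≤ j ∧ j ≤ nb c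
      · rw [if_pos hi, if_pos hj, if_pos hi, if_pos hj]
        rw [mul_comm]
        exact qcnt_slc (by omega) hij
      · rw [if_neg hj]
        simp
    · rw [if_neg hi]
      simp [mul_comm]
  | succ d ih =>
    intro c hc i j hij
    have hcm : c + 1 ≤ m := by omega
    have hne : fp ≠ c + 1 := by omega
    have hc' : (c+1) + 1 + d = fp := by omega
    rw [ucnt_rec hcm hne, ucnt_rec hcm hne, ucnt_rec hcm hne, ucnt_rec hcm hne]
    by_cases heq : i = j
    · subst heq
      exact Nat.le_refl _
    have hlt : i < j := lt_of_le_of_ne hij heq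
    by_cases hi : na c ≤ i ∧ i ≤ nb c
    · by_cases hj : na c ≤ j ∧ j ≤ nb c
      · rw [if_pos hi, if_pos hj, if_pos hi, if_pos hj]
        have h1 := ih (c+1) hc' i j hij
        have h2 := ih (c+1) hc' i (j+1) (by omega)
        have h3 := ih (c+1) hc' (i+1) j (by omega)
        have h4 := ih (c+1) hc' (i+1) (j+1) (by omega)
        nlinarith [h1, h2, h3, h4]
      · rw [if_neg hj]
        simp
    · rw [if_neg hi]
      simp [mul_comm]

lemma ucnt_R {fp c : ℕ} (hfm : fp ≤ m) (hcf : c + 1 ≤ fp) {i j : ℕ} (hij : i ≤ j) :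
    ucnt m r na nb fp true c j * ucnt m r na nb fp false c i ≤
      ucnt m r na nb fp true c i * ucnt m r na nb fp false c j :=
  ucnt_R_aux hfm (fp - (c+1)) c (by omega) i j hij


noncomputable def pre (na nb : ℕ → ℕ) (c β : ℕ) : Finset (Finset ℕ) :=
  (Finset.Icc 1 c).powerset.filter fun T =>
    T.card = β ∧ ∀ k ∈ Finset.Icc 1 c,
      na k ≤ (T ∩ Finset.Icc 1 k).card ∧ (T ∩ Finset.Icc 1 k).card ≤ nb k

lemma mem_pre {c β : ℕ} {T : Finset ℕ} :
    T ∈ pre na nb c β ↔ T ⊆ Finset.Icc 1 c ∧ T.card = β ∧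
      ∀ k ∈ Finset.Icc 1 c,
        na k ≤ (T ∩ Finset.Icc 1 k).card ∧ (T ∩ Finset.Icc 1 k).card ≤ nb k := by
  simp [pre]

lemma pre_base {β : ℕ} : (pre na nb 0 β).card = if β = 0 then 1 else 0 := by
  rw [pre]
  rw [show Finset.Icc 1 0 = ∅ from Finset.Icc_eq_empty (by omega)]
  rw [Finset.powerset_empty, Finset.filter_singleton]
  split_ifs with h1 h2 h2
  · simp
  · exfalso
    apply h2
    have := h1.1
    simp only [Finset.card_empty] at this
    omega
  · exfalso
    apply h1
    refine ⟨by simp [h2], ?_⟩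
    intro k hk
    simp at hk
  · simp

lemma inter_Icc_one_of_subset {T : Finset ℕ} {c k : ℕ} (h : T ⊆ Finset.Icc 1 c) (hck : c ≤ k) :
    T ∩ Finset.Icc 1 k = T := by
  apply Finset.inter_eq_left.2
  intro x hx
  have := h hx
  simp only [Finset.mem_Icc] at this ⊢
  omega

lemma pre_empty_of_not {c β : ℕ} (hc : 1 ≤ c) (h : ¬ (na c ≤ β ∧ β ≤ nb c)) :
    pre na nb c β = ∅ := by
  apply Finset.eq_empty_of_forall_notMem
  intro T hT
  obtain ⟨hsub, hcard, hcond⟩ := mem_pre.1 hT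
  have := hcond c (by simp [Finset.mem_Icc]; omega)
  rw [inter_Icc_one_of_subset hsub (le_refl _), hcard] at this
  exact h this

lemma pre_filter_notmem {c β : ℕ} (hχ : na (c+1) ≤ β ∧ β ≤ nb (c+1)) :
    (pre na nb (c+1) β).filter (fun T => c+1 ∉ T) = pre na nb c β := by
  ext T
  simp only [Finset.mem_filter, mem_pre]
  constructor
  · rintro ⟨⟨hsub, hcard, hcond⟩, hnm⟩
    have hsub' : T ⊆ Finset.Icc 1 c := by
      intro x hx
      have := hsub hx
      simp only [Finset.mem_Icc] at this ⊢
      have : x ≠ c+1 := fun hh => hnm (hh ▸ hx)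
      omega
    refine ⟨hsub', hcard, ?_⟩
    intro k hk
    simp only [Finset.mem_Icc] at hk
    exact hcond k (by simp [Finset.mem_Icc]; omega)
  · rintro ⟨hsub, hcard, hcond⟩
    have hnm : c+1 ∉ T := by
      intro hx
      have := hsub hx
      simp only [Finset.mem_Icc] at this
      omega
    refine ⟨⟨?_, hcard, ?_⟩, hnm⟩
    · intro x hx
      have := hsub hx
      simp only [Finset.mem_Icc] at this ⊢
      omega
    · intro k hk
      simp only [Finset.mem_Icc] at hk
      rcases Nat.lt_or_ge k (c+1) with hlt | hge
      · exact hcond k (by simp [Finset.mem_Icc]; omega)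
      · have hk1 : k = c+1 := by omega
        subst hk1
        rw [inter_Icc_one_of_subset hsub (by omega), hcard]
        exact hχ

lemma pre_filter_mem_card {c β : ℕ} (hχ : na (c+1) ≤ β + 1 ∧ β + 1 ≤ nb (c+1)) :
    ((pre na nb (c+1) (β+1)).filter (fun T => c+1 ∈ T)).card = (pre na nb c β).card := by
  apply Finset.card_bij (fun T _ => T.erase (c+1))
  · intro T hT
    simp only [Finset.mem_filter, mem_pre] at hT
    obtain ⟨⟨hsub, hcard, hcond⟩, hmem⟩ := hT
    have hnm : c+1 ∉ T.erase (c+1) := Finset.notMem_erase _ _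
    have hkey : ∀ k, k ≤ c → T.erase (c+1) ∩ Finset.Icc 1 k = T ∩ Finset.Icc 1 k := by
      intro k hk
      ext x
      simp only [Finset.mem_inter, Finset.mem_erase, Finset.mem_Icc]
      constructor
      · rintro ⟨⟨hne, hx⟩, h1, h2⟩
        exact ⟨hx, h1, h2⟩
      · rintro ⟨hx, h1, h2⟩
        exact ⟨⟨by omega, hx⟩, h1, h2⟩
    simp only [mem_pre]
    refine ⟨?_, ?_, ?_⟩
    · intro x hx
      simp only [Finset.mem_erase] at hx
      have := hsub hx.2
      simp only [Finset.mem_Icc] at this ⊢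
      have := hx.1
      omega
    · have := Finset.card_erase_of_mem hmem
      omega
    · intro k hk
      simp only [Finset.mem_Icc] at hk
      rw [hkey k (by omega)]
      exact hcond k (by simp [Finset.mem_Icc]; omega)
  · intro T1 h1 T2 h2 heq
    simp only [Finset.mem_filter] at h1 h2
    have e1 : insert (c+1) (T1.erase (c+1)) = T1 := Finset.insert_erase h1.2
    have e2 : insert (c+1) (T2.erase (c+1)) = T2 := Finset.insert_erase h2.2
    rw [← e1, ← e2, heq]
  · intro T hT
    simp only [mem_pre] at hT
    obtain ⟨hsub, hcard, hcond⟩ := hT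
    have hnm : c+1 ∉ T := by
      intro hx
      have := hsub hx
      simp only [Finset.mem_Icc] at this
      omega
    refine ⟨insert (c+1) T, ?_, Finset.erase_insert hnm⟩
    simp only [Finset.mem_filter, mem_pre]
    have hkey : ∀ k, k ≤ c → (insert (c+1) T) ∩ Finset.Icc 1 k = T ∩ Finset.Icc 1 k := by
      intro k hk
      ext x
      simp only [Finset.mem_inter, Finset.mem_insert, Finset.mem_Icc]
      constructor
      · rintro ⟨rfl | hx, h1, h2⟩
        · omega
        · exact ⟨hx, h1, h2⟩
      · rintro ⟨hx, h1, h2⟩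
        exact ⟨Or.inr hx, h1, h2⟩
    refine ⟨⟨?_, ?_, ?_⟩, Finset.mem_insert_self _ _⟩
    · intro x hx
      simp only [Finset.mem_insert] at hx
      rcases hx with rfl | hx
      · simp only [Finset.mem_Icc]; omega
      · have := hsub hx
        simp only [Finset.mem_Icc] at this ⊢
        omega
    · rw [Finset.card_insert_of_notMem hnm, hcard]
    · intro k hk
      simp only [Finset.mem_Icc] at hk
      rcases Nat.lt_or_ge k (c+1) with hlt | hge
      · rw [hkey k (by omega)]
        exact hcond k (by simp [Finset.mem_Icc]; omega)
      · have hk1 : k = c+1 := by omega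
        subst hk1
        have hins : insert (c+1) T ⊆ Finset.Icc 1 (c+1) := by
          intro x hx
          simp only [Finset.mem_insert] at hx
          rcases hx with rfl | hx
          · simp only [Finset.mem_Icc]; omega
          · have := hsub hx
            simp only [Finset.mem_Icc] at this ⊢
            omega
        rw [inter_Icc_one_of_subset hins (le_refl _),
            Finset.card_insert_of_notMem hnm, hcard]
        exact hχ

lemma pre_rec_zero {c : ℕ} :
    (pre na nb (c+1) 0).card =
      if na (c+1) ≤ 0 ∧ (0:ℕ) ≤ nb (c+1) then (pre na nb c 0).card else 0 := by
  by_cases hχ : na (c+1) ≤ 0 ∧ (0:ℕ) ≤ nb (c+1)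
  · rw [if_pos hχ, ← pre_filter_notmem hχ]
    congr 1
    apply (Finset.filter_true_of_mem ?_).symm
    intro T hT
    obtain ⟨hsub, hcard, _⟩ := mem_pre.1 hT
    intro hmem
    have : T = ∅ := Finset.card_eq_zero.1 hcard
    rw [this] at hmem
    simp at hmem
  · rw [if_neg hχ]
    rw [pre_empty_of_not (by omega) hχ]
    simp

lemma pre_rec_succ {c β : ℕ} :
    (pre na nb (c+1) (β+1)).card =
      if na (c+1) ≤ β+1 ∧ β+1 ≤ nb (c+1) then
        (pre na nb c (β+1)).card + (pre na nb c β).card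
      else 0 := by
  by_cases hχ : na (c+1) ≤ β+1 ∧ β+1 ≤ nb (c+1)
  · rw [if_pos hχ]
    have hsplit := Finset.card_filter_add_card_filter_not
      (s := pre na nb (c+1) (β+1)) (p := fun T => c+1 ∈ T)
    have h1 := pre_filter_mem_card (na := na) (nb := nb) hχ
    have h2 := congrArg Finset.card (pre_filter_notmem (na := na) (nb := nb) hχ)
    have h3 : (pre na nb (c+1) (β+1)).filter (fun T => ¬ c+1 ∈ T)
        = (pre na nb (c+1) (β+1)).filter (fun T => c+1 ∉ T) := rfl
    rw [h3] at hsplit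
    omega
  · rw [if_neg hχ]
    rw [pre_empty_of_not (by omega) hχ]
    simp

lemma pre_slc : ∀ c i j, i ≤ j →
    (pre na nb c i).card * (pre na nb c (j+1)).card ≤
      (pre na nb c (i+1)).card * (pre na nb c j).card := by
  intro c
  induction c with
  | zero =>
    intro i j hij
    rw [pre_base, pre_base, pre_base, pre_base]
    split_ifs <;> simp_all
  | succ c ih =>
    intro i j hij
    by_cases heq : i = j
    · subst heq
      exact Nat.le_of_eq (mul_comm _ _)
    have hlt : i < j := lt_of_le_of_ne hij heq
    obtain ⟨j', rfl⟩ : ∃ j', j = j' + 1 := ⟨j - 1, by omega⟩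
    rw [pre_rec_succ (β := j'+1)]
    by_cases hj1 : na (c+1) ≤ j'+1+1 ∧ j'+1+1 ≤ nb (c+1)
    · rw [if_pos hj1]
      rcases i with _ | i'
      · -- i = 0
        rw [pre_rec_zero]
        by_cases hi : na (c+1) ≤ 0 ∧ (0:ℕ) ≤ nb (c+1)
        · rw [if_pos hi]
          have hχ1 : na (c+1) ≤ 0+1 ∧ 0+1 ≤ nb (c+1) := by omega
          have hχj : na (c+1) ≤ j'+1 ∧ j'+1 ≤ nb (c+1) := by omega
          rw [pre_rec_succ (β := 0), if_pos hχ1, pre_rec_succ (β := j'), if_pos hχj]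
          have h1 := ih 0 (j'+1) (by omega)
          nlinarith [h1, Nat.zero_le ((pre na nb c 1).card * (pre na nb c j').card),
            Nat.zero_le ((pre na nb c 0).card * (pre na nb c j').card)]
        · rw [if_neg hi]
          simp
      · -- i = i'+1
        rw [pre_rec_succ (β := i')]
        by_cases hi : na (c+1) ≤ i'+1 ∧ i'+1 ≤ nb (c+1)
        · rw [if_pos hi]
          have hχ1 : na (c+1) ≤ i'+1+1 ∧ i'+1+1 ≤ nb (c+1) := by omega
          have hχj : na (c+1) ≤ j'+1 ∧ j'+1 ≤ nb (c+1) := by omega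
          rw [pre_rec_succ (β := i'+1), if_pos hχ1, pre_rec_succ (β := j'), if_pos hχj]
          have h1 := ih (i'+1) (j'+1) (by omega)
          have h2 := ih i' j' (by omega)
          have h3 := le_trans (ih i' (j'+1) (by omega)) (ih (i'+1) j' (by omega))
          nlinarith [h1, h2, h3]
        · rw [if_neg hi]
          simp
    · rw [if_neg hj1]
      simp


lemma cheby (N : ℕ) (P u1 u0 : ℕ → ℕ) (hPN : P N = 0)
    (hP : ∀ i j, i ≤ j → P i * P (j+1) ≤ P (i+1) * P j)
    (hR : ∀ i j, i ≤ j → u1 j * u0 i ≤ u1 i * u0 j) :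
    (∑ a ∈ Finset.range N, P a * u1 (a+1)) * (∑ a ∈ Finset.range N, P a * u0 a)
      ≤ (∑ a ∈ Finset.range N, P a * u0 (a+1)) * (∑ a ∈ Finset.range N, P a * u1 a) := by
  set M := N + 1 with hM
  let p1 : ℕ → ℤ := fun i => match i with | 0 => 0 | k+1 => (P k : ℤ)
  let Pz : ℕ → ℤ := fun i => (P i : ℤ)
  let v1 : ℕ → ℤ := fun i => (u1 i : ℤ)
  let v0 : ℕ → ℤ := fun i => (u0 i : ℤ)
  let g : ℕ → ℕ → ℤ := fun i j => p1 i * Pz j * (v0 i * v1 j - v1 i * v0 j)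
  have hp1nn : ∀ i, 0 ≤ p1 i := by
    intro i
    cases i with
    | zero => exact le_refl 0
    | succ k => exact Int.ofNat_nonneg _
  have hPznn : ∀ i, 0 ≤ Pz i := fun i => Int.ofNat_nonneg _
  have hfac : ∀ i j, i ≤ j → p1 i * Pz j ≤ p1 j * Pz i := by
    intro i j hij
    cases i with
    | zero =>
      simp only [p1]
      simpa using mul_nonneg (hp1nn j) (hPznn 0)
    | succ k =>
      obtain ⟨l, rfl⟩ : ∃ l, j = l + 1 := ⟨j - 1, by omega⟩
      have h := hP k l (by omega)
      have h' : (P k : ℤ) * P (l+1) ≤ (P (k+1) : ℤ) * P l := by exact_mod_cast h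
      simp only [p1, Pz]
      linarith
  have hu : ∀ i j, i ≤ j → v1 j * v0 i ≤ v1 i * v0 j := by
    intro i j hij
    have := hR i j hij
    simp only [v1, v0]
    exact_mod_cast this
  have key : ∀ i j, 0 ≤ g i j + g j i := by
    intro i j
    have hid : g i j + g j i = (p1 i * Pz j - p1 j * Pz i) * (v0 i * v1 j - v1 i * v0 j) := by
      simp only [g]
      ring
    rw [hid]
    rcases le_total i j with h | h
    · have h1 : p1 i * Pz j - p1 j * Pz i ≤ 0 := sub_nonpos.2 (hfac i j h)
      have h2 : v0 i * v1 j - v1 i * v0 j ≤ 0 := by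
        have := hu i j h
        nlinarith [this]
      nlinarith [h1, h2]
    · have h1 : 0 ≤ p1 i * Pz j - p1 j * Pz i := sub_nonneg.2 (hfac j i h)
      have h2 : 0 ≤ v0 i * v1 j - v1 i * v0 j := by
        have := hu j i h
        nlinarith [this]
      nlinarith [h1, h2]
  have hsumnn : 0 ≤ ∑ i ∈ Finset.range M, ∑ j ∈ Finset.range M, g i j := by
    have h2 : ∑ i ∈ Finset.range M, ∑ j ∈ Finset.range M, (g i j + g j i)
        = (∑ i ∈ Finset.range M, ∑ j ∈ Finset.range M, g i j)
          + ∑ i ∈ Finset.range M, ∑ j ∈ Finset.range M, g j i := by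
      rw [← Finset.sum_add_distrib]
      apply Finset.sum_congr rfl
      intro i _
      rw [← Finset.sum_add_distrib]
    have h3 : (∑ i ∈ Finset.range M, ∑ j ∈ Finset.range M, g j i)
        = ∑ i ∈ Finset.range M, ∑ j ∈ Finset.range M, g i j := Finset.sum_comm
    have h4 : 0 ≤ ∑ i ∈ Finset.range M, ∑ j ∈ Finset.range M, (g i j + g j i) :=
      Finset.sum_nonneg fun i _ => Finset.sum_nonneg fun j _ => key i j
    rw [h2, h3] at h4
    linarith
  have hexpand : ∑ i ∈ Finset.range M, ∑ j ∈ Finset.range M, g i j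
      = (∑ i ∈ Finset.range M, p1 i * v0 i) * (∑ j ∈ Finset.range M, Pz j * v1 j)
        - (∑ i ∈ Finset.range M, p1 i * v1 i) * (∑ j ∈ Finset.range M, Pz j * v0 j) := by
    rw [Finset.sum_mul_sum, Finset.sum_mul_sum, ← Finset.sum_sub_distrib]
    apply Finset.sum_congr rfl
    intro i _
    rw [← Finset.sum_sub_distrib]
    apply Finset.sum_congr rfl
    intro j _
    simp only [g]
    ring
  have hre1 : (∑ i ∈ Finset.range M, p1 i * v1 i) = ((∑ a ∈ Finset.range N, P a * u1 (a+1) : ℕ) : ℤ) := by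
    rw [hM, Finset.sum_range_succ']
    push_cast
    simp only [p1, v1]
    simp
  have hre0 : (∑ i ∈ Finset.range M, p1 i * v0 i) = ((∑ a ∈ Finset.range N, P a * u0 (a+1) : ℕ) : ℤ) := by
    rw [hM, Finset.sum_range_succ']
    push_cast
    simp only [p1, v0]
    simp
  have hrePv1 : (∑ j ∈ Finset.range M, Pz j * v1 j) = ((∑ a ∈ Finset.range N, P a * u1 a : ℕ) : ℤ) := by
    rw [hM, Finset.sum_range_succ]
    push_cast
    simp only [Pz, v1, hPN]
    simp
  have hrePv0 : (∑ j ∈ Finset.range M, Pz j * v0 j) = ((∑ a ∈ Finset.range N, P a * u0 a : ℕ) : ℤ) := by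
    rw [hM, Finset.sum_range_succ]
    push_cast
    simp only [Pz, v0, hPN]
    simp
  rw [hexpand, hre1, hre0, hrePv1, hrePv0] at hsumnn
  have := sub_nonneg.1 hsumnn
  exact_mod_cast this


noncomputable def genFam (m r : ℕ) (na nb : ℕ → ℕ) : Finset (Finset ℕ) :=
  (Finset.Icc 1 m).powerset.filter fun S =>
    S.card = r ∧ ∀ k ∈ Finset.Icc 1 m,
      na k ≤ (S ∩ Finset.Icc 1 k).card ∧ (S ∩ Finset.Icc 1 k).card ≤ nb k

lemma mem_genFam {S : Finset ℕ} :
    S ∈ genFam m r na nb ↔ S ⊆ Finset.Icc 1 m ∧ S.card = r ∧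
      ∀ k ∈ Finset.Icc 1 m,
        na k ≤ (S ∩ Finset.Icc 1 k).card ∧ (S ∩ Finset.Icc 1 k).card ≤ nb k := by
  simp [genFam]

lemma card_inter_Icc_split {S : Finset ℕ} {x k : ℕ} (hx : 1 ≤ x) (hxk : x ≤ k) :
    (S ∩ Finset.Icc 1 k).card =
      (S ∩ Finset.Icc 1 (x-1)).card + (if x ∈ S then 1 else 0) + (S ∩ Finset.Icc (x+1) k).card := by
  have hdecomp : S ∩ Finset.Icc 1 k
      = (S ∩ Finset.Icc 1 (x-1)) ∪ ((S ∩ Finset.Icc x x) ∪ (S ∩ Finset.Icc (x+1) k)) := by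
    ext y
    by_cases hy : y ∈ S <;>
      simp only [Finset.mem_inter, Finset.mem_union, Finset.mem_Icc, hy, true_and, false_and,
        or_self, false_or] <;> omega
  have d2 : Disjoint (S ∩ Finset.Icc x x) (S ∩ Finset.Icc (x+1) k) := by
    rw [Finset.disjoint_left]
    intro y hy1 hy2
    simp only [Finset.mem_inter, Finset.mem_Icc] at hy1 hy2
    omega
  have d1 : Disjoint (S ∩ Finset.Icc 1 (x-1)) ((S ∩ Finset.Icc x x) ∪ (S ∩ Finset.Icc (x+1) k)) := by
    rw [Finset.disjoint_left]
    intro y hy1 hy2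
    simp only [Finset.mem_inter, Finset.mem_union, Finset.mem_Icc] at hy1 hy2
    omega
  have hxx : (S ∩ Finset.Icc x x).card = if x ∈ S then 1 else 0 := by
    rw [Finset.Icc_self]
    by_cases hxS : x ∈ S
    · rw [if_pos hxS]
      rw [Finset.inter_eq_right.2 (Finset.singleton_subset_iff.2 hxS)]
      simp
    · rw [if_neg hxS]
      rw [show S ∩ {x} = ∅ from ?_]
      · simp
      · apply Finset.eq_empty_of_forall_notMem
        intro y hy
        simp only [Finset.mem_inter, Finset.mem_singleton] at hy
        exact hxS (hy.2 ▸ hy.1)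
  rw [hdecomp, Finset.card_union_of_disjoint d1, Finset.card_union_of_disjoint d2, hxx]
  ring

lemma decomp {e f : ℕ} (εe εf : Bool) (he : 1 ≤ e) (hef : e < f) (hfm : f ≤ m) :
    ((genFam m r na nb).filter
        (fun S => (e ∈ S ↔ εe = true) ∧ (f ∈ S ↔ εf = true))).card
      = ∑ a ∈ Finset.range (r+1),
          (pre na nb (e-1) a).card *
            ucnt m r na nb f εf e (a + (if εe = true then 1 else 0)) := by
  set δ : ℕ := if εe = true then 1 else 0 with hδ
  have hem : e ≤ m := by omega
  rw [Finset.card_eq_sum_card_fiberwise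
    (f := fun S => (S ∩ Finset.Icc 1 (e-1)).card) (t := Finset.range (r+1)) ?_]
  swap
  · intro S hS
    simp only [Finset.mem_coe, Finset.mem_filter] at hS
    obtain ⟨hS1, _⟩ := hS
    obtain ⟨hsub, hcard, _⟩ := mem_genFam.1 hS1
    simp only [Finset.mem_coe, Finset.mem_range]
    have : (S ∩ Finset.Icc 1 (e-1)).card ≤ S.card :=
      Finset.card_le_card (Finset.inter_subset_left)
    omega
  apply Finset.sum_congr rfl
  intro a _
  rw [ucnt, ← Finset.card_product]
  apply Finset.card_bij
    (fun S _ => (S ∩ Finset.Icc 1 (e-1), S ∩ Finset.Icc (e+1) m))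
  · -- maps into target
    intro S hS
    simp only [Finset.mem_filter] at hS
    obtain ⟨⟨hS1, hSe, hSf⟩, hfib⟩ := hS
    obtain ⟨hsub, hcard, hcond⟩ := mem_genFam.1 hS1
    have hdelta : (if e ∈ S then 1 else 0) = δ := by
      rw [hδ]
      by_cases hcase : e ∈ S
      · rw [if_pos hcase, if_pos (hSe.1 hcase)]
      · rw [if_neg hcase, if_neg (fun hh => hcase (hSe.2 hh))]
    have hsmall : ∀ k, k ≤ e-1 → S ∩ Finset.Icc 1 k = (S ∩ Finset.Icc 1 (e-1)) ∩ Finset.Icc 1 k := by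
      intro k hk
      ext y
      simp only [Finset.mem_inter, Finset.mem_Icc]
      constructor
      · rintro ⟨hy, h1, h2⟩
        exact ⟨⟨hy, h1, by omega⟩, h1, h2⟩
      · rintro ⟨⟨hy, _, _⟩, h1, h2⟩
        exact ⟨hy, h1, h2⟩
    have hsuffix : ∀ k, k ≤ m → S ∩ Finset.Icc (e+1) k = (S ∩ Finset.Icc (e+1) m) ∩ Finset.Icc (e+1) k := by
      intro k hk
      ext y
      simp only [Finset.mem_inter, Finset.mem_Icc]
      constructor
      · rintro ⟨hy, h1, h2⟩
        exact ⟨⟨hy, h1, by omega⟩, h1, h2⟩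
      · rintro ⟨⟨hy, _, _⟩, h1, h2⟩
        exact ⟨hy, h1, h2⟩
    have hsplit : ∀ k, e ≤ k → k ≤ m → (S ∩ Finset.Icc 1 k).card
        = a + δ + ((S ∩ Finset.Icc (e+1) m) ∩ Finset.Icc (e+1) k).card := by
      intro k hk1 hk2
      rw [card_inter_Icc_split (S := S) (x := e) he hk1, ← hsuffix k hk2, hdelta, hfib]
    simp only [Finset.mem_product, Finset.mem_filter, mem_pre, mem_suf]
    refine ⟨⟨Finset.inter_subset_right, hfib, ?_⟩, ⟨⟨Finset.inter_subset_right, ?_, ?_, ?_⟩, ?_⟩⟩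
    · -- prefix conditions
      intro k hk
      simp only [Finset.mem_Icc] at hk
      rw [← hsmall k (by omega)]
      exact hcond k (by simp only [Finset.mem_Icc]; omega)
    · -- cardinality
      have h1 := hsplit m hem (le_refl m)
      rw [Finset.inter_eq_left.2 hsub] at h1
      have h2 : (S ∩ Finset.Icc (e+1) m) ∩ Finset.Icc (e+1) m = S ∩ Finset.Icc (e+1) m :=
        Finset.inter_eq_left.2 (Finset.inter_subset_right)
      rw [h2] at h1
      omega
    · -- χ at e
      have h1 := hsplit e (le_refl e) hem
      have h2 : (S ∩ Finset.Icc (e+1) m) ∩ Finset.Icc (e+1) e = ∅ := by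
        apply Finset.eq_empty_of_forall_notMem
        intro y hy
        simp only [Finset.mem_inter, Finset.mem_Icc] at hy
        omega
      rw [h2] at h1
      simp only [Finset.card_empty, Nat.add_zero] at h1
      have := hcond e (by simp only [Finset.mem_Icc]; omega)
      rw [h1] at this
      exact this
    · -- path conditions
      intro k hk
      simp only [Finset.mem_Icc] at hk
      have h1 := hsplit k (by omega) (by omega)
      have := hcond k (by simp only [Finset.mem_Icc]; omega)
      rw [h1] at this
      exact this
    · -- f membership
      have hfT : f ∈ S ∩ Finset.Icc (e+1) m ↔ f ∈ S := by
        simp only [Finset.mem_inter, Finset.mem_Icc]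
        constructor
        · exact fun h => h.1
        · exact fun h => ⟨h, by omega, hfm⟩
      rw [hfT]
      exact hSf
  · -- injectivity
    intro S1 hS1 S2 hS2 heq
    simp only [Finset.mem_filter] at hS1 hS2
    obtain ⟨⟨hm1, he1, hf1⟩, _⟩ := hS1
    obtain ⟨⟨hm2, he2, hf2⟩, _⟩ := hS2
    obtain ⟨hsub1, _, _⟩ := mem_genFam.1 hm1
    obtain ⟨hsub2, _, _⟩ := mem_genFam.1 hm2
    have hq1 := congrArg Prod.fst heq
    have hq2 := congrArg Prod.snd heq
    simp only at hq1 hq2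
    ext y
    constructor
    · intro hy
      have hyr := hsub1 hy
      simp only [Finset.mem_Icc] at hyr
      rcases Nat.lt_trichotomy y e with hlt | rfl | hgt
      · have : y ∈ S1 ∩ Finset.Icc 1 (e-1) := by
          simp only [Finset.mem_inter, Finset.mem_Icc]
          exact ⟨hy, by omega, by omega⟩
        rw [hq1] at this
        exact (Finset.mem_inter.1 this).1
      · exact he2.2 (he1.1 hy)
      · have : y ∈ S1 ∩ Finset.Icc (e+1) m := by
          simp only [Finset.mem_inter, Finset.mem_Icc]
          exact ⟨hy, by omega, by omega⟩
        rw [hq2] at this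
        exact (Finset.mem_inter.1 this).1
    · intro hy
      have hyr := hsub2 hy
      simp only [Finset.mem_Icc] at hyr
      rcases Nat.lt_trichotomy y e with hlt | rfl | hgt
      · have : y ∈ S2 ∩ Finset.Icc 1 (e-1) := by
          simp only [Finset.mem_inter, Finset.mem_Icc]
          exact ⟨hy, by omega, by omega⟩
        rw [← hq1] at this
        exact (Finset.mem_inter.1 this).1
      · exact he1.2 (he2.1 hy)
      · have : y ∈ S2 ∩ Finset.Icc (e+1) m := by
          simp only [Finset.mem_inter, Finset.mem_Icc]
          exact ⟨hy, by omega, by omega⟩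
        rw [← hq2] at this
        exact (Finset.mem_inter.1 this).1
  · -- surjectivity
    rintro ⟨T1, T2⟩ hT
    simp only [Finset.mem_product, Finset.mem_filter, mem_pre, mem_suf] at hT
    obtain ⟨⟨hT1sub, hT1card, hT1cond⟩, ⟨⟨hT2sub, hT2card, hχ, hT2cond⟩, hT2f⟩⟩ := hT
    have hT1r : ∀ y ∈ T1, 1 ≤ y ∧ y ≤ e-1 := by
      intro y hy
      have := hT1sub hy
      simpa only [Finset.mem_Icc] using this
    have hT2r : ∀ y ∈ T2, e+1 ≤ y ∧ y ≤ m := by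
      intro y hy
      have := hT2sub hy
      simpa only [Finset.mem_Icc] using this
    set E : Finset ℕ := if εe = true then {e} else ∅ with hE
    have hEr : ∀ y ∈ E, y = e := by
      intro y hy
      rw [hE] at hy
      by_cases hb : εe = true
      · rw [if_pos hb] at hy
        simpa using hy
      · rw [if_neg hb] at hy
        simp at hy
    have hEcard : E.card = δ := by
      rw [hE, hδ]
      by_cases hb : εe = true
      · rw [if_pos hb, if_pos hb]
        simp
      · rw [if_neg hb, if_neg hb]
        simp
    have hEmem : e ∈ E ↔ εe = true := by
      rw [hE]
      by_cases hb : εe = true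
      · rw [if_pos hb]
        simp [hb]
      · rw [if_neg hb]
        simp [hb]
    refine ⟨T1 ∪ E ∪ T2, ?_, ?_⟩
    · -- membership in source
      have hmemS : ∀ y, y ∈ T1 ∪ E ∪ T2 ↔ (y ∈ T1 ∨ y ∈ E ∨ y ∈ T2) := by
        intro y
        simp only [Finset.mem_union]
        tauto
      have hinter_small : ∀ k, k ≤ e-1 → (T1 ∪ E ∪ T2) ∩ Finset.Icc 1 k = T1 ∩ Finset.Icc 1 k := by
        intro k hk
        ext y
        simp only [Finset.mem_inter, Finset.mem_union, Finset.mem_Icc]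
        constructor
        · rintro ⟨hy, h1, h2⟩
          rcases hy with (hy | hy) | hy
          · exact ⟨hy, h1, h2⟩
          · have := hEr y hy
            omega
          · have := hT2r y hy
            omega
        · rintro ⟨hy, h1, h2⟩
          exact ⟨Or.inl (Or.inl hy), h1, h2⟩
      have hinter_suf : ∀ k, (T1 ∪ E ∪ T2) ∩ Finset.Icc (e+1) k = T2 ∩ Finset.Icc (e+1) k := by
        intro k
        ext y
        simp only [Finset.mem_inter, Finset.mem_union, Finset.mem_Icc]
        constructor
        · rintro ⟨hy, h1, h2⟩
          rcases hy with (hy | hy) | hy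
          · have := hT1r y hy
            omega
          · have := hEr y hy
            omega
          · exact ⟨hy, h1, h2⟩
        · rintro ⟨hy, h1, h2⟩
          exact ⟨Or.inr hy, h1, h2⟩
      have hT1_full : T1 ∩ Finset.Icc 1 (e-1) = T1 := by
        apply Finset.inter_eq_left.2
        exact hT1sub
      have hT2_full : T2 ∩ Finset.Icc (e+1) m = T2 := by
        apply Finset.inter_eq_left.2
        exact hT2sub
      have heS : e ∈ T1 ∪ E ∪ T2 ↔ εe = true := by
        rw [hmemS]
        constructor
        · rintro (hy | hy | hy)
          · have := hT1r e hy
            omega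
          · exact hEmem.1 hy
          · have := hT2r e hy
            omega
        · intro hb
          exact Or.inr (Or.inl (hEmem.2 hb))
      have hsplitS : ∀ k, e ≤ k → k ≤ m → ((T1 ∪ E ∪ T2) ∩ Finset.Icc 1 k).card
          = a + δ + (T2 ∩ Finset.Icc (e+1) k).card := by
        intro k hk1 hk2
        rw [card_inter_Icc_split (S := T1 ∪ E ∪ T2) (x := e) he hk1]
        rw [hinter_small (e-1) (le_refl _), hT1_full, hT1card, hinter_suf k]
        congr 1
        by_cases hb : εe = true
        · rw [if_pos (heS.2 hb), hδ, if_pos hb]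
        · rw [hδ, if_neg hb, if_neg (fun hh => hb (heS.1 hh))]
      have hScard : (T1 ∪ E ∪ T2).card = r := by
        have h1 := hsplitS m hem (le_refl m)
        have hSsub : T1 ∪ E ∪ T2 ⊆ Finset.Icc 1 m := by
          intro y hy
          rw [hmemS] at hy
          simp only [Finset.mem_Icc]
          rcases hy with hy | hy | hy
          · have := hT1r y hy
            omega
          · have := hEr y hy
            omega
          · have := hT2r y hy
            omega
        rw [Finset.inter_eq_left.2 hSsub, hT2_full] at h1
        omega
      simp only [Finset.mem_filter]
      refine ⟨⟨?_, ?_, ?_⟩, ?_⟩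
      · -- genFam membership
        rw [mem_genFam]
        refine ⟨?_, hScard, ?_⟩
        · intro y hy
          rw [hmemS] at hy
          simp only [Finset.mem_Icc]
          rcases hy with hy | hy | hy
          · have := hT1r y hy
            omega
          · have := hEr y hy
            omega
          · have := hT2r y hy
            omega
        · intro k hk
          simp only [Finset.mem_Icc] at hk
          rcases Nat.lt_or_ge k e with hlt | hge
          · rw [hinter_small k (by omega)]
            exact hT1cond k (by simp only [Finset.mem_Icc]; omega)
          · rcases Nat.eq_or_lt_of_le hge with heq | hgt
            · subst heq
              have h1 := hsplitS e (le_refl _) (by omega)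
              have h2 : T2 ∩ Finset.Icc (e+1) e = ∅ := by
                apply Finset.eq_empty_of_forall_notMem
                intro y hy
                simp only [Finset.mem_inter, Finset.mem_Icc] at hy
                omega
              rw [h2] at h1
              simp only [Finset.card_empty, Nat.add_zero] at h1
              rw [h1]
              exact hχ
            · have h1 := hsplitS k (by omega) (by omega)
              rw [h1]
              exact hT2cond k (by simp only [Finset.mem_Icc]; omega)
      · -- e-membership class
        exact heS
      · -- f-membership class
        have : f ∈ T1 ∪ E ∪ T2 ↔ f ∈ T2 := by
          rw [hmemS]
          constructor
          · rintro (hy | hy | hy)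
            · have := hT1r f hy
              omega
            · have := hEr f hy
              omega
            · exact hy
          · exact fun hy => Or.inr (Or.inr hy)
        rw [this]
        exact hT2f
      · -- fiber
        rw [hinter_small (e-1) (le_refl _), hT1_full]
        exact hT1card
    · -- image equals (T1, T2)
      have h1 : (T1 ∪ E ∪ T2) ∩ Finset.Icc 1 (e-1) = T1 := by
        ext y
        simp only [Finset.mem_inter, Finset.mem_union, Finset.mem_Icc]
        constructor
        · rintro ⟨(hy | hy) | hy, hr1, hr2⟩
          · exact hy
          · have := hEr y hy
            omega
          · have := hT2r y hy
            omega
        · intro hy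
          have := hT1r y hy
          exact ⟨Or.inl (Or.inl hy), by omega, by omega⟩
      have h2 : (T1 ∪ E ∪ T2) ∩ Finset.Icc (e+1) m = T2 := by
        ext y
        simp only [Finset.mem_inter, Finset.mem_union, Finset.mem_Icc]
        constructor
        · rintro ⟨(hy | hy) | hy, hr1, hr2⟩
          · have := hT1r y hy
            omega
          · have := hEr y hy
            omega
          · exact hy
        · intro hy
          have := hT2r y hy
          exact ⟨Or.inr hy, by omega, by omega⟩
      rw [h1, h2]


end LPMtest

open LPMtest in
theorem latticeFamily_aux
    (m r : ℕ) (A B : Finset ℕ) (hBcard : B.card = r)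
    (e f : ℕ) (he1 : 1 ≤ e) (hef : e < f) (hfm : f ≤ m) :
    ((latticeFamily m r A B).filter (fun S => e ∈ S ∧ f ∈ S)).card *
      ((latticeFamily m r A B).filter (fun S => e ∉ S ∧ f ∉ S)).card ≤
    ((latticeFamily m r A B).filter (fun S => e ∈ S ∧ f ∉ S)).card *
      ((latticeFamily m r A B).filter (fun S => f ∈ S ∧ e ∉ S)).card := by
  classical
  set na : ℕ → ℕ := fun k => (A ∩ Finset.Icc 1 k).card with hna
  set nb : ℕ → ℕ := fun k => (B ∩ Finset.Icc 1 k).card with hnb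
  have hgen : latticeFamily m r A B = genFam m r na nb := rfl
  have hcls : ∀ (εe εf : Bool),
      ((genFam m r na nb).filter
        (fun S => (e ∈ S ↔ εe = true) ∧ (f ∈ S ↔ εf = true))).card
      = ∑ a ∈ Finset.range (r+1),
          (pre na nb (e-1) a).card *
            ucnt m r na nb f εf e (a + (if εe = true then 1 else 0)) := by
    intro εe εf
    exact decomp εe εf he1 hef hfm
  have e11 : ((latticeFamily m r A B).filter (fun S => e ∈ S ∧ f ∈ S)).card
      = ∑ a ∈ Finset.range (r+1),
          (pre na nb (e-1) a).card * ucnt m r na nb f true e (a + 1) := by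
    rw [hgen]
    have h1 : ((genFam m r na nb).filter (fun S => e ∈ S ∧ f ∈ S))
        = ((genFam m r na nb).filter
            (fun S => (e ∈ S ↔ (true : Bool) = true) ∧ (f ∈ S ↔ (true : Bool) = true))) := by
      ext S
      simp only [Finset.mem_filter]
      tauto
    rw [h1, hcls true true]
    simp
  have e00 : ((latticeFamily m r A B).filter (fun S => e ∉ S ∧ f ∉ S)).card
      = ∑ a ∈ Finset.range (r+1),
          (pre na nb (e-1) a).card * ucnt m r na nb f false e a := by
    rw [hgen]
    have h1 : ((genFam m r na nb).filter (fun S => e ∉ S ∧ f ∉ S))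
        = ((genFam m r na nb).filter
            (fun S => (e ∈ S ↔ (false : Bool) = true) ∧ (f ∈ S ↔ (false : Bool) = true))) := by
      ext S
      simp only [Finset.mem_filter]
      constructor
      · rintro ⟨hS, h2, h3⟩
        refine ⟨hS, ?_, ?_⟩ <;> simp [h2, h3]
      · rintro ⟨hS, h2, h3⟩
        simp only [Bool.false_eq_true, iff_false] at h2 h3
        exact ⟨hS, h2, h3⟩
    rw [h1, hcls false false]
    simp
  have e10 : ((latticeFamily m r A B).filter (fun S => e ∈ S ∧ f ∉ S)).card
      = ∑ a ∈ Finset.range (r+1),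
          (pre na nb (e-1) a).card * ucnt m r na nb f false e (a + 1) := by
    rw [hgen]
    have h1 : ((genFam m r na nb).filter (fun S => e ∈ S ∧ f ∉ S))
        = ((genFam m r na nb).filter
            (fun S => (e ∈ S ↔ (true : Bool) = true) ∧ (f ∈ S ↔ (false : Bool) = true))) := by
      ext S
      simp only [Finset.mem_filter]
      constructor
      · rintro ⟨hS, h2, h3⟩
        refine ⟨hS, ?_, ?_⟩ <;> simp [h2, h3]
      · rintro ⟨hS, h2, h3⟩
        simp only [Bool.false_eq_true, iff_false] at h3
        simp only [iff_true] at h2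
        exact ⟨hS, h2, h3⟩
    rw [h1, hcls true false]
    simp
  have e01 : ((latticeFamily m r A B).filter (fun S => f ∈ S ∧ e ∉ S)).card
      = ∑ a ∈ Finset.range (r+1),
          (pre na nb (e-1) a).card * ucnt m r na nb f true e a := by
    rw [hgen]
    have h1 : ((genFam m r na nb).filter (fun S => f ∈ S ∧ e ∉ S))
        = ((genFam m r na nb).filter
            (fun S => (e ∈ S ↔ (false : Bool) = true) ∧ (f ∈ S ↔ (true : Bool) = true))) := by
      ext S
      simp only [Finset.mem_filter]
      constructor
      · rintro ⟨hS, h2, h3⟩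
        refine ⟨hS, ?_, ?_⟩ <;> simp [h2, h3]
      · rintro ⟨hS, h2, h3⟩
        simp only [Bool.false_eq_true, iff_false] at h2
        simp only [iff_true] at h3
        exact ⟨hS, h3, h2⟩
    rw [h1, hcls false true]
    simp
  rw [e11, e00, e10, e01]
  apply cheby (r+1) (fun a => (pre na nb (e-1) a).card)
    (fun γ => ucnt m r na nb f true e γ) (fun γ => ucnt m r na nb f false e γ)
  · -- P (r+1) = 0
    rcases Nat.eq_zero_or_pos (e-1) with h0 | hpos
    · rw [h0, pre_base]
      simp
    · rw [pre_empty_of_not hpos ?_]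
      · simp
      · rintro ⟨_, hle⟩
        have hble : nb (e-1) ≤ r := by
          rw [hnb]
          calc (B ∩ Finset.Icc 1 (e-1)).card ≤ B.card :=
              Finset.card_le_card Finset.inter_subset_left
          _ = r := hBcard
        omega
  · intro i j hij
    exact pre_slc (e-1) i j hij
  · intro i j hij
    exact ucnt_R (by omega) (by omega) hij


/-- For a lattice path matroid, `|L_{ef}| · |L^{ef}| ≤ |L_e^f| · |L_f^e|`. -/
theorem latticeFamily_four_point_inequality
    (m r : ℕ) (hm : 1 ≤ m) (hr : r ≤ m)
    (A B : Finset ℕ) (hA : A ⊆ Finset.Icc 1 m) (hB : B ⊆ Finset.Icc 1 m)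
    (hAcard : A.card = r) (hBcard : B.card = r)
    (hAB : ∀ k ∈ Finset.Icc 1 m,
      (A ∩ Finset.Icc 1 k).card ≤ (B ∩ Finset.Icc 1 k).card)
    (e f : ℕ) (he : e ∈ Finset.Icc 1 m) (hf : f ∈ Finset.Icc 1 m) (hef : e ≠ f) :
    ((latticeFamily m r A B).filter (fun S => e ∈ S ∧ f ∈ S)).card *
      ((latticeFamily m r A B).filter (fun S => e ∉ S ∧ f ∉ S)).card ≤
    ((latticeFamily m r A B).filter (fun S => e ∈ S ∧ f ∉ S)).card *
      ((latticeFamily m r A B).filter (fun S => f ∈ S ∧ e ∉ S)).card := by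
  obtain ⟨he1, hem⟩ := Finset.mem_Icc.1 he
  obtain ⟨hf1, hfm⟩ := Finset.mem_Icc.1 hf
  rcases Nat.lt_or_ge e f with hlt | hge
  · exact latticeFamily_aux m r A B hBcard e f he1 hlt hfm
  · have hlt : f < e := by omega
    have h := latticeFamily_aux m r A B hBcard f e hf1 hlt hem
    have h1 : (latticeFamily m r A B).filter (fun S => f ∈ S ∧ e ∈ S)
        = (latticeFamily m r A B).filter (fun S => e ∈ S ∧ f ∈ S) := by
      ext S
      simp only [Finset.mem_filter]
      tauto
    have h2 : (latticeFamily m r A B).filter (fun S => f ∉ S ∧ e ∉ S)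
        = (latticeFamily m r A B).filter (fun S => e ∉ S ∧ f ∉ S) := by
      ext S
      simp only [Finset.mem_filter]
      tauto
    rw [h1, h2] at h
    exact h.trans (Nat.le_of_eq (mul_comm _ _))
end

section
/- Lattice path matroids are balanced: for every lattice path family L = L[S_A, S_B] on ground set {1,…,m}, every pair of disjoint subsets I, J ⊆ {1,…,m}, and every pair of distinct elements e, f ∈ {1,…,m} \ (I ∪ J), the subfamily L' = {S ∈ L : I ⊆ S and S ∩ J = ∅} (the bases of the minor of L[A,B] obtained by contracting I and deleting J) satisfies |L'_{ef}| · |L'^{ef}| ≤ |L'_e^f| · |L'_f^e|, and equivalently |L'_e| · |L'_f| ≥ |L'| · |L'_{ef}|. -/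
open scoped Classical

open Finset

namespace LPM

/-- window indicator at position `k` for height `z`. -/
noncomputable def chi (lo hi : ℕ → ℕ) (k : ℕ) (z : ℤ) : ℕ :=
  if (lo k : ℤ) ≤ z ∧ z ≤ (hi k : ℤ) then 1 else 0

/-- number of feasible prefixes on `[1,K]` with `z` elements. -/
noncomputable def cnt (lo hi : ℕ → ℕ) (I J : Finset ℕ) (K : ℕ) (z : ℤ) : ℕ :=
  (((Finset.Icc 1 K).powerset).filter (fun U =>
    (U.card : ℤ) = z ∧
    (∀ k ∈ Finset.Icc 1 K, lo k ≤ (U ∩ Finset.Icc 1 k).card ∧ (U ∩ Finset.Icc 1 k).card ≤ hi k) ∧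
    I ∩ Finset.Icc 1 K ⊆ U ∧ Disjoint U J)).card

/-- number of feasible suffixes on `[K,m]` starting from height `z`. -/
noncomputable def sfx (m r : ℕ) (lo hi : ℕ → ℕ) (I J : Finset ℕ) (K : ℕ) (z : ℤ) : ℕ :=
  (((Finset.Icc K m).powerset).filter (fun V =>
    (V.card : ℤ) = (r : ℤ) - z ∧
    (∀ k ∈ Finset.Icc K m, (lo k : ℤ) ≤ z + ((V ∩ Finset.Icc K k).card : ℤ) ∧
        z + ((V ∩ Finset.Icc K k).card : ℤ) ≤ (hi k : ℤ)) ∧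
    I ∩ Finset.Icc K m ⊆ V ∧ Disjoint V J)).card

/-- PF2 (log concavity with interval support) -/
def PF2 (p : ℤ → ℕ) : Prop := ∀ z z' : ℤ, z ≤ z' → p (z-1) * p z' ≤ p z * p (z'-1)

/-- monotone-ratio condition for a pair -/
def Cpair (F G : ℤ → ℕ) : Prop := ∀ z z' : ℤ, z ≤ z' → F z * G z' ≤ F z' * G z

lemma pf2_delta (c : ℤ) : PF2 (fun z => if z = c then 1 else 0) := by
  intro z z' h
  by_cases h1 : z - 1 = c <;> by_cases h2 : z' = c <;> simp [h1, h2] <;> omega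

lemma chi_interval {lo hi : ℕ → ℕ} {k : ℕ} {w x y : ℤ} (hwx : w ≤ x) (hxy : x ≤ y)
    (hw : chi lo hi k w = 1) (hy : chi lo hi k y = 1) : chi lo hi k x = 1 := by
  unfold chi at *
  by_cases hW : (lo k : ℤ) ≤ w ∧ w ≤ (hi k : ℤ)
  · by_cases hY : (lo k : ℤ) ≤ y ∧ y ≤ (hi k : ℤ)
    · have hX : (lo k : ℤ) ≤ x ∧ x ≤ (hi k : ℤ) := ⟨hW.1.trans hwx, hxy.trans hY.2⟩
      simp [hX]
    · simp [hY] at hy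
  · simp [hW] at hw

lemma chi_le_one (lo hi : ℕ → ℕ) (k : ℕ) (z : ℤ) : chi lo hi k z ≤ 1 := by
  unfold chi; split <;> simp

end LPM

namespace LPM2
open LPM

lemma pf2_congr {p q : ℤ → ℕ} (h : ∀ z, p z = q z) (hp : PF2 p) : PF2 q := by
  intro z z' hzz'
  rw [← h, ← h, ← h, ← h]; exact hp z z' hzz'

lemma pf2_shift {p : ℤ → ℕ} (hp : PF2 p) : PF2 (fun z => p (z+1)) := by
  intro z z' hzz'
  have := hp (z+1) (z'+1) (by omega)
  have e1 : z + 1 - 1 = z := by ring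
  have e2 : z' + 1 - 1 = z' := by ring
  rw [e1, e2] at this
  simpa [show z - 1 + 1 = z by ring, show z' - 1 + 1 = z' by ring] using this

lemma pf2_mul_chi (lo hi : ℕ → ℕ) (k : ℕ) {p : ℤ → ℕ} (hp : PF2 p) :
    PF2 (fun z => chi lo hi k z * p z) := by
  intro z z' hzz'
  dsimp only
  by_cases hw1 : chi lo hi k (z-1) = 1
  · by_cases hw2 : chi lo hi k z' = 1
    · have hwz : chi lo hi k z = 1 := chi_interval (by omega) hzz' hw1 hw2
      have hwz' : chi lo hi k (z'-1) = 1 := chi_interval (show z-1 ≤ z'-1 by omega) (by omega) hw1 hw2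
      rw [hw1, hwz, hwz', hw2]
      simpa using hp z z' hzz'
    · have h0 : chi lo hi k z' = 0 := by have := chi_le_one lo hi k z'; omega
      rw [h0]; simp
  · have h0 : chi lo hi k (z-1) = 0 := by have := chi_le_one lo hi k (z-1); omega
    rw [h0]; simp

lemma pf2_affine (α β : ℕ) {p : ℤ → ℕ} (hp : PF2 p) :
    PF2 (fun z => α * p z + β * p (z-1)) := by
  intro z z' hzz'
  dsimp only
  have e1 : z - 1 - 1 = z - 2 := by ring
  have e2 : z' - 1 - 1 = z' - 2 := by ring
  have h1 : p (z-1) * p z' ≤ p z * p (z'-1) := hp z z' hzz'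
  have h2 : p (z-2) * p (z'-1) ≤ p (z-1) * p (z'-2) := by
    have := hp (z-1) (z'-1) (by omega); rwa [e1, e2] at this
  have h3 : p (z-2) * p z' ≤ p z * p (z'-2) := by
    rcases eq_or_lt_of_le hzz' with rfl | hlt
    · rw [mul_comm]
    · have ha := hp (z-1) z' (by omega)
      have hb := hp z (z'-1) (by omega)
      rw [e1] at ha; rw [e2] at hb
      exact le_trans ha hb
  calc (α * p (z-1) + β * p (z-1-1)) * (α * p z' + β * p (z'-1))
      = α*α*(p (z-1) * p z') + (α*β*(p (z-2) * p z') + (β*β*(p (z-2) * p (z'-1)) + α*β*(p (z-1) * p (z'-1)))) := by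
        rw [e1]; ring
    _ ≤ α*α*(p z * p (z'-1)) + (α*β*(p z * p (z'-2)) + (β*β*(p (z-1) * p (z'-2)) + α*β*(p (z-1) * p (z'-1)))) := by
        exact add_le_add (Nat.mul_le_mul_left _ h1) (add_le_add (Nat.mul_le_mul_left _ h3) (add_le_add (Nat.mul_le_mul_left _ h2) le_rfl))
    _ = (α * p z + β * p (z-1)) * (α * p (z'-1) + β * p (z'-1-1)) := by
        rw [e2]; ring

lemma cpair_congr {F G F' G' : ℤ → ℕ} (hF : ∀ z, F z = F' z) (hG : ∀ z, G z = G' z)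
    (h : Cpair F G) : Cpair F' G' := by
  intro z z' hzz'
  rw [← hF, ← hF, ← hG, ← hG]; exact h z z' hzz'

lemma cpair_mul (c : ℤ → ℕ) {F G : ℤ → ℕ} (h : Cpair F G) :
    Cpair (fun z => c z * F z) (fun z => c z * G z) := by
  intro z z' hzz'
  dsimp only
  calc c z * F z * (c z' * G z') = (c z * c z') * (F z * G z') := by ring
    _ ≤ (c z * c z') * (F z' * G z) := Nat.mul_le_mul_left _ (h z z' hzz')
    _ = c z' * F z' * (c z * G z) := by ring

lemma cpair_affine (α β : ℕ) {F G : ℤ → ℕ} (h : Cpair F G) :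
    Cpair (fun z => α * F z + β * F (z-1)) (fun z => α * G z + β * G (z-1)) := by
  intro z z' hzz'
  dsimp only
  rcases eq_or_lt_of_le hzz' with rfl | hlt
  · exact le_of_eq (by ring)
  · have h1 : F z * G z' ≤ F z' * G z := h z z' hzz'
    have h2 : F (z-1) * G (z'-1) ≤ F (z'-1) * G (z-1) := h (z-1) (z'-1) (by omega)
    have h3 : F z * G (z'-1) ≤ F (z'-1) * G z := h z (z'-1) (by omega)
    have h4 : F (z-1) * G z' ≤ F z' * G (z-1) := h (z-1) z' (by omega)
    calc (α * F z + β * F (z-1)) * (α * G z' + β * G (z'-1))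
        = α*α*(F z * G z') + (α*β*(F z * G (z'-1)) + (α*β*(F (z-1) * G z') + β*β*(F (z-1) * G (z'-1)))) := by ring
      _ ≤ α*α*(F z' * G z) + (α*β*(F (z'-1) * G z) + (α*β*(F z' * G (z-1)) + β*β*(F (z'-1) * G (z-1)))) := by
          exact add_le_add (Nat.mul_le_mul_left _ h1) (add_le_add (Nat.mul_le_mul_left _ h3) (add_le_add (Nat.mul_le_mul_left _ h4) (Nat.mul_le_mul_left _ h2)))
      _ = (α * F z' + β * F (z'-1)) * (α * G z + β * G (z-1)) := by ring

end LPM2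

namespace LPM3
open LPM

lemma Icc_one_succ (K : ℕ) : Finset.Icc 1 (K+1) = insert (K+1) (Finset.Icc 1 K) := by
  ext x; simp only [Finset.mem_Icc, Finset.mem_insert]; omega

lemma cnt_zero (lo hi : ℕ → ℕ) (I J : Finset ℕ) (z : ℤ) :
    cnt lo hi I J 0 z = if z = 0 then 1 else 0 := by
  have h0 : Finset.Icc 1 0 = (∅ : Finset ℕ) := by simp
  rw [cnt, h0]
  rw [Finset.powerset_empty, Finset.filter_singleton]
  split_ifs with h1 h2 h2
  · simp
  · exfalso
    obtain ⟨hc, -⟩ := h1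
    rw [Finset.card_empty] at hc
    exact h2 (by exact_mod_cast hc.symm)
  · exfalso
    apply h1
    refine ⟨by rw [Finset.card_empty]; exact_mod_cast h2.symm, ?_, ?_, ?_⟩
    · intro k hk; simp at hk
    · simp
    · simp
  · simp

lemma cnt_succ (lo hi : ℕ → ℕ) (I J : Finset ℕ) (K : ℕ) (z : ℤ) :
    cnt lo hi I J (K+1) z =
      chi lo hi (K+1) z *
        ((if K+1 ∈ I then 0 else 1) * cnt lo hi I J K z +
         (if K+1 ∈ J then 0 else 1) * cnt lo hi I J K (z-1)) := by
  classical
  by_cases hchi : (lo (K+1) : ℤ) ≤ z ∧ z ≤ (hi (K+1) : ℤ)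
  case neg =>
    have hchi0 : chi lo hi (K+1) z = 0 := by unfold chi; rw [if_neg hchi]
    rw [hchi0, Nat.zero_mul]
    rw [cnt]
    apply Finset.card_eq_zero.mpr
    apply Finset.eq_empty_iff_forall_notMem.mpr
    intro U hU
    simp only [Finset.mem_filter, Finset.mem_powerset] at hU
    obtain ⟨hU, hcard, hwin, hIc, hJc⟩ := hU
    have hUeq : U ∩ Finset.Icc 1 (K+1) = U := Finset.inter_eq_left.mpr hU
    have hw := hwin (K+1) (by simp)
    rw [hUeq] at hw
    apply hchi
    constructor
    · rw [← hcard]; exact_mod_cast hw.1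
    · rw [← hcard]; exact_mod_cast hw.2
  case pos =>
    have hchi1 : chi lo hi (K+1) z = 1 := by unfold chi; rw [if_pos hchi]
    rw [hchi1, Nat.one_mul]
    rw [cnt]
    rw [← Finset.card_filter_add_card_filter_not (p := fun U => (K+1) ∉ U)]
    congr 1
    · -- part without K+1
      by_cases hKI : K+1 ∈ I
      · rw [if_pos hKI, Nat.zero_mul]
        apply Finset.card_eq_zero.mpr
        apply Finset.eq_empty_iff_forall_notMem.mpr
        intro U hU
        simp only [Finset.mem_filter, Finset.mem_powerset] at hU
        exact hU.2 (hU.1.2.2.2.1 (by simp [Finset.mem_inter, Finset.mem_Icc, hKI]))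
      · rw [if_neg hKI, Nat.one_mul, cnt]
        refine Finset.card_bij' (fun U _ => U) (fun W _ => W) ?_ ?_ ?_ ?_
        · intro U hU
          simp only [Finset.mem_filter, Finset.mem_powerset] at hU
          obtain ⟨⟨hsub, hcard, hwin, hIc, hJc⟩, hKU⟩ := hU
          simp only [Finset.mem_filter, Finset.mem_powerset]
          have hUK : U ⊆ Finset.Icc 1 K := by
            intro x hx
            have hm := hsub hx
            rw [Finset.mem_Icc] at hm ⊢
            rcases eq_or_ne x (K+1) with rfl | hne
            · exact absurd hx hKU
            · omega
          refine ⟨hUK, hcard, ?_, ?_, hJc⟩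
          · intro k hk
            exact hwin k (by rw [Finset.mem_Icc] at hk ⊢; omega)
          · intro x hx
            rw [Finset.mem_inter, Finset.mem_Icc] at hx
            exact hIc (by rw [Finset.mem_inter, Finset.mem_Icc]; exact ⟨hx.1, by omega⟩)
        · intro W hW
          simp only [Finset.mem_filter, Finset.mem_powerset] at hW
          obtain ⟨hWK, hcard, hwin, hIc, hJc⟩ := hW
          have hKW : K+1 ∉ W := by
            intro h
            have := hWK h
            rw [Finset.mem_Icc] at this; omega
          simp only [Finset.mem_filter, Finset.mem_powerset]
          have hW1 : W ⊆ Finset.Icc 1 (K+1) := by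
            intro x hx
            have := hWK hx
            rw [Finset.mem_Icc] at this ⊢; omega
          refine ⟨⟨hW1, hcard, ?_, ?_, hJc⟩, hKW⟩
          · intro k hk
            rw [Finset.mem_Icc] at hk
            rcases eq_or_ne k (K+1) with rfl | hne
            · have hUeq : W ∩ Finset.Icc 1 (K+1) = W := Finset.inter_eq_left.mpr hW1
              rw [hUeq]
              constructor
              · have h' : (lo (K+1) : ℤ) ≤ (W.card : ℤ) := by rw [hcard]; exact hchi.1
                exact_mod_cast h'
              · have h' : ((W.card : ℤ)) ≤ (hi (K+1) : ℤ) := by rw [hcard]; exact hchi.2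
                exact_mod_cast h'
            · exact hwin k (by rw [Finset.mem_Icc]; omega)
          · intro x hx
            rw [Finset.mem_inter, Finset.mem_Icc] at hx
            rcases eq_or_ne x (K+1) with rfl | hne
            · exact absurd hx.1 hKI
            · exact hIc (by rw [Finset.mem_inter, Finset.mem_Icc]; exact ⟨hx.1, by omega⟩)
        · intro U hU; rfl
        · intro W hW; rfl
    · -- part with K+1
      by_cases hKJ : K+1 ∈ J
      · rw [if_pos hKJ, Nat.zero_mul]
        apply Finset.card_eq_zero.mpr
        apply Finset.eq_empty_iff_forall_notMem.mpr
        intro U hU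
        simp only [Finset.mem_filter, Finset.mem_powerset, not_not] at hU
        exact (Finset.disjoint_left.mp hU.1.2.2.2.2 hU.2) hKJ
      · rw [if_neg hKJ, Nat.one_mul, cnt]
        refine Finset.card_bij' (fun U _ => U.erase (K+1)) (fun W _ => insert (K+1) W) ?_ ?_ ?_ ?_
        · -- forward maps into target
          intro U hU
          simp only [Finset.mem_filter, Finset.mem_powerset, not_not] at hU
          obtain ⟨⟨hsub, hcard, hwin, hIc, hJc⟩, hKU⟩ := hU
          simp only [Finset.mem_filter, Finset.mem_powerset]
          refine ⟨?_, ?_, ?_, ?_, ?_⟩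
          · intro x hx
            rw [Finset.mem_erase] at hx
            have := hsub hx.2
            rw [Finset.mem_Icc] at this ⊢
            have := hx.1; omega
          · rw [Finset.card_erase_of_mem hKU]
            have hpos : 0 < U.card := Finset.card_pos.mpr ⟨K+1, hKU⟩
            rw [Nat.cast_sub (by omega : 1 ≤ U.card)]
            omega
          · intro k hk
            rw [Finset.mem_Icc] at hk
            have he : (U.erase (K+1)) ∩ Finset.Icc 1 k = U ∩ Finset.Icc 1 k := by
              ext x
              simp only [Finset.mem_inter, Finset.mem_erase, Finset.mem_Icc]
              constructor
              · rintro ⟨⟨-, h2⟩, h3⟩; exact ⟨h2, h3⟩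
              · rintro ⟨h2, h3⟩; exact ⟨⟨by omega, h2⟩, h3⟩
            rw [he]
            exact hwin k (by rw [Finset.mem_Icc]; omega)
          · intro x hx
            rw [Finset.mem_inter, Finset.mem_Icc] at hx
            rw [Finset.mem_erase]
            refine ⟨by omega, hIc ?_⟩
            rw [Finset.mem_inter, Finset.mem_Icc]
            exact ⟨hx.1, by omega⟩
          · exact Finset.disjoint_of_subset_left (Finset.erase_subset _ _) hJc
        · -- backward maps into source
          intro W hW
          simp only [Finset.mem_filter, Finset.mem_powerset] at hW
          obtain ⟨hW1, hcard, hwin, hIc, hJc⟩ := hW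
          have hKW : K+1 ∉ W := by
            intro h
            have := hW1 h
            rw [Finset.mem_Icc] at this; omega
          simp only [Finset.mem_filter, Finset.mem_powerset, not_not]
          refine ⟨⟨?_, ?_, ?_, ?_, ?_⟩, by simp⟩
          · intro x hx
            rw [Finset.mem_insert] at hx
            rcases hx with rfl | hx
            · rw [Finset.mem_Icc]; omega
            · have := hW1 hx
              rw [Finset.mem_Icc] at this ⊢; omega
          · rw [Finset.card_insert_of_notMem hKW]
            push_cast
            omega
          · intro k hk
            rw [Finset.mem_Icc] at hk
            rcases eq_or_ne k (K+1) with rfl | hne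
            · have hins : (insert (K+1) W) ∩ Finset.Icc 1 (K+1) = insert (K+1) W := by
                apply Finset.inter_eq_left.mpr
                intro x hx
                rw [Finset.mem_insert] at hx
                rcases hx with rfl | hx
                · rw [Finset.mem_Icc]; omega
                · have := hW1 hx; rw [Finset.mem_Icc] at this ⊢; omega
              rw [hins, Finset.card_insert_of_notMem hKW]
              constructor
              · have h' : (lo (K+1) : ℤ) ≤ ((W.card + 1 : ℕ) : ℤ) := by push_cast; omega
                exact_mod_cast h'
              · have h' : (((W.card + 1 : ℕ)) : ℤ) ≤ (hi (K+1) : ℤ) := by push_cast; omega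
                exact_mod_cast h'
            · have hins : (insert (K+1) W) ∩ Finset.Icc 1 k = W ∩ Finset.Icc 1 k := by
                ext x
                simp only [Finset.mem_inter, Finset.mem_insert, Finset.mem_Icc]
                constructor
                · rintro ⟨h1 | h1, h2⟩
                  · omega
                  · exact ⟨h1, h2⟩
                · rintro ⟨h1, h2⟩; exact ⟨Or.inr h1, h2⟩
              rw [hins]
              exact hwin k (by rw [Finset.mem_Icc]; omega)
          · intro x hx
            rw [Finset.mem_inter, Finset.mem_Icc] at hx
            rw [Finset.mem_insert]
            rcases eq_or_ne x (K+1) with rfl | hne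
            · exact Or.inl rfl
            · exact Or.inr (hIc (by rw [Finset.mem_inter, Finset.mem_Icc]; exact ⟨hx.1, by omega⟩))
          · rw [Finset.disjoint_left]
            intro x hx
            rw [Finset.mem_insert] at hx
            rcases hx with rfl | hx
            · exact hKJ
            · exact fun hxJ => (Finset.disjoint_left.mp hJc hx) hxJ
        · -- left inverse
          intro U hU
          simp only [Finset.mem_filter, not_not] at hU
          exact Finset.insert_erase hU.2
        · -- right inverse
          intro W hW
          simp only [Finset.mem_filter, Finset.mem_powerset] at hW
          have hKW : K+1 ∉ W := by
            intro h
            have := hW.1 h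
            rw [Finset.mem_Icc] at this; omega
          exact Finset.erase_insert hKW

end LPM3

namespace LPM4
open LPM

lemma sfx_top (m r : ℕ) (lo hi : ℕ → ℕ) (I J : Finset ℕ) (z : ℤ) :
    sfx m r lo hi I J (m+1) z = if z = r then 1 else 0 := by
  have h0 : Finset.Icc (m+1) m = (∅ : Finset ℕ) := by
    apply Finset.Icc_eq_empty; omega
  rw [sfx, h0]
  rw [Finset.powerset_empty, Finset.filter_singleton]
  split_ifs with h1 h2 h2
  · simp
  · exfalso
    obtain ⟨hc, -⟩ := h1
    rw [Finset.card_empty] at hc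
    apply h2
    have : (0 : ℤ) = (r : ℤ) - z := by exact_mod_cast hc
    omega
  · exfalso
    apply h1
    refine ⟨?_, ?_, ?_, ?_⟩
    · rw [Finset.card_empty]
      have : (r : ℤ) - z = 0 := by omega
      rw [this]; simp
    · intro k hk; simp at hk
    · simp
    · simp
  · simp

lemma sfx_step (m r : ℕ) (lo hi : ℕ → ℕ) (I J : Finset ℕ) (K : ℕ) (hKm : K ≤ m) (z : ℤ) :
    sfx m r lo hi I J K z =
      (if K ∈ I then 0 else 1) * (chi lo hi K z * sfx m r lo hi I J (K+1) z) +
      (if K ∈ J then 0 else 1) * (chi lo hi K (z+1) * sfx m r lo hi I J (K+1) (z+1)) := by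
  classical
  rw [sfx]
  rw [← Finset.card_filter_add_card_filter_not (p := fun V => K ∉ V)]
  congr 1
  · -- part without K : flat step
    by_cases hKI : K ∈ I
    · rw [if_pos hKI, Nat.zero_mul]
      apply Finset.card_eq_zero.mpr
      apply Finset.eq_empty_iff_forall_notMem.mpr
      intro V hV
      simp only [Finset.mem_filter, Finset.mem_powerset] at hV
      exact hV.2 (hV.1.2.2.2.1 (by simp only [Finset.mem_inter, Finset.mem_Icc]; exact ⟨hKI, by omega⟩))
    · rw [if_neg hKI, Nat.one_mul]
      by_cases hchi : (lo K : ℤ) ≤ z ∧ z ≤ (hi K : ℤ)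
      case neg =>
        have hchi0 : chi lo hi K z = 0 := by unfold chi; rw [if_neg hchi]
        rw [hchi0, Nat.zero_mul]
        apply Finset.card_eq_zero.mpr
        apply Finset.eq_empty_iff_forall_notMem.mpr
        intro V hV
        simp only [Finset.mem_filter, Finset.mem_powerset] at hV
        obtain ⟨⟨hsub, hcard, hwin, hIc, hJc⟩, hKV⟩ := hV
        have hw := hwin K (by rw [Finset.mem_Icc]; omega)
        have hVK : V ∩ Finset.Icc K K = ∅ := by
          apply Finset.eq_empty_iff_forall_notMem.mpr
          intro x hx
          rw [Finset.mem_inter, Finset.mem_Icc] at hx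
          have : x = K := by omega
          exact hKV (this ▸ hx.1)
        rw [hVK] at hw
        simp only [Finset.card_empty, Nat.cast_zero, add_zero] at hw
        exact hchi hw
      case pos =>
        have hchi1 : chi lo hi K z = 1 := by unfold chi; rw [if_pos hchi]
        rw [hchi1, Nat.one_mul, sfx]
        refine Finset.card_bij' (fun V _ => V) (fun W _ => W) ?_ ?_ ?_ ?_
        · intro V hV
          simp only [Finset.mem_filter, Finset.mem_powerset] at hV
          obtain ⟨⟨hsub, hcard, hwin, hIc, hJc⟩, hKV⟩ := hV
          simp only [Finset.mem_filter, Finset.mem_powerset]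
          have hsub' : V ⊆ Finset.Icc (K+1) m := by
            intro x hx
            have := hsub hx
            rw [Finset.mem_Icc] at this ⊢
            have hne : x ≠ K := fun h => hKV (h ▸ hx)
            omega
          have hIcc : ∀ k, V ∩ Finset.Icc K k = V ∩ Finset.Icc (K+1) k := by
            intro k
            ext x
            simp only [Finset.mem_inter, Finset.mem_Icc]
            constructor
            · rintro ⟨h1, h2, h3⟩
              have : x ≠ K := fun h => hKV (h ▸ h1)
              exact ⟨h1, by omega, h3⟩
            · rintro ⟨h1, h2, h3⟩
              exact ⟨h1, by omega, h3⟩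
          refine ⟨hsub', hcard, ?_, ?_, hJc⟩
          · intro k hk
            rw [Finset.mem_Icc] at hk
            have := hwin k (by rw [Finset.mem_Icc]; omega)
            rwa [hIcc k] at this
          · intro x hx
            rw [Finset.mem_inter, Finset.mem_Icc] at hx
            exact hIc (by rw [Finset.mem_inter, Finset.mem_Icc]; exact ⟨hx.1, by omega, hx.2.2⟩)
        · intro W hW
          simp only [Finset.mem_filter, Finset.mem_powerset] at hW
          obtain ⟨hsub, hcard, hwin, hIc, hJc⟩ := hW
          have hKW : K ∉ W := by
            intro h
            have := hsub h
            rw [Finset.mem_Icc] at this; omega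
          simp only [Finset.mem_filter, Finset.mem_powerset]
          have hsub' : W ⊆ Finset.Icc K m := by
            intro x hx
            have := hsub hx
            rw [Finset.mem_Icc] at this ⊢; omega
          have hIcc : ∀ k, W ∩ Finset.Icc K k = W ∩ Finset.Icc (K+1) k := by
            intro k
            ext x
            simp only [Finset.mem_inter, Finset.mem_Icc]
            constructor
            · rintro ⟨h1, h2, h3⟩
              have : x ≠ K := fun h => hKW (h ▸ h1)
              exact ⟨h1, by omega, h3⟩
            · rintro ⟨h1, h2, h3⟩
              exact ⟨h1, by omega, h3⟩
          refine ⟨⟨hsub', hcard, ?_, ?_, hJc⟩, hKW⟩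
          · intro k hk
            rw [Finset.mem_Icc] at hk
            by_cases hkK : k = K
            · rw [hkK]
              have hempty : W ∩ Finset.Icc K K = ∅ := by
                apply Finset.eq_empty_iff_forall_notMem.mpr
                intro x hx
                rw [Finset.mem_inter, Finset.mem_Icc] at hx
                have hxK : x = K := by omega
                exact hKW (hxK ▸ hx.1)
              rw [hempty]
              simpa using hchi
            · have := hwin k (by rw [Finset.mem_Icc]; omega)
              rwa [← hIcc k] at this
          · intro x hx
            rw [Finset.mem_inter, Finset.mem_Icc] at hx
            by_cases hxe : x = K
            · exact absurd (hxe ▸ hx.1) hKI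
            · exact hIc (by rw [Finset.mem_inter, Finset.mem_Icc]; exact ⟨hx.1, by omega, hx.2.2⟩)
        · intro V hV; rfl
        · intro W hW; rfl
  · -- part with K : up step
    by_cases hKJ : K ∈ J
    · rw [if_pos hKJ, Nat.zero_mul]
      apply Finset.card_eq_zero.mpr
      apply Finset.eq_empty_iff_forall_notMem.mpr
      intro V hV
      simp only [Finset.mem_filter, Finset.mem_powerset, not_not] at hV
      exact (Finset.disjoint_left.mp hV.1.2.2.2.2 hV.2) hKJ
    · rw [if_neg hKJ, Nat.one_mul]
      by_cases hchi : (lo K : ℤ) ≤ z + 1 ∧ z + 1 ≤ (hi K : ℤ)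
      case neg =>
        have hchi0 : chi lo hi K (z+1) = 0 := by unfold chi; rw [if_neg hchi]
        rw [hchi0, Nat.zero_mul]
        apply Finset.card_eq_zero.mpr
        apply Finset.eq_empty_iff_forall_notMem.mpr
        intro V hV
        simp only [Finset.mem_filter, Finset.mem_powerset, not_not] at hV
        obtain ⟨⟨hsub, hcard, hwin, hIc, hJc⟩, hKV⟩ := hV
        have hw := hwin K (by rw [Finset.mem_Icc]; omega)
        have hVK : V ∩ Finset.Icc K K = {K} := by
          ext x
          simp only [Finset.mem_inter, Finset.mem_Icc, Finset.mem_singleton]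
          constructor
          · rintro ⟨h1, h2, h3⟩; omega
          · intro hxK; rw [hxK]; exact ⟨hKV, le_refl K, le_refl K⟩
        rw [hVK] at hw
        simp only [Finset.card_singleton, Nat.cast_one] at hw
        exact hchi hw
      case pos =>
        have hchi1 : chi lo hi K (z+1) = 1 := by unfold chi; rw [if_pos hchi]
        rw [hchi1, Nat.one_mul, sfx]
        refine Finset.card_bij' (fun V _ => V.erase K) (fun W _ => insert K W) ?_ ?_ ?_ ?_
        · intro V hV
          simp only [Finset.mem_filter, Finset.mem_powerset, not_not] at hV
          obtain ⟨⟨hsub, hcard, hwin, hIc, hJc⟩, hKV⟩ := hV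
          simp only [Finset.mem_filter, Finset.mem_powerset]
          have hIcc : ∀ k, (V.erase K) ∩ Finset.Icc (K+1) k = (V ∩ Finset.Icc K k).erase K := by
            intro k
            ext x
            simp only [Finset.mem_inter, Finset.mem_erase, Finset.mem_Icc]
            constructor
            · rintro ⟨⟨hne, h1⟩, h2, h3⟩; exact ⟨hne, h1, by omega, h3⟩
            · rintro ⟨hne, h1, h2, h3⟩; exact ⟨⟨hne, h1⟩, by omega, h3⟩
          refine ⟨?_, ?_, ?_, ?_, ?_⟩
          · intro x hx
            rw [Finset.mem_erase] at hx
            have := hsub hx.2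
            rw [Finset.mem_Icc] at this ⊢
            have := hx.1; omega
          · rw [Finset.card_erase_of_mem hKV]
            have hpos : 0 < V.card := Finset.card_pos.mpr ⟨K, hKV⟩
            rw [Nat.cast_sub (by omega : 1 ≤ V.card)]
            omega
          · intro k hk
            rw [Finset.mem_Icc] at hk
            have hKmem : K ∈ V ∩ Finset.Icc K k := by
              rw [Finset.mem_inter, Finset.mem_Icc]
              exact ⟨hKV, le_refl K, by omega⟩
            have hcarde : ((V.erase K) ∩ Finset.Icc (K+1) k).card = (V ∩ Finset.Icc K k).card - 1 := by
              rw [hIcc k, Finset.card_erase_of_mem hKmem]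
            have hw := hwin k (by rw [Finset.mem_Icc]; omega)
            have hpos : 0 < (V ∩ Finset.Icc K k).card := Finset.card_pos.mpr ⟨K, hKmem⟩
            rw [hcarde, Nat.cast_sub (by omega : 1 ≤ (V ∩ Finset.Icc K k).card)]
            constructor
            · have := hw.1; omega
            · have := hw.2; omega
          · intro x hx
            rw [Finset.mem_inter, Finset.mem_Icc] at hx
            rw [Finset.mem_erase]
            refine ⟨by omega, hIc ?_⟩
            rw [Finset.mem_inter, Finset.mem_Icc]
            exact ⟨hx.1, by omega, hx.2.2⟩
          · exact Finset.disjoint_of_subset_left (Finset.erase_subset _ _) hJc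
        · intro W hW
          simp only [Finset.mem_filter, Finset.mem_powerset] at hW
          obtain ⟨hsub, hcard, hwin, hIc, hJc⟩ := hW
          have hKW : K ∉ W := by
            intro h
            have := hsub h
            rw [Finset.mem_Icc] at this; omega
          simp only [Finset.mem_filter, Finset.mem_powerset, not_not]
          have hIcc : ∀ k, K ≤ k → (insert K W) ∩ Finset.Icc K k = insert K (W ∩ Finset.Icc (K+1) k) := by
            intro k hkK
            ext x
            simp only [Finset.mem_inter, Finset.mem_insert, Finset.mem_Icc]
            constructor
            · rintro ⟨hx1, h2, h3⟩
              rcases hx1 with rfl | h1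
              · exact Or.inl rfl
              · have hne : x ≠ K := fun h => hKW (h ▸ h1)
                exact Or.inr ⟨h1, by omega, h3⟩
            · rintro (hxK | ⟨h1, h2, h3⟩)
              · rw [hxK]; exact ⟨Or.inl rfl, le_refl K, hkK⟩
              · exact ⟨Or.inr h1, by omega, h3⟩
          refine ⟨⟨?_, ?_, ?_, ?_, ?_⟩, by simp⟩
          · intro x hx
            rw [Finset.mem_insert] at hx
            rcases hx with rfl | hx
            · rw [Finset.mem_Icc]; omega
            · have := hsub hx
              rw [Finset.mem_Icc] at this ⊢; omega
          · rw [Finset.card_insert_of_notMem hKW]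
            push_cast
            omega
          · intro k hk
            rw [Finset.mem_Icc] at hk
            have hWK : K ∉ W ∩ Finset.Icc (K+1) k := by
              intro h
              rw [Finset.mem_inter] at h
              exact hKW h.1
            rw [hIcc k (by omega), Finset.card_insert_of_notMem hWK]
            by_cases hkK : k = K
            · rw [hkK]
              have hempty : W ∩ Finset.Icc (K+1) K = ∅ := by
                apply Finset.eq_empty_iff_forall_notMem.mpr
                intro x hx
                rw [Finset.mem_inter, Finset.mem_Icc] at hx
                omega
              rw [hempty]
              simp only [Finset.card_empty, Nat.cast_zero]
              constructor
              · have := hchi.1; omega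
              · have := hchi.2; omega
            · have hw := hwin k (by rw [Finset.mem_Icc]; omega)
              push_cast
              constructor
              · have := hw.1; omega
              · have := hw.2; omega
          · intro x hx
            rw [Finset.mem_inter, Finset.mem_Icc] at hx
            rw [Finset.mem_insert]
            by_cases hxe : x = K
            · exact Or.inl hxe
            · exact Or.inr (hIc (by rw [Finset.mem_inter, Finset.mem_Icc]; exact ⟨hx.1, by omega, hx.2.2⟩))
          · rw [Finset.disjoint_left]
            intro x hx
            rw [Finset.mem_insert] at hx
            rcases hx with rfl | hx
            · exact hKJ
            · exact fun hxJ => (Finset.disjoint_left.mp hJc hx) hxJ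
        · intro V hV
          simp only [Finset.mem_filter, not_not] at hV
          exact Finset.insert_erase hV.2
        · intro W hW
          simp only [Finset.mem_filter, Finset.mem_powerset] at hW
          have hKW : K ∉ W := by
            intro h
            have := hW.1 h
            rw [Finset.mem_Icc] at this; omega
          exact Finset.erase_insert hKW

end LPM4

namespace LPM5
open LPM LPM2 LPM3 LPM4

lemma cnt_congr (lo hi : ℕ → ℕ) (I I' J J' : Finset ℕ) (K : ℕ)
    (hII : I ∩ Finset.Icc 1 K = I' ∩ Finset.Icc 1 K)
    (hJJ : J ∩ Finset.Icc 1 K = J' ∩ Finset.Icc 1 K) (z : ℤ) :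
    cnt lo hi I J K z = cnt lo hi I' J' K z := by
  have hdisj : ∀ (U J₁ J₂ : Finset ℕ), U ⊆ Finset.Icc 1 K →
      J₁ ∩ Finset.Icc 1 K = J₂ ∩ Finset.Icc 1 K →
      Disjoint U J₁ → Disjoint U J₂ := by
    intro U J₁ J₂ hU h hd
    rw [Finset.disjoint_left] at hd ⊢
    intro x hxU hxJ
    have hxI : x ∈ Finset.Icc 1 K := hU hxU
    have hx2 : x ∈ J₂ ∩ Finset.Icc 1 K := Finset.mem_inter.mpr ⟨hxJ, hxI⟩
    rw [← h, Finset.mem_inter] at hx2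
    exact hd hxU hx2.1
  rw [cnt, cnt]
  refine Finset.card_bij' (fun U _ => U) (fun U _ => U) ?_ ?_ (fun _ _ => rfl) (fun _ _ => rfl)
  · intro U hU
    simp only [Finset.mem_filter, Finset.mem_powerset] at hU ⊢
    obtain ⟨hU, h1, h2, h3, h4⟩ := hU
    exact ⟨hU, h1, h2, fun x hx => h3 (hII ▸ hx), hdisj U J J' hU hJJ h4⟩
  · intro U hU
    simp only [Finset.mem_filter, Finset.mem_powerset] at hU ⊢
    obtain ⟨hU, h1, h2, h3, h4⟩ := hU
    exact ⟨hU, h1, h2, fun x hx => h3 (hII ▸ hx), hdisj U J' J hU hJJ.symm h4⟩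

lemma sfx_congr (m r : ℕ) (lo hi : ℕ → ℕ) (I I' J J' : Finset ℕ) (K : ℕ)
    (hII : I ∩ Finset.Icc K m = I' ∩ Finset.Icc K m)
    (hJJ : J ∩ Finset.Icc K m = J' ∩ Finset.Icc K m) (z : ℤ) :
    sfx m r lo hi I J K z = sfx m r lo hi I' J' K z := by
  have hdisj : ∀ (U J₁ J₂ : Finset ℕ), U ⊆ Finset.Icc K m →
      J₁ ∩ Finset.Icc K m = J₂ ∩ Finset.Icc K m →
      Disjoint U J₁ → Disjoint U J₂ := by
    intro U J₁ J₂ hU h hd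
    rw [Finset.disjoint_left] at hd ⊢
    intro x hxU hxJ
    have hxI : x ∈ Finset.Icc K m := hU hxU
    have hx2 : x ∈ J₂ ∩ Finset.Icc K m := Finset.mem_inter.mpr ⟨hxJ, hxI⟩
    rw [← h, Finset.mem_inter] at hx2
    exact hd hxU hx2.1
  rw [sfx, sfx]
  refine Finset.card_bij' (fun U _ => U) (fun U _ => U) ?_ ?_ (fun _ _ => rfl) (fun _ _ => rfl)
  · intro U hU
    simp only [Finset.mem_filter, Finset.mem_powerset] at hU ⊢
    obtain ⟨hU, h1, h2, h3, h4⟩ := hU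
    exact ⟨hU, h1, h2, fun x hx => h3 (hII ▸ hx), hdisj U J J' hU hJJ h4⟩
  · intro U hU
    simp only [Finset.mem_filter, Finset.mem_powerset] at hU ⊢
    obtain ⟨hU, h1, h2, h3, h4⟩ := hU
    exact ⟨hU, h1, h2, fun x hx => h3 (hII ▸ hx), hdisj U J' J hU hJJ.symm h4⟩

lemma pf2_cnt (lo hi : ℕ → ℕ) (I J : Finset ℕ) : ∀ K, PF2 (cnt lo hi I J K) := by
  intro K
  induction K with
  | zero =>
    exact pf2_congr (fun z => (cnt_zero lo hi I J z).symm) (pf2_delta 0)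
  | succ K ih =>
    exact pf2_congr (fun z => (cnt_succ lo hi I J K z).symm)
      (pf2_mul_chi lo hi (K+1) (pf2_affine _ _ ih))

lemma pf2_sfx (m r : ℕ) (lo hi : ℕ → ℕ) (I J : Finset ℕ) :
    ∀ n K, K + n = m + 1 → PF2 (sfx m r lo hi I J K) := by
  intro n
  induction n with
  | zero =>
    intro K hK
    have : K = m + 1 := by omega
    subst this
    exact pf2_congr (fun z => (sfx_top m r lo hi I J z).symm) (pf2_delta r)
  | succ n ih =>
    intro K hK
    have hKm : K ≤ m := by omega
    have hp : PF2 (sfx m r lo hi I J (K+1)) := ih (K+1) (by omega)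
    have hq : PF2 (fun z => chi lo hi K z * sfx m r lo hi I J (K+1) z) :=
      pf2_mul_chi lo hi K hp
    have hq' : PF2 (fun z => chi lo hi K (z+1) * sfx m r lo hi I J (K+1) (z+1)) :=
      pf2_shift hq
    have haff : PF2 (fun z => (if K ∈ J then 0 else 1) *
        (chi lo hi K (z+1) * sfx m r lo hi I J (K+1) (z+1)) +
        (if K ∈ I then 0 else 1) * (chi lo hi K (z-1+1) * sfx m r lo hi I J (K+1) (z-1+1))) :=
      pf2_affine _ _ hq'
    apply pf2_congr (p := fun z => (if K ∈ J then 0 else 1) *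
        (chi lo hi K (z+1) * sfx m r lo hi I J (K+1) (z+1)) +
        (if K ∈ I then 0 else 1) * (chi lo hi K (z-1+1) * sfx m r lo hi I J (K+1) (z-1+1)))
    · intro z
      rw [sfx_step m r lo hi I J K hKm z]
      have e1 : z - 1 + 1 = z := by ring
      rw [e1]
      ring
    · exact haff

/-- the key prefix pair condition, by induction from `e` up to any `K ≥ e`. -/
lemma cpair_cnt (lo hi : ℕ → ℕ) (I J : Finset ℕ) (e : ℕ) (he1 : 1 ≤ e)
    (heI : e ∉ I) (heJ : e ∉ J) :
    ∀ K, e ≤ K → Cpair (cnt lo hi (insert e I) J K) (cnt lo hi I (insert e J) K) := by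
  have hbase : Cpair (cnt lo hi (insert e I) J e) (cnt lo hi I (insert e J) e) := by
    obtain ⟨K0, rfl⟩ : ∃ K0, e = K0 + 1 := ⟨e - 1, by omega⟩
    have hIe : (insert (K0+1) I) ∩ Finset.Icc 1 K0 = I ∩ Finset.Icc 1 K0 := by
      ext x
      simp only [Finset.mem_inter, Finset.mem_insert, Finset.mem_Icc]
      constructor
      · rintro ⟨rfl | h1, h2⟩
        · omega
        · exact ⟨h1, h2⟩
      · rintro ⟨h1, h2⟩; exact ⟨Or.inr h1, h2⟩
    have hJe : (insert (K0+1) J) ∩ Finset.Icc 1 K0 = J ∩ Finset.Icc 1 K0 := by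
      ext x
      simp only [Finset.mem_inter, Finset.mem_insert, Finset.mem_Icc]
      constructor
      · rintro ⟨rfl | h1, h2⟩
        · omega
        · exact ⟨h1, h2⟩
      · rintro ⟨h1, h2⟩; exact ⟨Or.inr h1, h2⟩
    have hF : ∀ z, cnt lo hi (insert (K0+1) I) J (K0+1) z
        = chi lo hi (K0+1) z * cnt lo hi I J K0 (z-1) := by
      intro z
      have hcc : ∀ w, cnt lo hi (insert (K0+1) I) J K0 w = cnt lo hi I J K0 w :=
        fun w => cnt_congr lo hi (insert (K0+1) I) I J J K0 hIe rfl w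
      rw [cnt_succ]
      rw [if_pos (Finset.mem_insert_self _ _), if_neg heJ]
      simp only [hcc]
      ring
    have hG : ∀ z, cnt lo hi I (insert (K0+1) J) (K0+1) z
        = chi lo hi (K0+1) z * cnt lo hi I J K0 z := by
      intro z
      have hcc : ∀ w, cnt lo hi I (insert (K0+1) J) K0 w = cnt lo hi I J K0 w :=
        fun w => cnt_congr lo hi I I (insert (K0+1) J) J K0 rfl hJe w
      rw [cnt_succ]
      rw [if_neg heI, if_pos (Finset.mem_insert_self _ _)]
      simp only [hcc]
      ring
    apply cpair_congr (F := fun z => chi lo hi (K0+1) z * cnt lo hi I J K0 (z-1))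
      (G := fun z => chi lo hi (K0+1) z * cnt lo hi I J K0 z)
      (fun z => (hF z).symm) (fun z => (hG z).symm)
    apply cpair_mul
    intro z z' hzz'
    have := pf2_cnt lo hi I J K0 z z' hzz'
    calc cnt lo hi I J K0 (z-1) * cnt lo hi I J K0 z'
        ≤ cnt lo hi I J K0 z * cnt lo hi I J K0 (z'-1) := this
      _ = cnt lo hi I J K0 (z'-1) * cnt lo hi I J K0 z := by ring
  intro K
  induction K with
  | zero => intro h; omega
  | succ K ih =>
    intro hK
    rcases eq_or_lt_of_le hK with heq | hlt
    · rw [← heq]; exact hbase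
    · have hKe : e ≤ K := by omega
      have hne : K + 1 ≠ e := by omega
      have hstep := cpair_affine (if K+1 ∈ I then 0 else 1) (if K+1 ∈ J then 0 else 1)
        (ih hKe)
      have hmul := cpair_mul (chi lo hi (K+1)) hstep
      apply cpair_congr
        (F := fun z => chi lo hi (K+1) z * ((if K+1 ∈ I then 0 else 1) * cnt lo hi (insert e I) J K z
          + (if K+1 ∈ J then 0 else 1) * cnt lo hi (insert e I) J K (z-1)))
        (G := fun z => chi lo hi (K+1) z * ((if K+1 ∈ I then 0 else 1) * cnt lo hi I (insert e J) K z
          + (if K+1 ∈ J then 0 else 1) * cnt lo hi I (insert e J) K (z-1)))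
      · intro z
        rw [cnt_succ]
        have h1 : (if K+1 ∈ insert e I then (0:ℕ) else 1) = (if K+1 ∈ I then 0 else 1) := by
          by_cases h : K+1 ∈ I
          · rw [if_pos h, if_pos (Finset.mem_insert_of_mem h)]
          · rw [if_neg h, if_neg (fun hc => by
              rcases Finset.mem_insert.mp hc with h' | h'
              · exact hne h'
              · exact h h')]
        rw [h1]
      · intro z
        rw [cnt_succ]
        have h1 : (if K+1 ∈ insert e J then (0:ℕ) else 1) = (if K+1 ∈ J then 0 else 1) := by
          by_cases h : K+1 ∈ J
          · rw [if_pos h, if_pos (Finset.mem_insert_of_mem h)]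
          · rw [if_neg h, if_neg (fun hc => by
              rcases Finset.mem_insert.mp hc with h' | h'
              · exact hne h'
              · exact h h')]
        rw [h1]
      · exact hmul

end LPM5

namespace LPM6
open LPM

lemma fam_split (m r K : ℕ) (hK : K ≤ m) (A B I J : Finset ℕ) (hI : I ⊆ Finset.Icc 1 m) :
    ((latticeFamily m r A B).filter (fun S => I ⊆ S ∧ Disjoint S J)).card
      = ∑ z ∈ Finset.Icc (0:ℤ) (r:ℤ),
          cnt (fun k => (A ∩ Finset.Icc 1 k).card) (fun k => (B ∩ Finset.Icc 1 k).card) I J K z *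
          sfx m r (fun k => (A ∩ Finset.Icc 1 k).card) (fun k => (B ∩ Finset.Icc 1 k).card) I J (K+1) z := by
  classical
  have h1 : ∀ S ∈ (latticeFamily m r A B).filter (fun S => I ⊆ S ∧ Disjoint S J),
      ((S ∩ Finset.Icc 1 K).card : ℤ) ∈ Finset.Icc (0:ℤ) (r:ℤ) := by
    intro S hS
    simp only [latticeFamily, Finset.mem_filter, Finset.mem_powerset] at hS
    obtain ⟨⟨hsub, hcard, hwin⟩, hIS, hSJ⟩ := hS
    rw [Finset.mem_Icc]
    constructor
    · positivity
    · have : (S ∩ Finset.Icc 1 K).card ≤ S.card := Finset.card_le_card (Finset.inter_subset_left)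
      rw [hcard] at this
      exact_mod_cast this
  rw [Finset.card_eq_sum_card_fiberwise h1]
  apply Finset.sum_congr rfl
  intro z hz
  rw [cnt, sfx, ← Finset.card_product]
  refine Finset.card_bij' (fun S _ => (S ∩ Finset.Icc 1 K, S ∩ Finset.Icc (K+1) m))
    (fun P _ => P.1 ∪ P.2) ?_ ?_ ?_ ?_
  · -- forward
    intro S hS
    simp only [Finset.mem_filter, latticeFamily, Finset.mem_powerset] at hS
    obtain ⟨⟨⟨hsub, hcard, hwin⟩, hIS, hSJ⟩, hfib⟩ := hS
    have hUsub : S ∩ Finset.Icc 1 K ⊆ Finset.Icc 1 K := Finset.inter_subset_right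
    have hVsub : S ∩ Finset.Icc (K+1) m ⊆ Finset.Icc (K+1) m := Finset.inter_subset_right
    have hdisjUV : Disjoint (S ∩ Finset.Icc 1 K) (S ∩ Finset.Icc (K+1) m) := by
      rw [Finset.disjoint_left]
      intro x hx hx'
      rw [Finset.mem_inter, Finset.mem_Icc] at hx hx'
      omega
    have hunion : (S ∩ Finset.Icc 1 K) ∪ (S ∩ Finset.Icc (K+1) m) = S := by
      ext x
      simp only [Finset.mem_union, Finset.mem_inter, Finset.mem_Icc]
      constructor
      · rintro (⟨h, -⟩ | ⟨h, -⟩) <;> exact h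
      · intro h
        have := hsub h
        rw [Finset.mem_Icc] at this
        rcases le_or_gt x K with h' | h'
        · exact Or.inl ⟨h, by omega⟩
        · exact Or.inr ⟨h, by omega⟩
    have hcardsum : (S ∩ Finset.Icc 1 K).card + (S ∩ Finset.Icc (K+1) m).card = r := by
      rw [← Finset.card_union_of_disjoint hdisjUV, hunion, hcard]
    rw [Finset.mem_product]
    constructor
    · -- prefix part
      simp only [Finset.mem_filter, Finset.mem_powerset]
      refine ⟨hUsub, hfib, ?_, ?_, ?_⟩
      · intro k hk
        rw [Finset.mem_Icc] at hk
        have hUk : (S ∩ Finset.Icc 1 K) ∩ Finset.Icc 1 k = S ∩ Finset.Icc 1 k := by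
          ext x
          simp only [Finset.mem_inter, Finset.mem_Icc]
          constructor
          · rintro ⟨⟨h1, -⟩, h3⟩; exact ⟨h1, h3⟩
          · rintro ⟨h1, h3⟩; exact ⟨⟨h1, by omega⟩, h3⟩
        rw [hUk]
        exact hwin k (by rw [Finset.mem_Icc]; omega)
      · intro x hx
        rw [Finset.mem_inter] at hx ⊢
        exact ⟨hIS hx.1, hx.2⟩
      · exact Finset.disjoint_of_subset_left (Finset.inter_subset_left) hSJ
    · -- suffix part
      simp only [Finset.mem_filter, Finset.mem_powerset]
      refine ⟨hVsub, ?_, ?_, ?_, ?_⟩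
      · rw [← hfib]
        push_cast
        omega
      · intro k hk
        rw [Finset.mem_Icc] at hk
        have hVk : (S ∩ Finset.Icc (K+1) m) ∩ Finset.Icc (K+1) k = S ∩ Finset.Icc (K+1) k := by
          ext x
          simp only [Finset.mem_inter, Finset.mem_Icc]
          constructor
          · rintro ⟨⟨h1, -⟩, h3⟩; exact ⟨h1, h3⟩
          · rintro ⟨h1, h3⟩; exact ⟨⟨h1, by omega⟩, h3⟩
        rw [hVk]
        have hSk : S ∩ Finset.Icc 1 k = (S ∩ Finset.Icc 1 K) ∪ (S ∩ Finset.Icc (K+1) k) := by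
          ext x
          simp only [Finset.mem_union, Finset.mem_inter, Finset.mem_Icc]
          constructor
          · rintro ⟨h1, h2, h3⟩
            rcases le_or_gt x K with h' | h'
            · exact Or.inl ⟨h1, by omega⟩
            · exact Or.inr ⟨h1, by omega⟩
          · rintro (⟨h1, h2⟩ | ⟨h1, h2⟩)
            · exact ⟨h1, by omega⟩
            · have := hsub h1
              rw [Finset.mem_Icc] at this
              exact ⟨h1, by omega⟩
        have hdisj2 : Disjoint (S ∩ Finset.Icc 1 K) (S ∩ Finset.Icc (K+1) k) := by
          rw [Finset.disjoint_left]
          intro x hx hx'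
          rw [Finset.mem_inter, Finset.mem_Icc] at hx hx'
          omega
        have hcads : (S ∩ Finset.Icc 1 k).card
            = (S ∩ Finset.Icc 1 K).card + (S ∩ Finset.Icc (K+1) k).card := by
          rw [hSk, Finset.card_union_of_disjoint hdisj2]
        have hw := hwin k (by rw [Finset.mem_Icc]; omega)
        rw [← hfib]
        push_cast
        rw [hcads] at hw
        push_cast at hw
        constructor
        · have := hw.1; omega
        · have := hw.2; omega
      · intro x hx
        rw [Finset.mem_inter] at hx ⊢
        exact ⟨hIS hx.1, hx.2⟩
      · exact Finset.disjoint_of_subset_left (Finset.inter_subset_left) hSJ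
  · -- backward
    intro P hP
    rw [Finset.mem_product] at hP
    obtain ⟨hPU, hPV⟩ := hP
    simp only [Finset.mem_filter, Finset.mem_powerset] at hPU hPV
    obtain ⟨hUsub, hUcard, hUwin, hUI, hUJ⟩ := hPU
    obtain ⟨hVsub, hVcard, hVwin, hVI, hVJ⟩ := hPV
    have hdisjUV : Disjoint P.1 P.2 := by
      rw [Finset.disjoint_left]
      intro x hx hx'
      have h1 := hUsub hx
      have h2 := hVsub hx'
      rw [Finset.mem_Icc] at h1 h2
      omega
    have hUV1 : (P.1 ∪ P.2) ∩ Finset.Icc 1 K = P.1 := by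
      ext x
      simp only [Finset.mem_inter, Finset.mem_union, Finset.mem_Icc]
      constructor
      · rintro ⟨h1 | h1, h2⟩
        · exact h1
        · have := hVsub h1; rw [Finset.mem_Icc] at this; omega
      · intro h
        have := hUsub h; rw [Finset.mem_Icc] at this
        exact ⟨Or.inl h, this⟩
    have hUV2 : (P.1 ∪ P.2) ∩ Finset.Icc (K+1) m = P.2 := by
      ext x
      simp only [Finset.mem_inter, Finset.mem_union, Finset.mem_Icc]
      constructor
      · rintro ⟨h1 | h1, h2⟩
        · have := hUsub h1; rw [Finset.mem_Icc] at this; omega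
        · exact h1
      · intro h
        have := hVsub h; rw [Finset.mem_Icc] at this
        exact ⟨Or.inr h, this⟩
    have hcardsum : (P.1 ∪ P.2).card = P.1.card + P.2.card :=
      Finset.card_union_of_disjoint hdisjUV
    have hScard : ((P.1 ∪ P.2).card : ℤ) = r := by
      rw [hcardsum]
      push_cast
      omega
    simp only [Finset.mem_filter, latticeFamily, Finset.mem_powerset]
    refine ⟨⟨⟨?_, ?_, ?_⟩, ?_, ?_⟩, ?_⟩
    · intro x hx
      rw [Finset.mem_union] at hx
      rcases hx with hx | hx
      · have := hUsub hx; rw [Finset.mem_Icc] at this ⊢; omega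
      · have := hVsub hx; rw [Finset.mem_Icc] at this ⊢; omega
    · exact_mod_cast hScard
    · intro k hk
      rw [Finset.mem_Icc] at hk
      rcases le_or_gt k K with hkK | hkK
      · have hUVk : (P.1 ∪ P.2) ∩ Finset.Icc 1 k = P.1 ∩ Finset.Icc 1 k := by
          ext x
          simp only [Finset.mem_inter, Finset.mem_union, Finset.mem_Icc]
          constructor
          · rintro ⟨h1 | h1, h2⟩
            · exact ⟨h1, h2⟩
            · have := hVsub h1; rw [Finset.mem_Icc] at this; omega
          · rintro ⟨h1, h2⟩; exact ⟨Or.inl h1, h2⟩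
        rw [hUVk]
        exact hUwin k (by rw [Finset.mem_Icc]; omega)
      · have hUVk : (P.1 ∪ P.2) ∩ Finset.Icc 1 k = P.1 ∪ (P.2 ∩ Finset.Icc (K+1) k) := by
          ext x
          simp only [Finset.mem_union, Finset.mem_inter, Finset.mem_Icc]
          constructor
          · rintro ⟨h1 | h1, h2⟩
            · exact Or.inl h1
            · have := hVsub h1; rw [Finset.mem_Icc] at this
              exact Or.inr ⟨h1, by omega⟩
          · rintro (h1 | ⟨h1, h2⟩)
            · have := hUsub h1; rw [Finset.mem_Icc] at this
              exact ⟨Or.inl h1, by omega⟩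
            · have := hVsub h1; rw [Finset.mem_Icc] at this
              exact ⟨Or.inr h1, by omega⟩
        have hdisj2 : Disjoint P.1 (P.2 ∩ Finset.Icc (K+1) k) := by
          rw [Finset.disjoint_left]
          intro x hx hx'
          have h1 := hUsub hx
          rw [Finset.mem_inter, Finset.mem_Icc] at hx'
          rw [Finset.mem_Icc] at h1
          omega
        have hcards : ((P.1 ∪ P.2) ∩ Finset.Icc 1 k).card
            = P.1.card + (P.2 ∩ Finset.Icc (K+1) k).card := by
          rw [hUVk, Finset.card_union_of_disjoint hdisj2]
        have hw := hVwin k (by rw [Finset.mem_Icc]; omega)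
        rw [hcards]
        have h1 := hw.1
        have h2 := hw.2
        have hUz : (P.1.card : ℤ) = z := hUcard
        constructor <;> omega
    · -- I ⊆ union
      intro x hx
      have hxm := hI hx
      rw [Finset.mem_Icc] at hxm
      rw [Finset.mem_union]
      rcases le_or_gt x K with h' | h'
      · exact Or.inl (hUI (by rw [Finset.mem_inter, Finset.mem_Icc]; exact ⟨hx, by omega⟩))
      · exact Or.inr (hVI (by rw [Finset.mem_inter, Finset.mem_Icc]; exact ⟨hx, by omega⟩))
    · -- disjoint from J
      rw [Finset.disjoint_union_left]
      exact ⟨hUJ, hVJ⟩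
    · -- fiber value
      rw [hUV1]
      exact hUcard
  · -- left inverse
    intro S hS
    simp only [Finset.mem_filter, latticeFamily, Finset.mem_powerset] at hS
    obtain ⟨⟨⟨hsub, -, -⟩, -, -⟩, -⟩ := hS
    ext x
    simp only [Finset.mem_union, Finset.mem_inter, Finset.mem_Icc]
    constructor
    · rintro (⟨h, -⟩ | ⟨h, -⟩) <;> exact h
    · intro h
      have := hsub h
      rw [Finset.mem_Icc] at this
      rcases le_or_gt x K with h' | h'
      · exact Or.inl ⟨h, by omega⟩
      · exact Or.inr ⟨h, by omega⟩
  · -- right inverse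
    intro P hP
    obtain ⟨U, V⟩ := P
    rw [Finset.mem_product] at hP
    obtain ⟨hPU, hPV⟩ := hP
    simp only [Finset.mem_filter, Finset.mem_powerset] at hPU hPV
    have hUsub : U ⊆ Finset.Icc 1 K := hPU.1
    have hVsub : V ⊆ Finset.Icc (K+1) m := hPV.1
    have hUV1 : (U ∪ V) ∩ Finset.Icc 1 K = U := by
      ext x
      simp only [Finset.mem_inter, Finset.mem_union, Finset.mem_Icc]
      constructor
      · rintro ⟨h1 | h1, h2⟩
        · exact h1
        · have := hVsub h1; rw [Finset.mem_Icc] at this; omega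
      · intro h
        have := hUsub h; rw [Finset.mem_Icc] at this
        exact ⟨Or.inl h, this⟩
    have hUV2 : (U ∪ V) ∩ Finset.Icc (K+1) m = V := by
      ext x
      simp only [Finset.mem_inter, Finset.mem_union, Finset.mem_Icc]
      constructor
      · rintro ⟨h1 | h1, h2⟩
        · have := hUsub h1; rw [Finset.mem_Icc] at this; omega
        · exact h1
      · intro h
        have := hVsub h; rw [Finset.mem_Icc] at this
        exact ⟨Or.inr h, this⟩
    simp only [Prod.mk.injEq]
    exact ⟨hUV1, hUV2⟩

end LPM6

namespace LPM7
open LPM LPM2 LPM3 LPM4 LPM5 LPM6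

lemma sum_rearrange (s : Finset ℤ) (F G R1 R0 : ℤ → ℕ)
    (hC : Cpair F G) (hD : ∀ z z', z ≤ z' → R1 z' * R0 z ≤ R1 z * R0 z') :
    (∑ z ∈ s, F z * R1 z) * (∑ z ∈ s, G z * R0 z) ≤
    (∑ z ∈ s, F z * R0 z) * (∑ z ∈ s, G z * R1 z) := by
  have key : ∀ z z', (F z * R1 z) * (G z' * R0 z') + (F z' * R1 z') * (G z * R0 z)
      ≤ (F z * R0 z) * (G z' * R1 z') + (F z' * R0 z') * (G z * R1 z) := by
    intro z z'
    rcases le_total z z' with h | h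
    · have hA : F z * G z' ≤ F z' * G z := hC z z' h
      have hY : R1 z' * R0 z ≤ R1 z * R0 z' := hD z z' h
      calc (F z * R1 z) * (G z' * R0 z') + (F z' * R1 z') * (G z * R0 z)
          = (F z * G z') * (R1 z * R0 z') + (F z' * G z) * (R1 z' * R0 z) := by ring
        _ ≤ (F z * G z') * (R1 z' * R0 z) + (F z' * G z) * (R1 z * R0 z') :=
            mul_add_mul_le_mul_add_mul hA hY
        _ = (F z * R0 z) * (G z' * R1 z') + (F z' * R0 z') * (G z * R1 z) := by ring
    · have hA : F z' * G z ≤ F z * G z' := hC z' z h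
      have hY : R1 z * R0 z' ≤ R1 z' * R0 z := hD z' z h
      calc (F z * R1 z) * (G z' * R0 z') + (F z' * R1 z') * (G z * R0 z)
          = (F z' * G z) * (R1 z' * R0 z) + (F z * G z') * (R1 z * R0 z') := by ring
        _ ≤ (F z' * G z) * (R1 z * R0 z') + (F z * G z') * (R1 z' * R0 z) :=
            mul_add_mul_le_mul_add_mul hA hY
        _ = (F z * R0 z) * (G z' * R1 z') + (F z' * R0 z') * (G z * R1 z) := by ring
  have e1 : (∑ z ∈ s, F z * R1 z) * (∑ z ∈ s, G z * R0 z)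
      = ∑ z ∈ s, ∑ z' ∈ s, (F z * R1 z) * (G z' * R0 z') := Finset.sum_mul_sum _ _ _ _
  have e2 : (∑ z ∈ s, F z * R0 z) * (∑ z ∈ s, G z * R1 z)
      = ∑ z ∈ s, ∑ z' ∈ s, (F z * R0 z) * (G z' * R1 z') := Finset.sum_mul_sum _ _ _ _
  have hcomm1 : ∑ z ∈ s, ∑ z' ∈ s, (F z' * R1 z') * (G z * R0 z)
      = ∑ z ∈ s, ∑ z' ∈ s, (F z * R1 z) * (G z' * R0 z') := Finset.sum_comm
  have hcomm2 : ∑ z ∈ s, ∑ z' ∈ s, (F z' * R0 z') * (G z * R1 z)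
      = ∑ z ∈ s, ∑ z' ∈ s, (F z * R0 z) * (G z' * R1 z') := Finset.sum_comm
  have hbig : (∑ z ∈ s, ∑ z' ∈ s, (F z * R1 z) * (G z' * R0 z'))
      + (∑ z ∈ s, ∑ z' ∈ s, (F z' * R1 z') * (G z * R0 z))
      ≤ (∑ z ∈ s, ∑ z' ∈ s, (F z * R0 z) * (G z' * R1 z'))
      + (∑ z ∈ s, ∑ z' ∈ s, (F z' * R0 z') * (G z * R1 z)) := by
    rw [← Finset.sum_add_distrib, ← Finset.sum_add_distrib]
    apply Finset.sum_le_sum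
    intro z _
    rw [← Finset.sum_add_distrib, ← Finset.sum_add_distrib]
    apply Finset.sum_le_sum
    intro z' _
    exact key z z'
  rw [hcomm1, hcomm2] at hbig
  rw [e1, e2]
  omega

lemma card_filter_filter (s : Finset (Finset ℕ)) (p q w : Finset ℕ → Prop)
    [DecidablePred p] [DecidablePred q] [DecidablePred w]
    (h : ∀ S, (p S ∧ q S) ↔ w S) :
    ((s.filter p).filter q).card = (s.filter w).card := by
  classical
  refine Finset.card_bij' (fun S _ => S) (fun S _ => S) ?_ ?_ (fun _ _ => rfl) (fun _ _ => rfl)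
  · intro S hS
    simp only [Finset.mem_filter] at hS ⊢
    exact ⟨hS.1.1, (h S).mp ⟨hS.1.2, hS.2⟩⟩
  · intro S hS
    simp only [Finset.mem_filter] at hS ⊢
    have h2 := (h S).mpr hS.2
    exact ⟨⟨hS.1, h2.1⟩, h2.2⟩

end LPM7

namespace LPM8
open LPM LPM2 LPM3 LPM4 LPM5 LPM6 LPM7

lemma core (m r : ℕ) (A B : Finset ℕ) (I J : Finset ℕ) (hI : I ⊆ Finset.Icc 1 m)
    (e f : ℕ) (he1 : 1 ≤ e) (hem : e ≤ m) (heI : e ∉ I) (heJ : e ∉ J)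
    (hf1 : 1 ≤ f) (hfm : f ≤ m) (hfI : f ∉ I) (hfJ : f ∉ J) (hef : e < f) :
    (((latticeFamily m r A B).filter (fun S => I ⊆ S ∧ Disjoint S J)).filter
        (fun S => e ∈ S ∧ f ∈ S)).card *
      (((latticeFamily m r A B).filter (fun S => I ⊆ S ∧ Disjoint S J)).filter
        (fun S => e ∉ S ∧ f ∉ S)).card ≤
    (((latticeFamily m r A B).filter (fun S => I ⊆ S ∧ Disjoint S J)).filter
        (fun S => e ∈ S ∧ f ∉ S)).card *
      (((latticeFamily m r A B).filter (fun S => I ⊆ S ∧ Disjoint S J)).filter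
        (fun S => f ∈ S ∧ e ∉ S)).card := by
  classical
  obtain ⟨K, rfl⟩ : ∃ K, f = K + 1 := ⟨f - 1, by omega⟩
  have heK : e ≤ K := by omega
  have hKm : K ≤ m := by omega
  have hfIcc : (K+1) ∉ Finset.Icc 1 K := by simp [Finset.mem_Icc]
  have heIcc : e ∉ Finset.Icc (K+1) m := by
    rw [Finset.mem_Icc]; omega
  -- prefix set identities
  have hIeq1 : (insert e (insert (K+1) I)) ∩ Finset.Icc 1 K = (insert e I) ∩ Finset.Icc 1 K := by
    ext x
    simp only [Finset.mem_inter, Finset.mem_insert, Finset.mem_Icc]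
    constructor
    · rintro ⟨hx1, h2⟩
      rcases hx1 with h | h | h
      · exact ⟨Or.inl h, h2⟩
      · omega
      · exact ⟨Or.inr h, h2⟩
    · rintro ⟨hx1, h2⟩
      rcases hx1 with h | h
      · exact ⟨Or.inl h, h2⟩
      · exact ⟨Or.inr (Or.inr h), h2⟩
  have hIeq2 : (insert e (insert (K+1) I)) ∩ Finset.Icc (K+1) m
      = (insert (K+1) I) ∩ Finset.Icc (K+1) m := by
    ext x
    simp only [Finset.mem_inter, Finset.mem_insert, Finset.mem_Icc]
    constructor
    · rintro ⟨hx1, h2⟩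
      rcases hx1 with h | h
      · omega
      · exact ⟨h, h2⟩
    · rintro ⟨hx1, h2⟩
      exact ⟨Or.inr hx1, h2⟩
  have hJeq1 : (insert e (insert (K+1) J)) ∩ Finset.Icc 1 K = (insert e J) ∩ Finset.Icc 1 K := by
    ext x
    simp only [Finset.mem_inter, Finset.mem_insert, Finset.mem_Icc]
    constructor
    · rintro ⟨hx1, h2⟩
      rcases hx1 with h | h | h
      · exact ⟨Or.inl h, h2⟩
      · omega
      · exact ⟨Or.inr h, h2⟩
    · rintro ⟨hx1, h2⟩
      rcases hx1 with h | h
      · exact ⟨Or.inl h, h2⟩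
      · exact ⟨Or.inr (Or.inr h), h2⟩
  have hJeq2 : (insert e (insert (K+1) J)) ∩ Finset.Icc (K+1) m
      = (insert (K+1) J) ∩ Finset.Icc (K+1) m := by
    ext x
    simp only [Finset.mem_inter, Finset.mem_insert, Finset.mem_Icc]
    constructor
    · rintro ⟨hx1, h2⟩
      rcases hx1 with h | h
      · omega
      · exact ⟨h, h2⟩
    · rintro ⟨hx1, h2⟩
      exact ⟨Or.inr hx1, h2⟩
  have hIeq3 : (insert e I) ∩ Finset.Icc (K+1) m = I ∩ Finset.Icc (K+1) m := by
    ext x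
    simp only [Finset.mem_inter, Finset.mem_insert, Finset.mem_Icc]
    constructor
    · rintro ⟨hx1, h2⟩
      rcases hx1 with h | h
      · omega
      · exact ⟨h, h2⟩
    · rintro ⟨hx1, h2⟩
      exact ⟨Or.inr hx1, h2⟩
  have hJeq3 : (insert e J) ∩ Finset.Icc (K+1) m = J ∩ Finset.Icc (K+1) m := by
    ext x
    simp only [Finset.mem_inter, Finset.mem_insert, Finset.mem_Icc]
    constructor
    · rintro ⟨hx1, h2⟩
      rcases hx1 with h | h
      · omega
      · exact ⟨h, h2⟩
    · rintro ⟨hx1, h2⟩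
      exact ⟨Or.inr hx1, h2⟩
  have hIeq4 : (insert (K+1) I) ∩ Finset.Icc 1 K = I ∩ Finset.Icc 1 K := by
    ext x
    simp only [Finset.mem_inter, Finset.mem_insert, Finset.mem_Icc]
    constructor
    · rintro ⟨hx1, h2⟩
      rcases hx1 with h | h
      · omega
      · exact ⟨h, h2⟩
    · rintro ⟨hx1, h2⟩
      exact ⟨Or.inr hx1, h2⟩
  have hJeq4 : (insert (K+1) J) ∩ Finset.Icc 1 K = J ∩ Finset.Icc 1 K := by
    ext x
    simp only [Finset.mem_inter, Finset.mem_insert, Finset.mem_Icc]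
    constructor
    · rintro ⟨hx1, h2⟩
      rcases hx1 with h | h
      · omega
      · exact ⟨h, h2⟩
    · rintro ⟨hx1, h2⟩
      exact ⟨Or.inr hx1, h2⟩
  -- subset hypotheses
  have hsub1 : insert e (insert (K+1) I) ⊆ Finset.Icc 1 m := by
    rw [Finset.insert_subset_iff, Finset.insert_subset_iff]
    exact ⟨by rw [Finset.mem_Icc]; omega, by rw [Finset.mem_Icc]; omega, hI⟩
  have hsube : insert e I ⊆ Finset.Icc 1 m := by
    rw [Finset.insert_subset_iff]
    exact ⟨by rw [Finset.mem_Icc]; omega, hI⟩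
  have hsubf : insert (K+1) I ⊆ Finset.Icc 1 m := by
    rw [Finset.insert_subset_iff]
    exact ⟨by rw [Finset.mem_Icc]; omega, hI⟩
  -- the four counts
  have c1 : (((latticeFamily m r A B).filter (fun S => I ⊆ S ∧ Disjoint S J)).filter
        (fun S => e ∈ S ∧ K+1 ∈ S)).card
      = ∑ z ∈ Finset.Icc (0:ℤ) (r:ℤ),
        cnt (fun k => (A ∩ Finset.Icc 1 k).card) (fun k => (B ∩ Finset.Icc 1 k).card)
          (insert e I) J K z *
        sfx m r (fun k => (A ∩ Finset.Icc 1 k).card) (fun k => (B ∩ Finset.Icc 1 k).card)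
          (insert (K+1) I) J (K+1) z := by
    have hiff : ∀ S : Finset ℕ, ((I ⊆ S ∧ Disjoint S J) ∧ (e ∈ S ∧ K+1 ∈ S)) ↔
        (insert e (insert (K+1) I) ⊆ S ∧ Disjoint S J) := by
      intro S
      rw [Finset.insert_subset_iff, Finset.insert_subset_iff]
      constructor
      · rintro ⟨⟨h1, h2⟩, h3, h4⟩; exact ⟨⟨h3, h4, h1⟩, h2⟩
      · rintro ⟨⟨h3, h4, h1⟩, h2⟩; exact ⟨⟨h1, h2⟩, h3, h4⟩
    rw [card_filter_filter (latticeFamily m r A B) (fun S => I ⊆ S ∧ Disjoint S J)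
      (fun S => e ∈ S ∧ K+1 ∈ S)
      (fun S => insert e (insert (K+1) I) ⊆ S ∧ Disjoint S J) hiff]
    rw [fam_split m r K hKm A B _ J hsub1]
    apply Finset.sum_congr rfl
    intro z hz
    rw [cnt_congr _ _ (insert e (insert (K+1) I)) (insert e I) J J K hIeq1 rfl z,
        sfx_congr m r _ _ (insert e (insert (K+1) I)) (insert (K+1) I) J J (K+1) hIeq2 rfl z]
  have c0 : (((latticeFamily m r A B).filter (fun S => I ⊆ S ∧ Disjoint S J)).filter
        (fun S => e ∉ S ∧ K+1 ∉ S)).card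
      = ∑ z ∈ Finset.Icc (0:ℤ) (r:ℤ),
        cnt (fun k => (A ∩ Finset.Icc 1 k).card) (fun k => (B ∩ Finset.Icc 1 k).card)
          I (insert e J) K z *
        sfx m r (fun k => (A ∩ Finset.Icc 1 k).card) (fun k => (B ∩ Finset.Icc 1 k).card)
          I (insert (K+1) J) (K+1) z := by
    have hiff : ∀ S : Finset ℕ, ((I ⊆ S ∧ Disjoint S J) ∧ (e ∉ S ∧ K+1 ∉ S)) ↔
        (I ⊆ S ∧ Disjoint S (insert e (insert (K+1) J))) := by
      intro S
      rw [Finset.disjoint_insert_right, Finset.disjoint_insert_right]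
      constructor
      · rintro ⟨⟨h1, h2⟩, h3, h4⟩; exact ⟨h1, h3, h4, h2⟩
      · rintro ⟨h1, h3, h4, h2⟩; exact ⟨⟨h1, h2⟩, h3, h4⟩
    rw [card_filter_filter (latticeFamily m r A B) (fun S => I ⊆ S ∧ Disjoint S J)
      (fun S => e ∉ S ∧ K+1 ∉ S)
      (fun S => I ⊆ S ∧ Disjoint S (insert e (insert (K+1) J))) hiff]
    rw [fam_split m r K hKm A B I _ hI]
    apply Finset.sum_congr rfl
    intro z hz
    rw [cnt_congr _ _ I I (insert e (insert (K+1) J)) (insert e J) K rfl hJeq1 z,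
        sfx_congr m r _ _ I I (insert e (insert (K+1) J)) (insert (K+1) J) (K+1) rfl hJeq2 z]
  have ce : (((latticeFamily m r A B).filter (fun S => I ⊆ S ∧ Disjoint S J)).filter
        (fun S => e ∈ S ∧ K+1 ∉ S)).card
      = ∑ z ∈ Finset.Icc (0:ℤ) (r:ℤ),
        cnt (fun k => (A ∩ Finset.Icc 1 k).card) (fun k => (B ∩ Finset.Icc 1 k).card)
          (insert e I) J K z *
        sfx m r (fun k => (A ∩ Finset.Icc 1 k).card) (fun k => (B ∩ Finset.Icc 1 k).card)
          I (insert (K+1) J) (K+1) z := by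
    have hiff : ∀ S : Finset ℕ, ((I ⊆ S ∧ Disjoint S J) ∧ (e ∈ S ∧ K+1 ∉ S)) ↔
        (insert e I ⊆ S ∧ Disjoint S (insert (K+1) J)) := by
      intro S
      rw [Finset.insert_subset_iff, Finset.disjoint_insert_right]
      constructor
      · rintro ⟨⟨h1, h2⟩, h3, h4⟩; exact ⟨⟨h3, h1⟩, h4, h2⟩
      · rintro ⟨⟨h3, h1⟩, h4, h2⟩; exact ⟨⟨h1, h2⟩, h3, h4⟩
    rw [card_filter_filter (latticeFamily m r A B) (fun S => I ⊆ S ∧ Disjoint S J)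
      (fun S => e ∈ S ∧ K+1 ∉ S)
      (fun S => insert e I ⊆ S ∧ Disjoint S (insert (K+1) J)) hiff]
    rw [fam_split m r K hKm A B _ _ hsube]
    apply Finset.sum_congr rfl
    intro z hz
    rw [cnt_congr _ _ (insert e I) (insert e I) (insert (K+1) J) J K rfl hJeq4 z,
        sfx_congr m r _ _ (insert e I) I (insert (K+1) J) (insert (K+1) J) (K+1) hIeq3 rfl z]
  have cf : (((latticeFamily m r A B).filter (fun S => I ⊆ S ∧ Disjoint S J)).filter
        (fun S => K+1 ∈ S ∧ e ∉ S)).card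
      = ∑ z ∈ Finset.Icc (0:ℤ) (r:ℤ),
        cnt (fun k => (A ∩ Finset.Icc 1 k).card) (fun k => (B ∩ Finset.Icc 1 k).card)
          I (insert e J) K z *
        sfx m r (fun k => (A ∩ Finset.Icc 1 k).card) (fun k => (B ∩ Finset.Icc 1 k).card)
          (insert (K+1) I) J (K+1) z := by
    have hiff : ∀ S : Finset ℕ, ((I ⊆ S ∧ Disjoint S J) ∧ (K+1 ∈ S ∧ e ∉ S)) ↔
        (insert (K+1) I ⊆ S ∧ Disjoint S (insert e J)) := by
      intro S
      rw [Finset.insert_subset_iff, Finset.disjoint_insert_right]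
      constructor
      · rintro ⟨⟨h1, h2⟩, h3, h4⟩; exact ⟨⟨h3, h1⟩, h4, h2⟩
      · rintro ⟨⟨h3, h1⟩, h4, h2⟩; exact ⟨⟨h1, h2⟩, h3, h4⟩
    rw [card_filter_filter (latticeFamily m r A B) (fun S => I ⊆ S ∧ Disjoint S J)
      (fun S => K+1 ∈ S ∧ e ∉ S)
      (fun S => insert (K+1) I ⊆ S ∧ Disjoint S (insert e J)) hiff]
    rw [fam_split m r K hKm A B _ _ hsubf]
    apply Finset.sum_congr rfl
    intro z hz
    rw [cnt_congr _ _ (insert (K+1) I) I (insert e J) (insert e J) K hIeq4 rfl z,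
        sfx_congr m r _ _ (insert (K+1) I) (insert (K+1) I) (insert e J) J (K+1) rfl hJeq3 z]
  rw [c1, c0, ce, cf]
  -- apply the rearrangement inequality
  apply sum_rearrange
  · exact cpair_cnt _ _ I J e he1 heI heJ K heK
  · -- the D condition for suffixes
    intro z z' hzz'
    have hR1 : ∀ w, sfx m r (fun k => (A ∩ Finset.Icc 1 k).card) (fun k => (B ∩ Finset.Icc 1 k).card)
        (insert (K+1) I) J (K+1) w
        = chi (fun k => (A ∩ Finset.Icc 1 k).card) (fun k => (B ∩ Finset.Icc 1 k).card) (K+1) (w+1) *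
          sfx m r (fun k => (A ∩ Finset.Icc 1 k).card) (fun k => (B ∩ Finset.Icc 1 k).card)
            I J (K+1+1) (w+1) := by
      intro w
      rw [sfx_step m r _ _ (insert (K+1) I) J (K+1) hfm w]
      rw [if_pos (Finset.mem_insert_self _ _), if_neg hfJ]
      have hIeq5 : (insert (K+1) I) ∩ Finset.Icc (K+1+1) m = I ∩ Finset.Icc (K+1+1) m := by
        ext x
        simp only [Finset.mem_inter, Finset.mem_insert, Finset.mem_Icc]
        constructor
        · rintro ⟨hx1, h2⟩
          rcases hx1 with h | h
          · omega
          · exact ⟨h, h2⟩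
        · rintro ⟨hx1, h2⟩
          exact ⟨Or.inr hx1, h2⟩
      rw [sfx_congr m r _ _ (insert (K+1) I) I J J (K+1+1) hIeq5 rfl (w+1)]
      ring
    have hR0 : ∀ w, sfx m r (fun k => (A ∩ Finset.Icc 1 k).card) (fun k => (B ∩ Finset.Icc 1 k).card)
        I (insert (K+1) J) (K+1) w
        = chi (fun k => (A ∩ Finset.Icc 1 k).card) (fun k => (B ∩ Finset.Icc 1 k).card) (K+1) w *
          sfx m r (fun k => (A ∩ Finset.Icc 1 k).card) (fun k => (B ∩ Finset.Icc 1 k).card)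
            I J (K+1+1) w := by
      intro w
      rw [sfx_step m r _ _ I (insert (K+1) J) (K+1) hfm w]
      rw [if_neg hfI, if_pos (Finset.mem_insert_self _ _)]
      have hJeq5 : (insert (K+1) J) ∩ Finset.Icc (K+1+1) m = J ∩ Finset.Icc (K+1+1) m := by
        ext x
        simp only [Finset.mem_inter, Finset.mem_insert, Finset.mem_Icc]
        constructor
        · rintro ⟨hx1, h2⟩
          rcases hx1 with h | h
          · omega
          · exact ⟨h, h2⟩
        · rintro ⟨hx1, h2⟩
          exact ⟨Or.inr hx1, h2⟩
      rw [sfx_congr m r _ _ I I (insert (K+1) J) J (K+1+1) rfl hJeq5 w]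
      ring
    rw [hR1 z, hR1 z', hR0 z, hR0 z']
    have hp : PF2 (sfx m r (fun k => (A ∩ Finset.Icc 1 k).card)
        (fun k => (B ∩ Finset.Icc 1 k).card) I J (K+1+1)) :=
      pf2_sfx m r _ _ I J (m - K - 1) (K+1+1) (by omega)
    by_cases h0 : chi (fun k => (A ∩ Finset.Icc 1 k).card) (fun k => (B ∩ Finset.Icc 1 k).card) (K+1) z = 1
    · by_cases h1 : chi (fun k => (A ∩ Finset.Icc 1 k).card) (fun k => (B ∩ Finset.Icc 1 k).card) (K+1) (z'+1) = 1
      · have h2 : chi (fun k => (A ∩ Finset.Icc 1 k).card) (fun k => (B ∩ Finset.Icc 1 k).card) (K+1) (z+1) = 1 :=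
          chi_interval (by omega : z ≤ z+1) (by omega : z+1 ≤ z'+1) h0 h1
        have h3 : chi (fun k => (A ∩ Finset.Icc 1 k).card) (fun k => (B ∩ Finset.Icc 1 k).card) (K+1) z' = 1 :=
          chi_interval hzz' (by omega : z' ≤ z'+1) h0 h1
        rw [h0, h1, h2, h3]
        simp only [one_mul]
        have hpf := hp (z+1) (z'+1) (by omega)
        have eA : z+1-1 = z := by ring
        have eB : z'+1-1 = z' := by ring
        rw [eA, eB] at hpf
        calc sfx m r _ _ I J (K+1+1) (z'+1) * sfx m r _ _ I J (K+1+1) z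
            = sfx m r _ _ I J (K+1+1) z * sfx m r _ _ I J (K+1+1) (z'+1) := mul_comm _ _
          _ ≤ _ := hpf
      · have hz0 : chi (fun k => (A ∩ Finset.Icc 1 k).card) (fun k => (B ∩ Finset.Icc 1 k).card) (K+1) (z'+1) = 0 := by
          have := chi_le_one (fun k => (A ∩ Finset.Icc 1 k).card) (fun k => (B ∩ Finset.Icc 1 k).card) (K+1) (z'+1)
          omega
        rw [hz0]
        simp
    · have hz0 : chi (fun k => (A ∩ Finset.Icc 1 k).card) (fun k => (B ∩ Finset.Icc 1 k).card) (K+1) z = 0 := by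
        have := chi_le_one (fun k => (A ∩ Finset.Icc 1 k).card) (fun k => (B ∩ Finset.Icc 1 k).card) (K+1) z
        omega
      rw [hz0]
      simp

end LPM8

namespace LPM9
open LPM LPM7 LPM8

lemma card_filter_congr (s : Finset (Finset ℕ)) (p q : Finset ℕ → Prop)
    [DecidablePred p] [DecidablePred q] (h : ∀ S, p S ↔ q S) :
    (s.filter p).card = (s.filter q).card := by
  refine Finset.card_bij' (fun S _ => S) (fun S _ => S) ?_ ?_ (fun _ _ => rfl) (fun _ _ => rfl)
  · intro S hS
    simp only [Finset.mem_filter] at hS ⊢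
    exact ⟨hS.1, (h S).mp hS.2⟩
  · intro S hS
    simp only [Finset.mem_filter] at hS ⊢
    exact ⟨hS.1, (h S).mpr hS.2⟩

end LPM9


/-- Lattice path matroids are balanced: every minor (contract `I`, delete `J`)
is negatively correlated, in both equivalent forms. -/
theorem latticeFamily_balanced
    (m r : ℕ) (hm : 1 ≤ m) (hr : r ≤ m)
    (A B : Finset ℕ) (hA : A ⊆ Finset.Icc 1 m) (hB : B ⊆ Finset.Icc 1 m)
    (hAcard : A.card = r) (hBcard : B.card = r)
    (hAB : ∀ k ∈ Finset.Icc 1 m,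
      (A ∩ Finset.Icc 1 k).card ≤ (B ∩ Finset.Icc 1 k).card)
    (I J : Finset ℕ) (hI : I ⊆ Finset.Icc 1 m) (hJ : J ⊆ Finset.Icc 1 m)
    (hIJ : Disjoint I J)
    (e f : ℕ) (he : e ∈ Finset.Icc 1 m \ (I ∪ J)) (hf : f ∈ Finset.Icc 1 m \ (I ∪ J))
    (hef : e ≠ f) :
    (((latticeFamily m r A B).filter (fun S => I ⊆ S ∧ Disjoint S J)).filter
        (fun S => e ∈ S ∧ f ∈ S)).card *
      (((latticeFamily m r A B).filter (fun S => I ⊆ S ∧ Disjoint S J)).filter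
        (fun S => e ∉ S ∧ f ∉ S)).card ≤
    (((latticeFamily m r A B).filter (fun S => I ⊆ S ∧ Disjoint S J)).filter
        (fun S => e ∈ S ∧ f ∉ S)).card *
      (((latticeFamily m r A B).filter (fun S => I ⊆ S ∧ Disjoint S J)).filter
        (fun S => f ∈ S ∧ e ∉ S)).card ∧
    (((latticeFamily m r A B).filter (fun S => I ⊆ S ∧ Disjoint S J)).filter
        (fun S => e ∈ S)).card *
      (((latticeFamily m r A B).filter (fun S => I ⊆ S ∧ Disjoint S J)).filter
        (fun S => f ∈ S)).card ≥
    ((latticeFamily m r A B).filter (fun S => I ⊆ S ∧ Disjoint S J)).card *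
      (((latticeFamily m r A B).filter (fun S => I ⊆ S ∧ Disjoint S J)).filter
        (fun S => e ∈ S ∧ f ∈ S)).card := by
  classical
  rw [Finset.mem_sdiff, Finset.mem_Icc, Finset.mem_union] at he hf
  obtain ⟨⟨he1, hem⟩, heIJ⟩ := he
  obtain ⟨⟨hf1, hfm⟩, hfIJ⟩ := hf
  have heI : e ∉ I := fun h => heIJ (Or.inl h)
  have heJ : e ∉ J := fun h => heIJ (Or.inr h)
  have hfI : f ∉ I := fun h => hfIJ (Or.inl h)
  have hfJ : f ∉ J := fun h => hfIJ (Or.inr h)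
  set Fam := (latticeFamily m r A B).filter (fun S => I ⊆ S ∧ Disjoint S J) with hFamDef
  have hfirst : (Fam.filter (fun S => e ∈ S ∧ f ∈ S)).card *
      (Fam.filter (fun S => e ∉ S ∧ f ∉ S)).card ≤
      (Fam.filter (fun S => e ∈ S ∧ f ∉ S)).card *
      (Fam.filter (fun S => f ∈ S ∧ e ∉ S)).card := by
    rcases lt_or_gt_of_ne hef with hlt | hgt
    · exact LPM8.core m r A B I J hI e f he1 hem heI heJ hf1 hfm hfI hfJ hlt
    · have hcore := LPM8.core m r A B I J hI f e hf1 hfm hfI hfJ he1 hem heI heJ hgt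
      rw [LPM9.card_filter_congr Fam (fun S => e ∈ S ∧ f ∈ S) (fun S => f ∈ S ∧ e ∈ S)
          (fun S => and_comm),
        LPM9.card_filter_congr Fam (fun S => e ∉ S ∧ f ∉ S) (fun S => f ∉ S ∧ e ∉ S)
          (fun S => and_comm)]
      exact le_trans hcore (le_of_eq (mul_comm _ _))
  refine ⟨hfirst, ?_⟩
  have hNe : (Fam.filter (fun S => e ∈ S)).card
      = (Fam.filter (fun S => e ∈ S ∧ f ∈ S)).card
        + (Fam.filter (fun S => e ∈ S ∧ f ∉ S)).card := by
    have h1 := Finset.card_filter_add_card_filter_not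
      (s := Fam.filter (fun S => e ∈ S)) (p := fun S => f ∈ S)
    rw [LPM7.card_filter_filter Fam (fun S => e ∈ S) (fun S => f ∈ S)
        (fun S => e ∈ S ∧ f ∈ S) (fun S => Iff.rfl)] at h1
    rw [LPM7.card_filter_filter Fam (fun S => e ∈ S) (fun S => f ∉ S)
        (fun S => e ∈ S ∧ f ∉ S) (fun S => Iff.rfl)] at h1
    omega
  have hNf : (Fam.filter (fun S => f ∈ S)).card
      = (Fam.filter (fun S => e ∈ S ∧ f ∈ S)).card
        + (Fam.filter (fun S => f ∈ S ∧ e ∉ S)).card := by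
    have h1 := Finset.card_filter_add_card_filter_not
      (s := Fam.filter (fun S => f ∈ S)) (p := fun S => e ∈ S)
    rw [LPM7.card_filter_filter Fam (fun S => f ∈ S) (fun S => e ∈ S)
        (fun S => f ∈ S ∧ e ∈ S) (fun S => Iff.rfl)] at h1
    rw [LPM7.card_filter_filter Fam (fun S => f ∈ S) (fun S => e ∉ S)
        (fun S => f ∈ S ∧ e ∉ S) (fun S => Iff.rfl)] at h1
    rw [LPM9.card_filter_congr Fam (fun S => f ∈ S ∧ e ∈ S) (fun S => e ∈ S ∧ f ∈ S)
        (fun S => and_comm)] at h1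
    omega
  have hsplit2 : (Fam.filter (fun S => e ∉ S)).card
      = (Fam.filter (fun S => f ∈ S ∧ e ∉ S)).card
        + (Fam.filter (fun S => e ∉ S ∧ f ∉ S)).card := by
    have h1 := Finset.card_filter_add_card_filter_not
      (s := Fam.filter (fun S => e ∉ S)) (p := fun S => f ∈ S)
    rw [LPM7.card_filter_filter Fam (fun S => e ∉ S) (fun S => f ∈ S)
        (fun S => f ∈ S ∧ e ∉ S) (fun S => and_comm)] at h1
    rw [LPM7.card_filter_filter Fam (fun S => e ∉ S) (fun S => f ∉ S)
        (fun S => e ∉ S ∧ f ∉ S) (fun S => Iff.rfl)] at h1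
    omega
  have hn : Fam.card = (Fam.filter (fun S => e ∈ S)).card
      + (Fam.filter (fun S => e ∉ S)).card :=
    (Finset.card_filter_add_card_filter_not (fun S => e ∈ S)).symm
  rw [ge_iff_le, hn, hsplit2, hNe, hNf]
  nlinarith [hfirst]
end
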